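/- arXiv:1707.09817 — 9 statements merged into one kernel-verified Lean document; each statement's English description precedes it below -/
import Mathlib

section
/- For every integer k ≥ 3, the vertex set of every connected graph of maximum degree at most k that is not isomorphic to K_{k+1} can be partitioned into sets A and B, where A is an independent set and B induces a (k-2)-degenerate graph. -/
open SimpleGraph Set

/-- A set of vertices is independent in `G`. -/
def Indep {V : Type*} (G : SimpleGraph V) (A : Set V) : Prop :=
  ∀ u ∈ A, ∀ v ∈ A, ¬ G.Adj u v

/-- The subgraph of `G` induced by `B` is `d`-degenerate: every finite nonempty
subset of `B` contains a vertex with at most `d` neighbours inside it. -/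
def DegenerateOn {V : Type*} (G : SimpleGraph V) (B : Set V) (d : ℕ) : Prop :=
  ∀ s : Set V, s ⊆ B → s.Finite → s.Nonempty →
    ∃ v ∈ s, (s ∩ G.neighborSet v).ncard ≤ d

/-- `G` is `d`-degenerate. -/
def Degenerate {V : Type*} (G : SimpleGraph V) (d : ℕ) : Prop :=
  DegenerateOn G Set.univ d

/-- `G` is near-bipartite: its vertex set is partitioned into an independent set `A`
and a set `B` inducing a forest. -/
def NearBipartite {V : Type*} (G : SimpleGraph V) : Prop :=
  ∃ A B : Set V, A ∪ B = Set.univ ∧ Disjoint A B ∧ Indep G A ∧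
    (G.induce B).IsAcyclic

/-- `G` has a `k`-degenerate decomposition: a partition into an independent set `A`
and a set `B` inducing a `(k-2)`-degenerate graph. -/
def KDegenDecomp {V : Type*} (G : SimpleGraph V) (k : ℕ) : Prop :=
  ∃ A B : Set V, A ∪ B = Set.univ ∧ Disjoint A B ∧ Indep G A ∧
    DegenerateOn G B (k - 2)


section Aux

variable {V : Type*}

def RW (G : SimpleGraph V) (W : Set V) : V → V → Prop := fun a b => G.Adj a b ∧ a ∈ W ∧ b ∈ W
def Reach (G : SimpleGraph V) (W : Set V) : V → V → Prop := Relation.ReflTransGen (RW G W)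

lemma rw_symm {G : SimpleGraph V} {W : Set V} : Symmetric (RW G W) :=
  fun _ _ ⟨h, ha, hb⟩ => ⟨h.symm, hb, ha⟩
lemma reach_symm {G : SimpleGraph V} {W : Set V} {u t : V} (h : Reach G W u t) :
    Reach G W t u := (@Relation.ReflTransGen.symmetric _ (RW G W) ⟨fun _ _ h' => rw_symm h'⟩).symm _ _ h
lemma reach_trans {G : SimpleGraph V} {W : Set V} {u s t : V} (h1 : Reach G W u s)
    (h2 : Reach G W s t) : Reach G W u t := Relation.ReflTransGen.trans h1 h2
lemma reach_mono {G : SimpleGraph V} {W W' : Set V} (hWW : W ⊆ W') {u t : V}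
    (h : Reach G W u t) : Reach G W' u t :=
  Relation.ReflTransGen.mono (p := RW G W')
    (by intro a b hr; exact ⟨hr.1, hWW hr.2.1, hWW hr.2.2⟩) u t h
lemma reach_refl {G : SimpleGraph V} {W : Set V} {u : V} : Reach G W u u :=
  Relation.ReflTransGen.refl
lemma reach_single {G : SimpleGraph V} {W : Set V} {u t : V} (h : G.Adj u t)
    (hu : u ∈ W) (ht : t ∈ W) : Reach G W u t :=
  Relation.ReflTransGen.single ⟨h, hu, ht⟩

lemma reach_avoid {G : SimpleGraph V} {W X : Set V} {bd : V}
    (hX : ∀ a ∈ X, ∀ b, G.Adj a b → b ∈ W → (b ∈ X ∨ b = bd)) {u t : V}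
    (h : Reach G W u t) (hu : u ∉ X) (ht : t ∉ X) : Reach G (W \ X) u t := by
  have main : ∀ a, Reach G W a t →
      ((a ∉ X → Reach G (W \ X) a t) ∧ (a ∈ X → Reach G (W \ X) bd t)) := by
    intro a ha
    induction ha using Relation.ReflTransGen.head_induction_on with
    | refl =>
      refine ⟨fun _ => Relation.ReflTransGen.refl, fun hmem => absurd hmem ht⟩
    | @head a c hstep hrest ih =>
      obtain ⟨hadj, haW, hcW⟩ := hstep
      by_cases hcX : c ∈ X
      · constructor
        · intro haX
          rcases hX c hcX a hadj.symm haW with h' | h'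
          · exact absurd h' haX
          · subst h'; exact ih.2 hcX
        · intro _; exact ih.2 hcX
      · constructor
        · intro haX
          exact Relation.ReflTransGen.head ⟨hadj, ⟨haW, haX⟩, ⟨hcW, hcX⟩⟩ (ih.1 hcX)
        · intro haX
          rcases hX a haX c hadj hcW with h' | h'
          · exact absurd h' hcX
          · subst h'; exact ih.1 hcX
  exact (main u h).1 hu

lemma reach_cross {G : SimpleGraph V} {W P : Set V} {z t : V}
    (h : Reach G W z t) (hz : z ∉ P) (ht : t ∈ P) :
    ∃ a b, G.Adj a b ∧ a ∈ W ∧ b ∈ W ∧ a ∉ P ∧ b ∈ P := by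
  induction h using Relation.ReflTransGen.head_induction_on with
  | refl => exact absurd ht hz
  | @head a c hstep hrest ih =>
    obtain ⟨hadj, haW, hcW⟩ := hstep
    by_cases hcP : c ∈ P
    · exact ⟨a, c, hadj, haW, hcW, hz, hcP⟩
    · exact ih hcP

lemma reach_closed {G : SimpleGraph V} {W D : Set V}
    (hcl : ∀ a ∈ D, ∀ b, G.Adj a b → b ∈ W → b ∈ D) {z t : V}
    (h : Reach G W z t) (hz : z ∈ D) : t ∈ D := by
  induction h with
  | refl => exact hz
  | tail hstep hlast ih => exact hcl _ ih _ hlast.1 hlast.2.2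

lemma reach_restrict {G : SimpleGraph V} {W D : Set V}
    (hcl : ∀ a ∈ D, ∀ b, G.Adj a b → b ∈ W → b ∈ D) {z t : V}
    (h : Reach G W z t) (hz : z ∈ D) : Reach G D z t := by
  induction h with
  | refl => exact Relation.ReflTransGen.refl
  | @tail b c hstep hlast ih =>
    have hbD : b ∈ D := reach_closed hcl hstep hz
    exact Relation.ReflTransGen.tail ih ⟨hlast.1, hbD, hcl _ hbD _ hlast.1 hlast.2.2⟩

/-! ### components and fragments -/

def ConnOn (G : SimpleGraph V) (U : Set V) : Prop := ∀ u ∈ U, ∀ t ∈ U, Reach G U u t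

def RSet (G : SimpleGraph V) (W : Set V) (z : V) : Set V := {t | t ∈ W ∧ Reach G W z t}

lemma rset_self {G : SimpleGraph V} {W : Set V} {z : V} (hz : z ∈ W) : z ∈ RSet G W z :=
  ⟨hz, reach_refl⟩
lemma rset_subset {G : SimpleGraph V} {W : Set V} {z : V} : RSet G W z ⊆ W := fun _ h => h.1
lemma rset_closed {G : SimpleGraph V} {W : Set V} {z t s : V} (ht : t ∈ RSet G W z)
    (hadj : G.Adj t s) (hs : s ∈ W) : s ∈ RSet G W z :=
  ⟨hs, Relation.ReflTransGen.tail ht.2 ⟨hadj, ht.1, hs⟩⟩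
lemma rset_eq {G : SimpleGraph V} {W : Set V} {z t : V} (hz : z ∈ W) (ht : t ∈ RSet G W z) :
    RSet G W z = RSet G W t := by
  ext s
  constructor
  · rintro ⟨hsW, hres⟩; exact ⟨hsW, reach_trans (reach_symm ht.2) hres⟩
  · rintro ⟨hsW, hres⟩; exact ⟨hsW, reach_trans ht.2 hres⟩

def IsFrag (G : SimpleGraph V) (U : Set V) (c : V) (D : Set V) : Prop :=
  c ∈ U ∧ (∃ z, z ∈ U ∧ z ≠ c ∧ D = RSet G (U \ {c}) z) ∧ (U \ ({c} ∪ D)).Nonempty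

def MinFrag (G : SimpleGraph V) (U : Set V) (c : V) (D : Set V) : Prop :=
  IsFrag G U c D ∧ ∀ c' D', IsFrag G U c' D' → ¬ D' ⊂ D

lemma frag_sub {G : SimpleGraph V} {U D : Set V} {c : V} (h : IsFrag G U c D) :
    D ⊆ U \ {c} := by
  obtain ⟨-, ⟨z, -, -, rfl⟩, -⟩ := h; exact rset_subset

lemma frag_nonempty {G : SimpleGraph V} {U D : Set V} {c : V} (h : IsFrag G U c D) :
    D.Nonempty := by
  obtain ⟨hc, ⟨z, hzU, hzc, rfl⟩, -⟩ := h
  exact ⟨z, rset_self ⟨hzU, hzc⟩⟩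

lemma frag_cut_not_mem {G : SimpleGraph V} {U D : Set V} {c : V} (h : IsFrag G U c D) :
    c ∉ D := fun hc => ((frag_sub h) hc).2 rfl

lemma frag_closed {G : SimpleGraph V} {U D : Set V} {c : V} (h : IsFrag G U c D)
    {d b : V} (hd : d ∈ D) (hadj : G.Adj d b) (hbU : b ∈ U) (hbc : b ≠ c) : b ∈ D := by
  obtain ⟨-, ⟨z, hzU, hzc, rfl⟩, -⟩ := h
  exact rset_closed hd hadj ⟨hbU, hbc⟩

lemma frag_conn {G : SimpleGraph V} {U D : Set V} {c : V} (h : IsFrag G U c D)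
    {d e : V} (hd : d ∈ D) (he : e ∈ D) : Reach G (U \ {c}) d e := by
  obtain ⟨-, ⟨z, hzU, hzc, rfl⟩, -⟩ := h
  exact reach_trans (reach_symm hd.2) he.2

lemma frag_not_conn {G : SimpleGraph V} {U D : Set V} {c : V} (h : IsFrag G U c D) :
    ¬ ConnOn G (U \ {c}) := by
  intro hcon
  obtain ⟨hcU, ⟨z, hzU, hzc, hD⟩, ⟨t, htU, htm⟩⟩ := h
  have htc : t ≠ c := fun h' => htm (Or.inl h')
  have htD : t ∉ D := fun h' => htm (Or.inr h')
  have := hcon z ⟨hzU, hzc⟩ t ⟨htU, htc⟩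
  exact htD (hD ▸ (⟨⟨htU, htc⟩, this⟩ : t ∈ RSet G (U \ {c}) z))

/-- every member of a minimal fragment is a non-cutvertex -/
lemma minfrag_noncut {G : SimpleGraph V} {U D : Set V} {c : V} (hU : ConnOn G U)
    (hmf : MinFrag G U c D) {d : V} (hd : d ∈ D) : ConnOn G (U \ {d}) := by
  obtain ⟨hf, hmin⟩ := hmf
  have hcU : c ∈ U := hf.1
  have hcD : c ∉ D := frag_cut_not_mem hf
  have hcd : c ≠ d := fun h => hcD (h ▸ hd)
  have hdU : d ∈ U := ((frag_sub hf) hd).1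
  have hto : ∀ u ∈ U \ {d}, Reach G (U \ {d}) u c := by
    intro u hu
    by_cases huD : u ∈ D
    · -- inside the fragment
      by_cases hcF : c ∈ RSet G (U \ {d}) u
      · exact hcF.2
      · exfalso
        have hFD : ∀ t, t ∈ RSet G (U \ {d}) u → t ∈ D := by
          intro t ht
          obtain ⟨htW, hres⟩ := ht
          clear htW
          induction hres with
          | refl => exact huD
          | @tail b t hstep hlast ih =>
            have hbD : b ∈ D := ih
            have htU : t ∈ U := hlast.2.2.1
            have htd : t ≠ d := hlast.2.2.2
            by_cases htc : t = c
            · exfalso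
              exact hcF ⟨⟨htc ▸ htU, htc ▸ htd⟩,
                htc ▸ (Relation.ReflTransGen.tail hstep hlast)⟩
            · exact frag_closed hf hbD hlast.1 htU htc
        have hfragF : IsFrag G U d (RSet G (U \ {d}) u) := by
          refine ⟨hdU, ⟨u, hu.1, hu.2, rfl⟩, ⟨c, hcU, ?_⟩⟩
          rintro (h | h)
          · exact hcd (by simpa using h)
          · exact hcF h
        refine hmin d _ hfragF (HasSubset.Subset.ssubset_of_ne (fun t ht => hFD t ht) ?_)
        intro heq
        have : d ∈ RSet G (U \ {d}) u := heq ▸ hd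
        exact this.1.2 rfl
    · -- outside the fragment: avoid it entirely
      have hXcl : ∀ a ∈ D, ∀ b, G.Adj a b → b ∈ U → (b ∈ D ∨ b = c) := by
        intro a ha b hab hbU
        by_cases hbc : b = c
        · exact Or.inr hbc
        · exact Or.inl (frag_closed hf ha hab hbU hbc)
      have h1 : Reach G U u c := hU u hu.1 c hcU
      have h2 : Reach G (U \ D) u c := reach_avoid hXcl h1 huD hcD
      refine reach_mono ?_ h2
      intro s hs
      refine ⟨hs.1, fun h' => hs.2 ?_⟩
      have : s = d := h'
      exact this ▸ hd
  intro u hu t ht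
  exact reach_trans (hto u hu) (reach_symm (hto t ht))

lemma nofrag_nocut {G : SimpleGraph V} {U : Set V}
    (h : ¬ ∃ c D, IsFrag G U c D) : ∀ a ∈ U, ConnOn G (U \ {a}) := by
  intro a ha u hu t ht
  by_cases htF : t ∈ RSet G (U \ {a}) u
  · exact htF.2
  · exfalso
    exact h ⟨a, RSet G (U \ {a}) u, ha, ⟨u, hu.1, hu.2, rfl⟩,
      ⟨t, ht.1, fun hm => hm.elim (fun h' => ht.2 (by simpa using h')) htF⟩⟩

lemma exists_minfrag_in {G : SimpleGraph V} {U K : Set V} [Fintype V]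
    (hK : ∃ c D, IsFrag G U c D ∧ D ⊆ K) :
    ∃ c D, IsFrag G U c D ∧ D ⊆ K ∧ ∀ c' D', IsFrag G U c' D' → ¬ D' ⊂ D := by
  classical
  obtain ⟨c, D, hf, hDK⟩ := hK
  have H : ∀ n (c : V) (D : Set V), D.ncard ≤ n → IsFrag G U c D → D ⊆ K →
      ∃ c D, IsFrag G U c D ∧ D ⊆ K ∧ ∀ c' D', IsFrag G U c' D' → ¬ D' ⊂ D := by
    intro n
    induction n with
    | zero =>
      intro c D hle hf _
      have := Set.ncard_pos (Set.toFinite D) |>.mpr (frag_nonempty hf)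
      omega
    | succ n ih =>
      intro c D hle hf hDK
      by_cases hex : ∃ c' D', IsFrag G U c' D' ∧ D' ⊂ D
      · obtain ⟨c', D', hf', hss⟩ := hex
        have hlt : D'.ncard < D.ncard := Set.ncard_lt_ncard hss (Set.toFinite D)
        exact ih c' D' (by omega) hf' (fun x hx => hDK (hss.1 hx))
      · exact ⟨c, D, hf, hDK, fun c' D' hf' hss => hex ⟨c', D', hf', hss⟩⟩
  exact H D.ncard c D le_rfl hf hDK

lemma exists_two_minfrags {G : SimpleGraph V} {U : Set V} [Fintype V]
    (h : ∃ c D, IsFrag G U c D) :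
    ∃ c0 D0 c1 D1, MinFrag G U c0 D0 ∧ MinFrag G U c1 D1 ∧ Disjoint D0 D1 := by
  obtain ⟨c0, D0, hf0, -, hmin0⟩ :=
    exists_minfrag_in (K := Set.univ) (by
      obtain ⟨c, D, hf⟩ := h; exact ⟨c, D, hf, Set.subset_univ D⟩)
  obtain ⟨hc0U, ⟨z0, hz0U, hz0c, hD0⟩, ⟨z1, hz1U, hz1m⟩⟩ := hf0
  have hz1c : z1 ≠ c0 := fun h' => hz1m (Or.inl h')
  have hz1D : z1 ∉ D0 := fun h' => hz1m (Or.inr h')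
  set K := RSet G (U \ {c0}) z1 with hKdef
  have hKD0 : ∀ t, t ∈ K → t ∉ D0 := by
    intro t htK htD0
    apply hz1D
    have h1 : RSet G (U \ {c0}) z0 = RSet G (U \ {c0}) t := rset_eq ⟨hz0U, hz0c⟩ (hD0 ▸ htD0)
    have h2 : RSet G (U \ {c0}) z1 = RSet G (U \ {c0}) t := rset_eq ⟨hz1U, hz1c⟩ htK
    rw [hD0, h1, ← h2]
    exact rset_self ⟨hz1U, hz1c⟩
  have hfK : IsFrag G U c0 K := by
    refine ⟨hc0U, ⟨z1, hz1U, hz1c, rfl⟩, ?_⟩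
    obtain ⟨w0, hw0⟩ := frag_nonempty (G := G) (U := U) (c := c0) ⟨hc0U, ⟨z0, hz0U, hz0c, hD0⟩, ⟨z1, hz1U, hz1m⟩⟩
    refine ⟨w0, (hD0 ▸ hw0 : w0 ∈ RSet G (U \ {c0}) z0).1.1, ?_⟩
    rintro (h' | h')
    · exact (hD0 ▸ hw0 : w0 ∈ RSet G (U \ {c0}) z0).1.2 (by simpa using h')
    · exact hKD0 w0 h' (hD0 ▸ hw0)
  obtain ⟨c1, D1, hf1, hD1K, hmin1⟩ := exists_minfrag_in ⟨c0, K, hfK, subset_rfl⟩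
  refine ⟨c0, D0, c1, D1, ⟨⟨hc0U, ⟨z0, hz0U, hz0c, hD0⟩, ⟨z1, hz1U, hz1m⟩⟩, hmin0⟩,
    ⟨hf1, hmin1⟩, ?_⟩
  rw [Set.disjoint_left]
  intro t htD0 htD1
  exact hKD0 t (hD1K htD1) htD0

/-- every fragment of `U \ {w}` contains a neighbour of `w`, provided `U` has no cutvertex -/
lemma frag_nbr {G : SimpleGraph V} {U D : Set V} {w c : V}
    (hnc : ∀ a ∈ U, ConnOn G (U \ {a})) (hw : w ∈ U)
    (hf : IsFrag G (U \ {w}) c D) : ∃ x ∈ D, G.Adj w x := by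
  by_contra hno
  push_neg at hno
  have hcU : c ∈ U := hf.1.1
  have hcw : c ≠ w := hf.1.2
  have hcl : ∀ a ∈ D, ∀ b, G.Adj a b → b ∈ U \ {c} → b ∈ D := by
    rintro a ha b hadj ⟨hbU, hbc⟩
    by_cases hbw : b = w
    · exact absurd (hbw ▸ hadj.symm) (hno a ha)
    · exact frag_closed hf ha hadj ⟨hbU, hbw⟩ hbc
  obtain ⟨z, hz⟩ := frag_nonempty hf
  obtain ⟨t, htU, htm⟩ := hf.2.2
  have hzW : z ∈ U \ {c} := ⟨((frag_sub hf) hz).1.1, ((frag_sub hf) hz).2⟩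
  have htc : t ≠ c := fun h' => htm (Or.inl h')
  have htD : t ∉ D := fun h' => htm (Or.inr h')
  have := hnc c hcU z hzW t ⟨htU.1, htc⟩
  exact htD (reach_closed hcl this hz)

/-- removing one vertex from each of two disjoint minimal fragments keeps things connected -/
lemma m3 {G : SimpleGraph V} {U' D0 D1 : Set V} {c0 c1 x y : V}
    (hU' : ConnOn G U') (h0 : MinFrag G U' c0 D0) (h1 : MinFrag G U' c1 D1)
    (hdisj : Disjoint D0 D1) (hx : x ∈ D0) (hy : y ∈ D1) :
    ConnOn G (U' \ {x, y}) := by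
  have hc0U : c0 ∈ U' := h0.1.1
  have hc1U : c1 ∈ U' := h1.1.1
  have hc0D0 : c0 ∉ D0 := frag_cut_not_mem h0.1
  have hc1D1 : c1 ∉ D1 := frag_cut_not_mem h1.1
  have hc1D0 : c1 ∉ D0 := by
    intro hmem
    exact frag_not_conn h1.1 (minfrag_noncut hU' h0 hmem)
  have hc0D1 : c0 ∉ D1 := by
    intro hmem
    exact frag_not_conn h0.1 (minfrag_noncut hU' h1 hmem)
  have hcl0 : ∀ a ∈ D0, ∀ b, G.Adj a b → b ∈ U' → (b ∈ D0 ∨ b = c0) := by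
    intro a ha b hab hbU
    by_cases hbc : b = c0
    · exact Or.inr hbc
    · exact Or.inl (frag_closed h0.1 ha hab hbU hbc)
  have hcl1 : ∀ a ∈ D1, ∀ b, G.Adj a b → b ∈ U' → (b ∈ D1 ∨ b = c1) := by
    intro a ha b hab hbU
    by_cases hbc : b = c1
    · exact Or.inr hbc
    · exact Or.inl (frag_closed h1.1 ha hab hbU hbc)
  have hxU : x ∈ U' := ((frag_sub h0.1) hx).1
  have hyU : y ∈ U' := ((frag_sub h1.1) hy).1
  -- part (a): from outside both fragments one reaches c0 avoiding both fragments
  have parta : ∀ u ∈ U', u ∉ D0 → u ∉ D1 → Reach G ((U' \ D0) \ D1) u c0 := by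
    intro u huU huD0 huD1
    have h1r : Reach G U' u c0 := hU' u huU c0 hc0U
    have h2r : Reach G (U' \ D0) u c0 := reach_avoid hcl0 h1r huD0 hc0D0
    have hcl1' : ∀ a ∈ D1, ∀ b, G.Adj a b → b ∈ U' \ D0 → (b ∈ D1 ∨ b = c1) := by
      intro a ha b hab hb; exact hcl1 a ha b hab hb.1
    exact reach_avoid hcl1' h2r huD1 hc0D1
  have hsub_a : ((U' \ D0) \ D1) ⊆ U' \ {x, y} := by
    rintro s ⟨⟨hsU, hs0⟩, hs1⟩
    refine ⟨hsU, ?_⟩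
    rintro (h' | h')
    · exact hs0 (h' ▸ hx)
    · exact hs1 (h' ▸ hy)
  have hgoal : ∀ u ∈ U' \ ({x, y} : Set V), Reach G (U' \ {x, y}) u c0 := by
    rintro u ⟨huU, hum⟩
    have hux : u ≠ x := fun h' => hum (by simp [h'])
    have huy : u ≠ y := fun h' => hum (by simp [h'])
    by_cases huD0 : u ∈ D0
    · -- u ∈ D0 \ {x}
      have hconn : ConnOn G (U' \ {x}) := minfrag_noncut hU' h0 hx
      have hc0x : c0 ≠ x := fun h' => hc0D0 (h' ▸ hx)
      have hr : Reach G (U' \ {x}) u c0 := hconn u ⟨huU, hux⟩ c0 ⟨hc0U, hc0x⟩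
      have hcl1' : ∀ a ∈ D1, ∀ b, G.Adj a b → b ∈ U' \ {x} → (b ∈ D1 ∨ b = c1) := by
        intro a ha b hab hb; exact hcl1 a ha b hab hb.1
      have huD1 : u ∈ D1 → False := fun h' => (Set.disjoint_left.mp hdisj huD0) h'
      have hr2 : Reach G ((U' \ {x}) \ D1) u c0 := reach_avoid hcl1' hr huD1 hc0D1
      refine reach_mono ?_ hr2
      rintro s ⟨⟨hsU, hsx⟩, hs1⟩
      refine ⟨hsU, ?_⟩
      rintro (h' | h')
      · exact hsx h'
      · exact hs1 (h' ▸ hy)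
    · by_cases huD1 : u ∈ D1
      · -- u ∈ D1 \ {y}
        have hconn : ConnOn G (U' \ {y}) := minfrag_noncut hU' h1 hy
        have hc1y : c1 ≠ y := fun h' => hc1D1 (h' ▸ hy)
        have hr : Reach G (U' \ {y}) u c1 := hconn u ⟨huU, huy⟩ c1 ⟨hc1U, hc1y⟩
        have hcl0' : ∀ a ∈ D0, ∀ b, G.Adj a b → b ∈ U' \ {y} → (b ∈ D0 ∨ b = c0) := by
          intro a ha b hab hb; exact hcl0 a ha b hab hb.1
        have hc1D0' : c1 ∉ D0 := hc1D0
        have hr2 : Reach G ((U' \ {y}) \ D0) u c1 := reach_avoid hcl0' hr huD0 hc1D0'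
        have hr3 : Reach G (U' \ {x, y}) u c1 := by
          refine reach_mono ?_ hr2
          rintro s ⟨⟨hsU, hsy⟩, hs0⟩
          refine ⟨hsU, ?_⟩
          rintro (h' | h')
          · exact hs0 (h' ▸ hx)
          · exact hsy h'
        have hr4 : Reach G (U' \ {x, y}) c1 c0 :=
          reach_mono hsub_a (parta c1 hc1U hc1D0 hc1D1)
        exact reach_trans hr3 hr4
      · exact reach_mono hsub_a (parta u huU huD0 huD1)
  intro u hu t ht
  exact reach_trans (hgoal u hu) (reach_symm (hgoal t ht))


/-! ### the greedy partition lemma -/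

lemma core_partition {V : Type*} [Fintype V] {G : SimpleGraph V} {k : ℕ} (hk : 3 ≤ k)
    {A0 S : Set V} (ρ : V → ℕ) (hA0 : Indep G A0)
    (H1 : ∀ v ∈ S, (G.neighborSet v ∩ {u | u ∈ S ∧ ρ v ≤ ρ u}).ncard ≤ k - 1 ∧
        (((G.neighborSet v) ∩ A0).Nonempty →
          (G.neighborSet v ∩ {u | u ∈ S ∧ ρ v ≤ ρ u}).ncard ≤ k - 2)) :
    ∃ A B : Set V, A ∪ B = S ∧ Disjoint A B ∧ Indep G (A ∪ A0) ∧
      DegenerateOn G B (k - 2) := by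
  classical
  have main : ∀ n (T : Set V), T.ncard ≤ n → T ⊆ S →
      (∀ v ∈ T, ∀ w ∈ S, ρ v < ρ w → w ∈ T) →
      ∃ A B : Set V, A ∪ B = T ∧ Disjoint A B ∧ Indep G (A ∪ A0) ∧
        DegenerateOn G B (k - 2) := by
    intro n
    induction n with
    | zero =>
      intro T hle hTS hup
      have hT : T = ∅ := by
        rcases Set.eq_empty_or_nonempty T with h | h
        · exact h
        · exact absurd (Set.ncard_pos (Set.toFinite T) |>.mpr h) (by omega)
      subst hT
      refine ⟨∅, ∅, by simp, by simp, by simpa [Indep] using hA0, ?_⟩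
      intro s hs _ hsne
      exact absurd (Set.subset_empty_iff.mp hs) (Set.nonempty_iff_ne_empty.mp hsne)
    | succ n ih =>
      intro T hle hTS hup
      rcases Set.eq_empty_or_nonempty T with hTe | hTne
      · exact ih T (by simp [hTe]) hTS hup
      obtain ⟨v, hvT, hvmin⟩ := Set.exists_min_image T ρ (Set.toFinite T) hTne
      set T' := T \ {v} with hT'def
      have hT'card : T'.ncard ≤ n := by
        have : T'.ncard = T.ncard - 1 := Set.ncard_diff_singleton_of_mem hvT
        have hTpos : 0 < T.ncard := Set.ncard_pos (Set.toFinite T) |>.mpr hTne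
        omega
      have hT'S : T' ⊆ S := fun u hu => hTS hu.1
      have hup' : ∀ w ∈ T', ∀ w' ∈ S, ρ w < ρ w' → w' ∈ T' := by
        intro w hw w' hw' hlt
        have hw'T : w' ∈ T := hup w hw.1 w' hw' hlt
        refine ⟨hw'T, fun heq => ?_⟩
        have heq' : w' = v := heq
        have h1 : ρ v ≤ ρ w := hvmin w hw.1
        rw [heq'] at hlt
        omega
      obtain ⟨A, B, hAB, hABd, hind, hdegB⟩ := ih T' hT'card hT'S hup'
      have hvS : v ∈ S := hTS hvT
      have hBsub : B ⊆ T' := hAB ▸ Set.subset_union_right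
      have hAsub : A ⊆ T' := hAB ▸ Set.subset_union_left
      have hvB : v ∉ B := fun h => (hBsub h).2 rfl
      have hvA : v ∉ A := fun h => (hAsub h).2 rfl
      have hkey : ∀ u ∈ T', u ∈ S ∧ ρ v ≤ ρ u := fun u hu => ⟨hT'S hu, hvmin u hu.1⟩
      have hXsub : B ∩ G.neighborSet v ⊆ G.neighborSet v ∩ {u | u ∈ S ∧ ρ v ≤ ρ u} :=
        fun u hu => ⟨hu.2, hkey u (hBsub hu.1)⟩
      have hunion : A ∪ insert v B = T ∧ insert v A ∪ B = T := by
        constructor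
        · rw [Set.union_insert, hAB, hT'def, Set.insert_diff_singleton,
            Set.insert_eq_self.mpr hvT]
        · rw [Set.insert_union, hAB, hT'def, Set.insert_diff_singleton,
            Set.insert_eq_self.mpr hvT]
      by_cases hAnbr : ((G.neighborSet v) ∩ (A ∪ A0)).Nonempty
      · -- v goes to B
        have hbound : (B ∩ G.neighborSet v).ncard ≤ k - 2 := by
          obtain ⟨a, haN, haA⟩ := hAnbr
          rcases haA with haA | haA0
          · have hcnt : (G.neighborSet v ∩ {u | u ∈ S ∧ ρ v ≤ ρ u}).ncard ≤ k - 1 :=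
              (H1 v hvS).1
            have haX : a ∈ G.neighborSet v ∩ {u | u ∈ S ∧ ρ v ≤ ρ u} :=
              ⟨haN, hkey a (hAsub haA)⟩
            have hsub2 : B ∩ G.neighborSet v ⊆
                (G.neighborSet v ∩ {u | u ∈ S ∧ ρ v ≤ ρ u}) \ {a} := by
              rintro u ⟨huB, huN⟩
              refine ⟨hXsub ⟨huB, huN⟩, fun heq => ?_⟩
              have : u = a := heq
              exact (Set.disjoint_right.mp hABd huB) (this ▸ haA)
            have hdiff : ((G.neighborSet v ∩ {u | u ∈ S ∧ ρ v ≤ ρ u}) \ {a}).ncard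
                = (G.neighborSet v ∩ {u | u ∈ S ∧ ρ v ≤ ρ u}).ncard - 1 :=
              Set.ncard_diff_singleton_of_mem haX
            have hle2 := Set.ncard_le_ncard hsub2 (Set.toFinite _)
            have hpos : 0 < (G.neighborSet v ∩ {u | u ∈ S ∧ ρ v ≤ ρ u}).ncard :=
              Set.ncard_pos (Set.toFinite _) |>.mpr ⟨a, haX⟩
            omega
          · have h1 := (H1 v hvS).2 ⟨a, haN, haA0⟩
            have hle2 := Set.ncard_le_ncard hXsub (Set.toFinite _)
            omega
        refine ⟨A, insert v B, hunion.1, ?_, hind, ?_⟩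
        · rw [Set.disjoint_left]
          intro a haA ham
          rcases Set.mem_insert_iff.mp ham with h | h
          · exact hvA (h ▸ haA)
          · exact (Set.disjoint_left.mp hABd haA) h
        · intro s hs hsfin hsne
          by_cases hvs : v ∈ s
          · refine ⟨v, hvs, ?_⟩
            have hsub3 : s ∩ G.neighborSet v ⊆ B ∩ G.neighborSet v := by
              rintro u ⟨hus, huN⟩
              rcases hs hus with heq | huB
              · exfalso
                have : u = v := heq
                subst this
                exact G.irrefl huN
              · exact ⟨huB, huN⟩
            exact le_trans (Set.ncard_le_ncard hsub3 (Set.toFinite _)) hbound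
          · refine hdegB s ?_ hsfin hsne
            intro u hu
            rcases hs hu with heq | huB
            · exact absurd (show u = v from heq) (fun h => hvs (h ▸ hu))
            · exact huB
      · -- v goes to A
        have hempty : (G.neighborSet v) ∩ (A ∪ A0) = ∅ :=
          Set.not_nonempty_iff_eq_empty.mp hAnbr
        have hnoadj : ∀ w ∈ A ∪ A0, ¬ G.Adj v w := by
          intro w hw hadj
          exact absurd (Set.eq_empty_iff_forall_notMem.mp hempty w)
            (fun h => h ⟨hadj, hw⟩)
        refine ⟨insert v A, B, hunion.2, ?_, ?_, hdegB⟩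
        · rw [Set.disjoint_left]
          intro a ham haB
          rcases Set.mem_insert_iff.mp ham with h | h
          · exact hvB (h ▸ haB)
          · exact (Set.disjoint_left.mp hABd h) haB
        · intro u hu w hw hadj
          have hu' : u = v ∨ u ∈ A ∪ A0 := by
            rcases hu with hu | hu
            · rcases Set.mem_insert_iff.mp hu with h | h
              · exact Or.inl h
              · exact Or.inr (Or.inl h)
            · exact Or.inr (Or.inr hu)
          have hw' : w = v ∨ w ∈ A ∪ A0 := by
            rcases hw with hw | hw
            · rcases Set.mem_insert_iff.mp hw with h | h
              · exact Or.inl h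
              · exact Or.inr (Or.inl h)
            · exact Or.inr (Or.inr hw)
          rcases hu' with rfl | huA
          · rcases hw' with rfl | hwA
            · exact G.irrefl hadj
            · exact hnoadj w hwA hadj
          · rcases hw' with rfl | hwA
            · exact hnoadj u huA hadj.symm
            · exact hind u huA w hwA hadj
  exact main S.ncard S le_rfl subset_rfl (fun v hv w hw _ => hw)

/-! ### BFS ranking -/

def Lev {V : Type*} (G : SimpleGraph V) (S R : Set V) : ℕ → Set V
  | 0 => R
  | (n+1) => Lev G S R n ∪ {v | v ∈ S ∧ ∃ u ∈ Lev G S R n, G.Adj v u}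

lemma bfs_rho {V : Type*} [Fintype V] {G : SimpleGraph V} {S R : Set V} (hRS : R ⊆ S)
    (hreach : ∀ v ∈ S, ∃ r ∈ R, Reach G S v r) :
    ∃ ρ : V → ℕ, ∀ v ∈ S, v ∉ R → ∃ u ∈ S, G.Adj v u ∧ ρ u < ρ v := by
  classical
  have hLsub : ∀ n, Lev G S R n ⊆ S := by
    intro n
    induction n with
    | zero => exact hRS
    | succ n ih =>
      rintro v (hv | hv)
      · exact ih hv
      · exact hv.1
  have hexists : ∀ v ∈ S, ∃ n, v ∈ Lev G S R n := by
    intro v hv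
    obtain ⟨r, hrR, hre⟩ := hreach v hv
    clear hv
    induction hre using Relation.ReflTransGen.head_induction_on with
    | refl => exact ⟨0, hrR⟩
    | @head a c hstep hrest ih =>
      obtain ⟨m, hm⟩ := ih
      exact ⟨m + 1, Or.inr ⟨hstep.2.1, c, hm, hstep.1⟩⟩
  refine ⟨fun v => sInf {n | v ∈ Lev G S R n}, ?_⟩
  intro v hvS hvR
  obtain ⟨m, hm⟩ := hexists v hvS
  have hne : {n | v ∈ Lev G S R n}.Nonempty := ⟨m, hm⟩
  have hmem : v ∈ Lev G S R (sInf {n | v ∈ Lev G S R n}) := Nat.sInf_mem hne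
  have hpos : sInf {n | v ∈ Lev G S R n} ≠ 0 := by
    intro h0
    rw [h0] at hmem
    exact hvR hmem
  obtain ⟨p, hp⟩ : ∃ p, sInf {n | v ∈ Lev G S R n} = p + 1 :=
    ⟨sInf {n | v ∈ Lev G S R n} - 1, by omega⟩
  rw [hp] at hmem
  rcases hmem with hold | hnew
  · have hle := Nat.sInf_le (show p ∈ {n | v ∈ Lev G S R n} from hold)
    omega
  · obtain ⟨-, u, huLp, hadj⟩ := hnew
    refine ⟨u, hLsub p huLp, hadj, ?_⟩
    have h1 : sInf {n | u ∈ Lev G S R n} ≤ p := Nat.sInf_le huLp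
    show sInf {n | u ∈ Lev G S R n} < sInf {n | v ∈ Lev G S R n}
    omega

lemma reachable_reach {V : Type*} {G : SimpleGraph V} {u t : V} (h : G.Reachable u t) :
    Reach G Set.univ u t := by
  obtain ⟨w⟩ := h
  induction w with
  | nil => exact reach_refl
  | cons hadj p ih => exact Relation.ReflTransGen.head ⟨hadj, trivial, trivial⟩ ih


/-! ### the key pair-finding lemma inside a set with no cutvertex -/

lemma inner_pair {V : Type*} [Fintype V] {G : SimpleGraph V} {k : ℕ} (hk : 3 ≤ k)
    {U : Set V} {v : V}
    (hconn : ConnOn G U) (hnc : ∀ a ∈ U, ConnOn G (U \ {a}))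
    (hv : v ∈ U)
    (hdeg : ∀ u ∈ U, u ≠ v → ((G.neighborSet u) ∩ U).ncard = k)
    (hw0 : ∃ w ∈ U, w ≠ v ∧ ¬ G.Adj v w) :
    ∃ x y, x ∈ U ∧ y ∈ U ∧ x ≠ v ∧ y ≠ v ∧ x ≠ y ∧ ¬ G.Adj x y ∧
      ∀ u ∈ U \ ({x, y} : Set V), ∃ r, G.Adj r x ∧ G.Adj r y ∧
        Reach G (U \ {x, y}) u r := by
  classical
  obtain ⟨w, hwU, hwv, hwnadj⟩ := hw0
  have hwnadj' : ¬ G.Adj w v := fun h => hwnadj h.symm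
  by_cases hfrag : ∃ c D, IsFrag G (U \ {w}) c D
  · -- CASE B : U \ {w} has a cutvertex
    have hU' : ConnOn G (U \ {w}) := hnc w hwU
    obtain ⟨c0, D0, c1, D1, h0, h1, hdisj⟩ := exists_two_minfrags hfrag
    obtain ⟨x, hxD0, hwx⟩ := frag_nbr hnc hwU h0.1
    obtain ⟨y, hyD1, hwy⟩ := frag_nbr hnc hwU h1.1
    have hxU : x ∈ U := ((frag_sub h0.1) hxD0).1.1
    have hyU : y ∈ U := ((frag_sub h1.1) hyD1).1.1
    have hxw : x ≠ w := fun h => G.irrefl (h ▸ hwx)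
    have hyw : y ≠ w := fun h => G.irrefl (h ▸ hwy)
    have hxv : x ≠ v := fun h => hwnadj' (h ▸ hwx)
    have hyv : y ≠ v := fun h => hwnadj' (h ▸ hwy)
    have hxy : x ≠ y := fun h => (Set.disjoint_left.mp hdisj hxD0) (h ▸ hyD1)
    have hc0D1 : c0 ∉ D1 := fun hmem =>
      frag_not_conn h0.1 (minfrag_noncut hU' h1 hmem)
    have hnadjxy : ¬ G.Adj x y := by
      intro hadj
      have hyU' : y ∈ (U \ {w}) := ⟨hyU, hyw⟩
      have hyc0 : y ≠ c0 := fun h => hc0D1 (h ▸ hyD1)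
      exact (Set.disjoint_left.mp hdisj (frag_closed h0.1 hxD0 hadj hyU' hyc0)) hyD1
    refine ⟨x, y, hxU, hyU, hxv, hyv, hxy, hnadjxy, ?_⟩
    intro u hu
    have hwmem : w ∈ U \ ({x, y} : Set V) := by
      refine ⟨hwU, ?_⟩
      rintro (h | h)
      · exact hxw h.symm
      · exact hyw h.symm
    by_cases huw : u = w
    · exact ⟨w, hwx, hwy, huw ▸ reach_refl⟩
    · -- find another neighbour w' of w
      have h3 : ((G.neighborSet w ∩ U) \ ({x, y} : Set V)).Nonempty := by
        rw [Set.nonempty_iff_ne_empty]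
        intro he
        have hsub : G.neighborSet w ∩ U ⊆ ({x, y} : Set V) := by
          intro t ht
          by_contra htm
          exact (Set.eq_empty_iff_forall_notMem.mp he t) ⟨ht, htm⟩
        have h4 := Set.ncard_le_ncard hsub (Set.toFinite _)
        rw [hdeg w hwU hwv, Set.ncard_pair hxy] at h4
        omega
      obtain ⟨w', ⟨hw'N, hw'U⟩, hw'm⟩ := h3
      have hw'w : w' ≠ w := fun h => G.irrefl (h ▸ hw'N)
      have hcm3 : ConnOn G ((U \ {w}) \ ({x, y} : Set V)) := m3 hU' h0 h1 hdisj hxD0 hyD1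
      have hreach1 : Reach G ((U \ {w}) \ ({x, y} : Set V)) u w' := by
        refine hcm3 u ⟨⟨hu.1, huw⟩, hu.2⟩ w' ⟨⟨hw'U, hw'w⟩, hw'm⟩
      have hreach2 : Reach G (U \ ({x, y} : Set V)) u w' := by
        refine reach_mono ?_ hreach1
        rintro s ⟨⟨hs1, -⟩, hs2⟩
        exact ⟨hs1, hs2⟩
      refine ⟨w, hwx, hwy, Relation.ReflTransGen.tail hreach2
        ⟨hw'N.symm, ⟨hw'U, hw'm⟩, hwmem⟩⟩
  · -- CASE A : U \ {w} has no cutvertex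
    have hnc' : ∀ a ∈ U \ {w}, ConnOn G ((U \ {w}) \ {a}) := nofrag_nocut hfrag
    set NN : Set V := {t | t ∈ U ∧ (t = w ∨ G.Adj w t)} with hNNdef
    by_cases hZ : (U \ ({v} ∪ NN)).Nonempty
    · -- there is a vertex at distance ≥ 2 from w, other than v
      obtain ⟨z, hzU, hzm⟩ := hZ
      have hzv : z ≠ v := fun h => hzm (Or.inl h)
      have hzNN : z ∉ NN := fun h => hzm (Or.inr h)
      have hWconn : ConnOn G (U \ {v}) := hnc v hv
      have hzw : Reach G (U \ {v}) z w := hWconn z ⟨hzU, hzv⟩ w ⟨hwU, hwv⟩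
      obtain ⟨a, b, hab, haW, hbW, haNN, hbNN⟩ :=
        reach_cross hzw hzNN ⟨hwU, Or.inl rfl⟩
      have hbw : b ≠ w := by
        intro h
        subst h
        exact haNN ⟨haW.1, Or.inr hab.symm⟩
      have hwb : G.Adj w b := hbNN.2.resolve_left hbw
      have haU : a ∈ U := haW.1
      have hav : a ≠ v := haW.2
      have haw : a ≠ w := fun h => haNN (h ▸ ⟨hwU, Or.inl rfl⟩)
      have hwa : ¬ G.Adj w a := fun h => haNN ⟨haU, Or.inr h⟩
      have hba : b ≠ a := fun h => G.irrefl (h ▸ hab)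
      refine ⟨w, a, hwU, haU, hwv, hav, fun h => haw h.symm, hwa, ?_⟩
      intro u hu
      have hconn2 : ConnOn G ((U \ {w}) \ {a}) := hnc' a ⟨haU, haw⟩
      have hbmem : b ∈ (U \ {w}) \ {a} := ⟨⟨hbW.1, hbw⟩, hba⟩
      have humem : u ∈ (U \ {w}) \ {a} := by
        refine ⟨⟨hu.1, fun h => hu.2 (Or.inl h)⟩, fun h => hu.2 (Or.inr h)⟩
      have hr := hconn2 u humem b hbmem
      refine ⟨b, hwb.symm, hab.symm, reach_mono ?_ hr⟩
      rintro s ⟨⟨hsU, hsw⟩, hsa⟩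
      refine ⟨hsU, ?_⟩
      rintro (h | h)
      · exact hsw h
      · exact hsa h
    · -- U = {w} ∪ N(w) ∪ {v} : complete-minus-matching structure
      have hstruct : ∀ t ∈ U, t = w ∨ t = v ∨ t ∈ G.neighborSet w ∩ U := by
        intro t htU
        rcases Set.not_nonempty_iff_eq_empty.mp hZ ▸ (Set.eq_empty_iff_forall_notMem.mp
          (Set.not_nonempty_iff_eq_empty.mp hZ) t) with h
        by_cases htv : t = v
        · exact Or.inr (Or.inl htv)
        · have : t ∈ NN := by
            by_contra hnn
            exact (Set.eq_empty_iff_forall_notMem.mp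
              (Set.not_nonempty_iff_eq_empty.mp hZ) t) ⟨htU, fun hm =>
                hm.elim (fun h' => htv h') hnn⟩
          rcases this.2 with h' | h'
          · exact Or.inl h'
          · exact Or.inr (Or.inr ⟨h', htU⟩)
      set NU := G.neighborSet w ∩ U with hNUdef
      have hNUcard : NU.ncard = k := hdeg w hwU hwv
      have hwNU : w ∉ NU := fun h => G.irrefl h.1
      have hvNU : v ∉ NU := fun h => hwnadj' h.1
      have hNUsubU : NU ⊆ U := fun t ht => ht.2
      have hUeq : U = insert w (insert v NU) := by
        ext t
        constructor
        · intro ht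
          rcases hstruct t ht with h | h | h
          · exact Or.inl h
          · exact Or.inr (Or.inl h)
          · exact Or.inr (Or.inr h)
        · rintro (h | h | h)
          · exact h ▸ hwU
          · exact h ▸ hv
          · exact hNUsubU h
      have hUcard : U.ncard = k + 2 := by
        rw [hUeq]
        rw [Set.ncard_insert_of_notMem (by
          rintro (h | h)
          · exact hwv h
          · exact hwNU h) (Set.toFinite _),
          Set.ncard_insert_of_notMem hvNU (Set.toFinite _), hNUcard]
      -- unique non-neighbour of each d ∈ NU
      have hM : ∀ d ∈ NU, ∃ m, ((U \ {d}) \ (G.neighborSet d ∩ U)) = {m} := by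
        intro d hd
        have hdv : d ≠ v := fun h => hvNU (h ▸ hd)
        have hdU : d ∈ U := hNUsubU hd
        have h1 : (U \ {d}).ncard = k + 1 := by
          rw [Set.ncard_diff_singleton_of_mem hdU, hUcard]
          omega
        have hsub : G.neighborSet d ∩ U ⊆ U \ {d} := by
          rintro t ⟨htN, htU⟩
          exact ⟨htU, fun h => G.irrefl ((show t = d from h) ▸ htN)⟩
        have h2 : ((U \ {d}) \ (G.neighborSet d ∩ U)).ncard = 1 := by
          rw [Set.ncard_diff hsub (Set.toFinite _), h1, hdeg d hdU hdv]
          omega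
        exact Set.ncard_eq_one.mp h2
      -- a neighbour d0 of v
      obtain ⟨d0, hvd0, hd0U⟩ : ∃ d0, G.Adj v d0 ∧ d0 ∈ U := by
        have := hconn v hv w hwU
        rcases Relation.ReflTransGen.cases_head this with h | ⟨c, hc1, -⟩
        · exact absurd h (Ne.symm hwv)
        · exact ⟨c, hc1.1, hc1.2.2⟩
      have hd0v : d0 ≠ v := fun h => G.irrefl (h ▸ hvd0)
      have hd0w : d0 ≠ w := fun h => hwnadj (h ▸ hvd0)
      have hd0NU : d0 ∈ NU := by
        rcases hstruct d0 hd0U with h | h | h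
        · exact absurd h hd0w
        · exact absurd h hd0v
        · exact h
      obtain ⟨μ, hμeq⟩ := hM d0 hd0NU
      have hμmem : μ ∈ (U \ {d0}) \ (G.neighborSet d0 ∩ U) := hμeq ▸ rfl
      have hμU : μ ∈ U := hμmem.1.1
      have hμd0 : μ ≠ d0 := hμmem.1.2
      have hnadjd0μ : ¬ G.Adj d0 μ := fun h => hμmem.2 ⟨h, hμU⟩
      have hμv : μ ≠ v := by
        intro h
        exact hnadjd0μ (h ▸ hvd0.symm)
      have hμw : μ ≠ w := by
        intro h
        exact hnadjd0μ (h ▸ hd0NU.1.symm)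
      have hμNU : μ ∈ NU := by
        rcases hstruct μ hμU with h | h | h
        · exact absurd h hμw
        · exact absurd h hμv
        · exact h
      -- μ is adjacent to v
      obtain ⟨μ', hμ'eq⟩ := hM μ hμNU
      have hd0mem : d0 ∈ (U \ {μ}) \ (G.neighborSet μ ∩ U) := by
        refine ⟨⟨hd0U, fun h => hμd0 (show d0 = μ from h).symm⟩, ?_⟩
        rintro ⟨hN, -⟩
        exact hnadjd0μ hN.symm
      have hd0μ' : d0 = μ' := by
        have := hμ'eq ▸ hd0mem
        exact this
      have hvμ : G.Adj v μ := by
        by_contra hnadj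
        have hvmem : v ∈ (U \ {μ}) \ (G.neighborSet μ ∩ U) := by
          refine ⟨⟨hv, fun h => hμv (show v = μ from h).symm⟩, ?_⟩
          rintro ⟨hN, -⟩
          exact hnadj hN.symm
        have h5 : v ∈ ({μ'} : Set V) := hμ'eq ▸ hvmem
        have h6 : v = μ' := h5
        exact hd0v (hd0μ' ▸ h6.symm)
      -- the pair (d0, μ)
      refine ⟨d0, μ, hd0U, hμU, hd0v, hμv, fun h => hμd0 h.symm, hnadjd0μ, ?_⟩
      intro u hu
      have hd0m : d0 ∈ ({d0, μ} : Set V) := Or.inl rfl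
      have hμm : μ ∈ ({d0, μ} : Set V) := Or.inr rfl
      have hwmem2 : w ∈ U \ ({d0, μ} : Set V) := by
        refine ⟨hwU, ?_⟩
        rintro (h | h)
        · exact hd0w h.symm
        · exact hμw h.symm
      rcases hstruct u hu.1 with h | h | h
      · exact ⟨w, hd0NU.1, hμNU.1, h ▸ reach_refl⟩
      · exact ⟨v, hvd0, hvμ, h ▸ reach_refl⟩
      · refine ⟨w, hd0NU.1, hμNU.1, ?_⟩
        exact reach_single h.1.symm hu hwmem2


/-! ### the key lemma for regular graphs -/

lemma key_pair {V : Type*} [Fintype V] {G : SimpleGraph V} {k : ℕ} (hk : 3 ≤ k)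
    (hconn : ConnOn G Set.univ)
    (hreg : ∀ u : V, (G.neighborSet u).ncard = k)
    (hnotcomplete : ∃ a b : V, a ≠ b ∧ ¬ G.Adj a b) :
    ∃ x y : V, x ≠ y ∧ ¬ G.Adj x y ∧
      ∀ u ∈ (Set.univ \ ({x, y} : Set V)), ∃ r, G.Adj r x ∧ G.Adj r y ∧
        Reach G (Set.univ \ ({x, y} : Set V)) u r := by
  classical
  by_cases hfragG : ∃ c D, IsFrag G Set.univ c D
  · -- G has a cutvertex
    obtain ⟨v, D, hfD, -, hmin⟩ := exists_minfrag_in (K := Set.univ)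
      (by obtain ⟨c, D, hf⟩ := hfragG; exact ⟨c, D, hf, Set.subset_univ D⟩)
    have hvD : v ∉ D := frag_cut_not_mem hfD
    have hcl : ∀ a ∈ D, ∀ b, G.Adj a b → b ≠ v → b ∈ D := by
      intro a ha b hadj hbv
      exact frag_closed hfD ha hadj trivial hbv
    set U1 : Set V := insert v D with hU1def
    have hDsubU1 : D ⊆ U1 := Set.subset_insert v D
    have hvU1 : v ∈ U1 := Set.mem_insert v D
    have hU1mem : ∀ t, t ∈ U1 ↔ (t = v ∨ t ∈ D) := fun t => Set.mem_insert_iff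
    -- an edge from v into D
    obtain ⟨d0, hd0D, hvd0⟩ : ∃ d0 ∈ D, G.Adj v d0 := by
      by_contra hno
      push_neg at hno
      have hcl2 : ∀ a ∈ D, ∀ b, G.Adj a b → b ∈ Set.univ → b ∈ D := by
        intro a ha b hadj _
        by_cases hbv : b = v
        · exact absurd (hbv ▸ hadj.symm) (fun h => hno a ha h)
        · exact hcl a ha b hadj hbv
      obtain ⟨z, hz⟩ := frag_nonempty hfD
      obtain ⟨t, -, htm⟩ := hfD.2.2
      have htv : t ≠ v := fun h => htm (Or.inl h)
      have htD : t ∉ D := fun h => htm (Or.inr h)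
      exact htD (reach_closed hcl2 (hconn z trivial t trivial) hz)
    -- neighbourhoods of D-vertices stay in U1
    have hNsub : ∀ d ∈ D, G.neighborSet d ⊆ U1 := by
      intro d hd b hb
      by_cases hbv : b = v
      · exact (hU1mem b).mpr (Or.inl hbv)
      · exact (hU1mem b).mpr (Or.inr (hcl d hd b hb hbv))
    have hDdeg : ∀ d ∈ D, (G.neighborSet d ∩ U1).ncard = k := by
      intro d hd
      rw [Set.inter_eq_self_of_subset_left (hNsub d hd)]
      exact hreg d
    have hDclosed : ∀ a ∈ D, ∀ b, G.Adj a b → b ∈ (Set.univ \ {v} : Set V) → b ∈ D := by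
      rintro a ha b hadj ⟨-, hbv⟩
      exact hcl a ha b hadj hbv
    have hDconn : ConnOn G D := by
      intro u hu t ht
      exact reach_restrict hDclosed (frag_conn hfD hu ht) hu
    have hU1conn : ConnOn G U1 := by
      have hto : ∀ u ∈ U1, Reach G U1 u v := by
        intro u hu
        rcases (hU1mem u).mp hu with rfl | huD
        · exact reach_refl
        · have h1 : Reach G D u d0 := hDconn u huD d0 hd0D
          exact Relation.ReflTransGen.tail (reach_mono hDsubU1 h1)
            ⟨hvd0.symm, hDsubU1 hd0D, hvU1⟩
      intro u hu t ht
      exact reach_trans (hto u hu) (reach_symm (hto t ht))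
    have hU1nc : ∀ a ∈ U1, ConnOn G (U1 \ {a}) := by
      intro a ha
      rcases (hU1mem a).mp ha with rfl | haD
      · -- removing v leaves D
        have : U1 \ {a} = D := by
          rw [hU1def]
          exact Set.insert_diff_self_of_notMem hvD
        rw [this]
        exact hDconn
      · -- removing a vertex of the minimal fragment
        have hto : ∀ u ∈ U1 \ {a}, Reach G (U1 \ {a}) u v := by
          rintro u ⟨huU1, hua⟩
          rcases (hU1mem u).mp huU1 with rfl | huD
          · exact reach_refl
          · by_cases hvF : v ∈ RSet G (Set.univ \ {a}) u
            · -- reach v avoiding the outside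
              have hXcl : ∀ s ∈ (Set.univ \ U1 : Set V), ∀ b, G.Adj s b →
                  b ∈ (Set.univ \ {a} : Set V) → (b ∈ (Set.univ \ U1 : Set V) ∨ b = v) := by
                rintro s ⟨-, hsU1⟩ b hadj ⟨-, hba⟩
                by_cases hbv : b = v
                · exact Or.inr hbv
                · by_cases hbD : b ∈ D
                  · exfalso
                    have hsv : s ≠ v := fun h => hsU1 ((hU1mem s).mpr (Or.inl h))
                    exact hsU1 ((hU1mem s).mpr (Or.inr (hcl b hbD s hadj.symm hsv)))
                  · refine Or.inl ⟨trivial, fun h => ?_⟩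
                    rcases (hU1mem b).mp h with h' | h'
                    · exact hbv h'
                    · exact hbD h'
              have h1 : Reach G ((Set.univ \ {a}) \ (Set.univ \ U1)) u v :=
                reach_avoid hXcl hvF.2 (fun h => h.2 (hDsubU1 huD)) (fun h => h.2 hvU1)
              refine reach_mono ?_ h1
              rintro s ⟨⟨-, hsa⟩, hs2⟩
              refine ⟨?_, hsa⟩
              by_contra hsU1
              exact hs2 ⟨trivial, hsU1⟩
            · -- otherwise a smaller fragment, contradiction
              exfalso
              have hFD : ∀ t, Reach G (Set.univ \ {a}) u t → t ∈ D := by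
                intro t hre
                induction hre with
                | refl => exact huD
                | @tail b t hstep hlast ih =>
                  by_cases htv : t = v
                  · exfalso
                    exact hvF ⟨⟨trivial, htv ▸ hlast.2.2.2⟩,
                      htv ▸ (Relation.ReflTransGen.tail hstep hlast)⟩
                  · exact hcl b ih t hlast.1 htv
              have haD : a ∈ D := haD
              have hfragF : IsFrag G Set.univ a (RSet G (Set.univ \ {a}) u) := by
                refine ⟨trivial, ⟨u, trivial, hua, rfl⟩, ⟨v, trivial, ?_⟩⟩
                rintro (h | h)
                · exact hvD ((show v = a from h) ▸ haD)
                · exact hvF h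
              refine hmin a _ hfragF
                (HasSubset.Subset.ssubset_of_ne (fun t ht => hFD t ht.2) ?_)
              intro heq
              have : a ∈ RSet G (Set.univ \ {a}) u := heq ▸ haD
              exact this.1.2 rfl
        intro u hu t ht
        exact reach_trans (hto u hu) (reach_symm (hto t ht))
    -- |D| ≥ k
    have hU1big : k + 1 ≤ U1.ncard := by
      have h1 : G.neighborSet d0 ⊆ U1 \ {d0} := by
        intro b hb
        refine ⟨hNsub d0 hd0D hb, fun h => G.irrefl ((show b = d0 from h) ▸ hb)⟩
      have h2 := Set.ncard_le_ncard h1 (Set.toFinite _)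
      rw [hreg d0] at h2
      have h3 : (U1 \ {d0}).ncard = U1.ncard - 1 :=
        Set.ncard_diff_singleton_of_mem (hDsubU1 hd0D)
      have h4 : 0 < U1.ncard := Set.ncard_pos (Set.toFinite _) |>.mpr ⟨v, hvU1⟩
      omega
    have hDbig : k ≤ D.ncard := by
      have : U1.ncard = D.ncard + 1 := by
        rw [hU1def, Set.ncard_insert_of_notMem hvD (Set.toFinite _)]
      omega
    -- v has a neighbour outside U1
    obtain ⟨b0, hvb0, hb0U1⟩ : ∃ b0, G.Adj v b0 ∧ b0 ∉ U1 := by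
      by_contra hno
      push_neg at hno
      obtain ⟨t, -, htm⟩ := hfD.2.2
      have htU1 : t ∉ U1 := by
        intro h
        rcases (hU1mem t).mp h with h' | h'
        · exact htm (Or.inl h')
        · exact htm (Or.inr h')
      have hXcl2 : ∀ s ∈ (Set.univ \ U1 : Set V), ∀ b, G.Adj s b → b ∈ Set.univ →
          b ∈ (Set.univ \ U1 : Set V) := by
        rintro s ⟨-, hsU1⟩ b hadj -
        refine ⟨trivial, fun hbU1 => ?_⟩
        rcases (hU1mem b).mp hbU1 with rfl | hbD
        · exact hsU1 (hno s hadj.symm)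
        · have hsv : s ≠ v := fun h => hsU1 ((hU1mem s).mpr (Or.inl h))
          exact hsU1 ((hU1mem s).mpr (Or.inr (hcl b hbD s hadj.symm hsv)))
      have := reach_closed hXcl2 (hconn t trivial v trivial) ⟨trivial, htU1⟩
      exact this.2 hvU1
    -- a vertex of D not adjacent to v
    obtain ⟨w, hwD, hwnadj⟩ : ∃ w ∈ D, ¬ G.Adj v w := by
      by_contra hno
      push_neg at hno
      have h1 : D ⊆ G.neighborSet v \ {b0} := by
        intro d hd
        refine ⟨hno d hd, fun h => hb0U1 ((show d = b0 from h) ▸ hDsubU1 hd)⟩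
      have h2 := Set.ncard_le_ncard h1 (Set.toFinite _)
      have hb0N : b0 ∈ G.neighborSet v := hvb0
      have h3 : (G.neighborSet v \ {b0}).ncard = k - 1 := by
        rw [Set.ncard_diff_singleton_of_mem hb0N, hreg v]
      omega
    have hwv : w ≠ v := fun h => hvD (h ▸ hwD)
    -- apply the inner pair lemma
    obtain ⟨x, y, hxU1, hyU1, hxv, hyv, hxy, hnadjxy, hroots⟩ :=
      inner_pair hk hU1conn hU1nc hvU1
        (fun u hu huv => hDdeg u (((hU1mem u).mp hu).resolve_left huv))
        ⟨w, hDsubU1 hwD, hwv, hwnadj⟩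
    have hxD : x ∈ D := ((hU1mem x).mp hxU1).resolve_left hxv
    have hyD : y ∈ D := ((hU1mem y).mp hyU1).resolve_left hyv
    refine ⟨x, y, hxy, hnadjxy, ?_⟩
    rintro u ⟨-, hum⟩
    by_cases huU1 : u ∈ U1
    · obtain ⟨r, hr1, hr2, hr3⟩ := hroots u ⟨huU1, hum⟩
      refine ⟨r, hr1, hr2, reach_mono ?_ hr3⟩
      rintro s ⟨-, hs2⟩
      exact ⟨trivial, hs2⟩
    · -- outside : reach v avoiding D, then use v's root
      have hXcl3 : ∀ s ∈ D, ∀ b, G.Adj s b → b ∈ Set.univ → (b ∈ D ∨ b = v) := by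
        intro s hs b hadj _
        by_cases hbv : b = v
        · exact Or.inr hbv
        · exact Or.inl (hcl s hs b hadj hbv)
      have huD : u ∉ D := fun h => huU1 (hDsubU1 h)
      have h1 : Reach G (Set.univ \ D) u v :=
        reach_avoid hXcl3 (hconn u trivial v trivial) huD hvD
      have h2 : Reach G (Set.univ \ ({x, y} : Set V)) u v := by
        refine reach_mono ?_ h1
        rintro s ⟨-, hsD⟩
        refine ⟨trivial, ?_⟩
        rintro (h | h)
        · exact hsD ((show s = x from h) ▸ hxD)
        · exact hsD ((show s = y from h) ▸ hyD)
      have hvmem : v ∈ U1 \ ({x, y} : Set V) := by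
        refine ⟨hvU1, ?_⟩
        rintro (h | h)
        · exact hxv (show v = x from h).symm
        · exact hyv (show v = y from h).symm
      obtain ⟨r, hr1, hr2, hr3⟩ := hroots v hvmem
      refine ⟨r, hr1, hr2, reach_trans h2 (reach_mono ?_ hr3)⟩
      rintro s ⟨-, hs2⟩
      exact ⟨trivial, hs2⟩
  · -- G has no cutvertex
    have hnc : ∀ a ∈ (Set.univ : Set V), ConnOn G (Set.univ \ {a}) := nofrag_nocut hfragG
    obtain ⟨a, b, hab, hnadj⟩ := hnotcomplete
    obtain ⟨x, y, -, -, -, -, hxy, hnadjxy, hroots⟩ :=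
      inner_pair hk (v := a) hconn hnc trivial
        (fun u _ _ => by rw [Set.inter_univ]; exact hreg u)
        ⟨b, trivial, Ne.symm hab, hnadj⟩
    exact ⟨x, y, hxy, hnadjxy, hroots⟩

end Aux

/-- For every `k ≥ 3`, every connected graph of maximum degree at most `k` that is not
isomorphic to `K_{k+1}` has a partition into an independent set `A` and a set `B`
inducing a `(k-2)`-degenerate graph. -/
theorem stmt1 {V : Type*} [Fintype V] (k : ℕ) (hk : 3 ≤ k) (G : SimpleGraph V)
    (hconn : G.Connected)
    (hdeg : ∀ v : V, (G.neighborSet v).ncard ≤ k)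
    (hK : ¬ Nonempty (G ≃g (⊤ : SimpleGraph (Fin (k + 1))))) :
    KDegenDecomp G k := by
  classical
  have hne : Nonempty V := hconn.nonempty
  have hconn' : ConnOn G Set.univ := by
    intro u _ t _
    exact reachable_reach (hconn.preconnected u t)
  by_cases hdef : ∃ r : V, (G.neighborSet r).ncard ≤ k - 1
  · -- a vertex of degree < k exists
    obtain ⟨r0, hr0⟩ := hdef
    have hreach : ∀ v ∈ (Set.univ : Set V), ∃ r ∈ ({r0} : Set V), Reach G Set.univ v r :=
      fun v _ => ⟨r0, rfl, hconn' v trivial r0 trivial⟩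
    obtain ⟨ρ, hρ⟩ := bfs_rho (G := G) (R := {r0}) (S := Set.univ)
      (Set.subset_univ _) hreach
    have H1 : ∀ v ∈ (Set.univ : Set V),
        (G.neighborSet v ∩ {u | u ∈ (Set.univ : Set V) ∧ ρ v ≤ ρ u}).ncard ≤ k - 1 ∧
        (((G.neighborSet v) ∩ (∅ : Set V)).Nonempty →
          (G.neighborSet v ∩ {u | u ∈ (Set.univ : Set V) ∧ ρ v ≤ ρ u}).ncard ≤ k - 2) := by
      intro v _
      refine ⟨?_, ?_⟩
      · by_cases hvr : v = r0
        · subst hvr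
          refine le_trans (le_trans (Set.ncard_le_ncard
            (Set.inter_subset_left) (Set.toFinite _)) hr0) (le_refl _)
        · obtain ⟨u, huS, hadj, hlt⟩ := hρ v trivial (fun h => hvr h)
          have hsub : G.neighborSet v ∩ {u' | u' ∈ (Set.univ : Set V) ∧ ρ v ≤ ρ u'} ⊆
              G.neighborSet v \ {u} := by
            rintro s ⟨hsN, -, hsρ⟩
            refine ⟨hsN, fun h => ?_⟩
            rw [show s = u from h] at hsρ
            omega
          have huN : u ∈ G.neighborSet v := hadj
          have h2 := Set.ncard_le_ncard hsub (Set.toFinite _)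
          rw [Set.ncard_diff_singleton_of_mem huN] at h2
          have h3 := hdeg v
          omega
      · rintro ⟨a, -, ha⟩
        exact absurd ha (Set.notMem_empty a)
    obtain ⟨A, B, hAB, hABd, hind, hdegB⟩ := core_partition hk ρ
      (A0 := (∅ : Set V)) (fun u hu => absurd hu (Set.notMem_empty u)) H1
    refine ⟨A, B, hAB, hABd, ?_, hdegB⟩
    simpa using hind
  · -- G is k-regular
    push_neg at hdef
    have hreg : ∀ v : V, (G.neighborSet v).ncard = k := by
      intro v
      have h1 := hdeg v
      have h2 := hdef v
      omega
    have hnotc : ∃ a b : V, a ≠ b ∧ ¬ G.Adj a b := by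
      by_contra hno
      push_neg at hno
      obtain ⟨v0⟩ := hne
      have hNv0 : G.neighborSet v0 = Set.univ \ {v0} := by
        ext b
        constructor
        · intro hb
          exact ⟨trivial, fun h => G.irrefl ((show b = v0 from h) ▸ hb)⟩
        · rintro ⟨-, hb⟩
          exact hno v0 b (fun h => hb h.symm)
      have hcard : Fintype.card V = k + 1 := by
        have h1 : (Set.univ \ ({v0} : Set V)).ncard = Fintype.card V - 1 := by
          rw [Set.ncard_diff_singleton_of_mem (Set.mem_univ v0),
            Set.ncard_univ, Nat.card_eq_fintype_card]
        have h2 := hreg v0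
        rw [hNv0, h1] at h2
        have h3 : 0 < Fintype.card V := Fintype.card_pos_iff.mpr ⟨v0⟩
        omega
      apply hK
      have e : V ≃ Fin (k + 1) := Fintype.equivFinOfCardEq hcard
      refine ⟨⟨e, ?_⟩⟩
      intro a b
      simp only [SimpleGraph.top_adj, ne_eq, EmbeddingLike.apply_eq_iff_eq]
      constructor
      · intro h
        exact hno a b h
      · intro h h'
        exact G.irrefl (h' ▸ h)
    obtain ⟨x, y, hxy, hnadjxy, hroots⟩ := key_pair hk hconn' hreg hnotc
    set A0 : Set V := {x, y} with hA0def
    have hA0ind : Indep G A0 := by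
      intro u hu w hw hadj
      rcases hu with hu | hu
      · rcases hw with hw | hw
        · exact G.irrefl (((show u = x from hu).trans (show w = x from hw).symm) ▸ hadj)
        · rw [show u = x from hu, show w = y from hw] at hadj
          exact hnadjxy hadj
      · rcases hw with hw | hw
        · rw [show u = y from hu, show w = x from hw] at hadj
          exact hnadjxy hadj.symm
        · exact G.irrefl (((show u = y from hu).trans (show w = y from hw).symm) ▸ hadj)
    set S : Set V := Set.univ \ A0 with hSdef
    set R : Set V := {r | G.Adj r x ∧ G.Adj r y} with hRdef
    have hRS : R ⊆ S := by
      rintro r ⟨hrx, hry⟩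
      refine ⟨trivial, ?_⟩
      rintro (h | h)
      · exact G.irrefl ((show r = x from h) ▸ hrx)
      · exact G.irrefl ((show r = y from h) ▸ hry)
    have hreach : ∀ v ∈ S, ∃ r ∈ R, Reach G S v r := by
      intro v hv
      obtain ⟨r, hr1, hr2, hr3⟩ := hroots v hv
      exact ⟨r, ⟨hr1, hr2⟩, hr3⟩
    obtain ⟨ρ, hρ⟩ := bfs_rho (G := G) hRS hreach
    have hxN : ∀ v, G.Adj v x → x ∈ G.neighborSet v := fun v h => h
    have H1 : ∀ v ∈ S,
        (G.neighborSet v ∩ {u | u ∈ S ∧ ρ v ≤ ρ u}).ncard ≤ k - 1 ∧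
        (((G.neighborSet v) ∩ A0).Nonempty →
          (G.neighborSet v ∩ {u | u ∈ S ∧ ρ v ≤ ρ u}).ncard ≤ k - 2) := by
      intro v hv
      by_cases hvR : v ∈ R
      · -- v is a root : both x and y are neighbours, and they are outside S
        have hbound : (G.neighborSet v ∩ {u | u ∈ S ∧ ρ v ≤ ρ u}).ncard ≤ k - 2 := by
          have hsub : G.neighborSet v ∩ {u | u ∈ S ∧ ρ v ≤ ρ u} ⊆
              G.neighborSet v \ A0 := by
            rintro s ⟨hsN, hsS, -⟩
            exact ⟨hsN, hsS.2⟩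
          have hA0sub : A0 ⊆ G.neighborSet v := by
            rintro t (ht | ht)
            · exact (show t = x from ht) ▸ hvR.1
            · exact (show t = y from ht) ▸ hvR.2
          have h1 : (G.neighborSet v \ A0).ncard =
              (G.neighborSet v).ncard - A0.ncard :=
            Set.ncard_diff hA0sub (Set.toFinite _)
          have h2 := Set.ncard_le_ncard hsub (Set.toFinite _)
          rw [h1, hreg v, hA0def, Set.ncard_pair hxy] at h2
          exact h2
        exact ⟨le_trans hbound (by omega), fun _ => hbound⟩
      · obtain ⟨u, huS, hadj, hlt⟩ := hρ v hv hvR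
        have huN : u ∈ G.neighborSet v := hadj
        have huX : u ∉ {u' | u' ∈ S ∧ ρ v ≤ ρ u'} := by
          rintro ⟨-, h⟩
          omega
        refine ⟨?_, ?_⟩
        · have hsub : G.neighborSet v ∩ {u' | u' ∈ S ∧ ρ v ≤ ρ u'} ⊆
              G.neighborSet v \ {u} := by
            rintro s ⟨hsN, hs⟩
            refine ⟨hsN, fun h => huX ((show s = u from h) ▸ hs)⟩
          have h2 := Set.ncard_le_ncard hsub (Set.toFinite _)
          rw [Set.ncard_diff_singleton_of_mem huN, hreg v] at h2
          omega
        · rintro ⟨a, haN, haA0⟩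
          have hau : a ≠ u := by
            intro h
            exact (huS.2) (h ▸ haA0)
          have hsub : G.neighborSet v ∩ {u' | u' ∈ S ∧ ρ v ≤ ρ u'} ⊆
              G.neighborSet v \ {u, a} := by
            rintro s ⟨hsN, hs⟩
            refine ⟨hsN, ?_⟩
            rintro (h | h)
            · exact huX ((show s = u from h) ▸ hs)
            · rw [show s = a from h] at hs
              exact hs.1.2 haA0
          have hpair : ({u, a} : Set V) ⊆ G.neighborSet v := by
            rintro t (ht | ht)
            · exact (show t = u from ht) ▸ huN
            · exact (show t = a from ht) ▸ haN
          have h1 : (G.neighborSet v \ ({u, a} : Set V)).ncard =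
              (G.neighborSet v).ncard - ({u, a} : Set V).ncard :=
            Set.ncard_diff hpair (Set.toFinite _)
          have h2 := Set.ncard_le_ncard hsub (Set.toFinite _)
          rw [h1, hreg v, Set.ncard_pair (Ne.symm hau)] at h2
          exact h2
    obtain ⟨A, B, hAB, hABd, hind, hdegB⟩ := core_partition hk ρ hA0ind H1
    refine ⟨A ∪ A0, B, ?_, ?_, hind, hdegB⟩
    · rw [Set.union_right_comm, hAB, hSdef, Set.diff_union_self, Set.univ_union]
    · rw [Set.disjoint_left]
      rintro a (ha | ha) haB
      · exact (Set.disjoint_left.mp hABd ha) haB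
      · have hBS : B ⊆ S := hAB ▸ Set.subset_union_right
        exact (hBS haB).2 ha
end

section
/- Let k ≥ 2 and let G be a (k-1)-degenerate graph. Then V(G) can be partitioned into sets A and B such that A is a maximal independent set and the subgraph induced by B is (k-2)-degenerate. Moreover, given any (k-1)-degenerate vertex ordering of G, the greedy assignment (placing each vertex in A unless it has an earlier neighbour in A, otherwise in B) produces such a partition in which the induced ordering on B is a (k-2)-degenerate order of G[B]. -/
open SimpleGraph Set

noncomputable def memA {V : Type*} [Fintype V] [LinearOrder V] (G : SimpleGraph V) :
    V → Prop :=
  wellFounded_lt.fix (fun v ih => ∀ u, (h : u < v) → G.Adj u v → ¬ ih u h)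

lemma memA_iff {V : Type*} [Fintype V] [LinearOrder V] (G : SimpleGraph V) (v : V) :
    memA G v ↔ ∀ u, u < v → G.Adj u v → ¬ memA G u := by
  rw [memA, WellFounded.fix_eq]

/-- Given a `(k-1)`-degenerate ordering of `G` (a linear order where every vertex has at
most `k-1` earlier neighbours), there is a partition into a set `A` (obtained greedily:
a vertex is in `A` iff it has no earlier neighbour in `A`) and `B = Aᶜ` such that
`A` is a maximal independent set, `G[B]` is `(k-2)`-degenerate, and the induced
ordering on `B` is a `(k-2)`-degenerate order. -/
theorem stmt2 {V : Type*} [Fintype V] [LinearOrder V] (k : ℕ) (hk : 2 ≤ k)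
    (G : SimpleGraph V)
    (hord : ∀ v : V, ({u : V | u < v ∧ G.Adj u v}).ncard ≤ k - 1) :
    ∃ A : Set V,
      (∀ v : V, v ∈ A ↔ ∀ u : V, u < v → G.Adj u v → u ∉ A) ∧
      Indep G A ∧
      (∀ v ∉ A, ∃ u ∈ A, G.Adj u v) ∧
      DegenerateOn G Aᶜ (k - 2) ∧
      (∀ v ∉ A, ({u : V | u ∉ A ∧ u < v ∧ G.Adj u v}).ncard ≤ k - 2) := by
  set A : Set V := {v | memA G v} with hA
  have hAiff : ∀ v : V, v ∈ A ↔ ∀ u : V, u < v → G.Adj u v → u ∉ A := fun v => memA_iff G v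
  have hindep : Indep G A := by
    intro u hu v hv hadj
    rcases lt_trichotomy u v with h | h | h
    · exact (hAiff v).mp hv u h hadj hu
    · exact G.loopless.irrefl u (h ▸ hadj)
    · exact (hAiff u).mp hu v h hadj.symm hv
  have hmax : ∀ v ∉ A, ∃ u ∈ A, u < v ∧ G.Adj u v := by
    intro v hv
    by_contra hcon
    push_neg at hcon
    exact hv ((hAiff v).mpr (fun u hu hadj huA => (hcon u huA hu) hadj))
  have hlast : ∀ v ∉ A, ({u : V | u ∉ A ∧ u < v ∧ G.Adj u v}).ncard ≤ k - 2 := by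
    intro v hv
    obtain ⟨u0, hu0A, hu0lt, hu0adj⟩ := hmax v hv
    have hsub : {u : V | u ∉ A ∧ u < v ∧ G.Adj u v} ⊆
        {u : V | u < v ∧ G.Adj u v} \ {u0} := by
      intro u hu
      exact ⟨⟨hu.2.1, hu.2.2⟩, fun h => hu.1 (h ▸ hu0A)⟩
    have hfin : ({u : V | u < v ∧ G.Adj u v}).Finite := Set.toFinite _
    have hmem : u0 ∈ {u : V | u < v ∧ G.Adj u v} := ⟨hu0lt, hu0adj⟩
    calc ({u : V | u ∉ A ∧ u < v ∧ G.Adj u v}).ncard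
        ≤ ({u : V | u < v ∧ G.Adj u v} \ {u0}).ncard :=
          Set.ncard_le_ncard hsub hfin.diff
      _ = ({u : V | u < v ∧ G.Adj u v}).ncard - 1 := by
          rw [Set.ncard_diff_singleton_of_mem hmem]
      _ ≤ (k - 1) - 1 := Nat.sub_le_sub_right (hord v) 1
      _ = k - 2 := by omega
  refine ⟨A, hAiff, hindep, fun v hv => (hmax v hv).imp (fun u hu => ⟨hu.1, hu.2.2⟩),
    ?_, hlast⟩
  intro s hsub hfin hne
  obtain ⟨v, hvs, hvmax⟩ := Set.Finite.exists_maximalFor id s hfin hne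
  refine ⟨v, hvs, ?_⟩
  have h1 : s ∩ G.neighborSet v ⊆ {u : V | u ∉ A ∧ u < v ∧ G.Adj u v} := by
    intro u ⟨hus, hadj⟩
    have hne : u ≠ v := fun h => G.loopless.irrefl v (h ▸ hadj)
    have hlt : u < v := lt_of_le_of_ne
      (le_of_not_gt (fun h => hne (le_antisymm (hvmax hus h.le) h.le))) hne
    exact ⟨hsub hus, hlt, hadj.symm⟩
  exact le_trans (Set.ncard_le_ncard h1 (Set.toFinite _)) (hlast v (hsub hvs))
end

section
/- Let k ≥ 3 and let G be a connected k-regular graph containing two non-adjacent vertices u and v such that u and v have a common neighbour in every connected component of G minus {u,v}. Then G has a k-degenerate decomposition, i.e., V(G) can be partitioned into an independent set A and a set B inducing a (k-2)-degenerate graph. -/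
open SimpleGraph Set

private lemma walk_step {V' : Type*} {H : SimpleGraph V'} {a b : V'} (p : H.Walk a b) :
    (a = b ∧ p.length = 0) ∨ ∃ c, H.Adj a c ∧ ∃ q : H.Walk c b, q.length + 1 = p.length := by
  cases p with
  | nil => exact Or.inl ⟨rfl, rfl⟩
  | cons h q => exact Or.inr ⟨_, h, q, by simp⟩

/-- If `G` is connected, `k`-regular (`k ≥ 3`) and contains a strong pair `{u,v}`
(non-adjacent vertices with a common neighbour in every component of `G \ {u,v}`),
then `G` has a `k`-degenerate decomposition. -/
theorem stmt3 {V : Type*} [Fintype V] (k : ℕ) (hk : 3 ≤ k) (G : SimpleGraph V)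
    (hconn : G.Connected)
    (hreg : ∀ v : V, (G.neighborSet v).ncard = k)
    (u v : V) (huv : u ≠ v) (hnadj : ¬ G.Adj u v)
    (hstrong : ∀ w : ({u, v}ᶜ : Set V), ∃ x : ({u, v}ᶜ : Set V),
      (G.induce ({u, v}ᶜ : Set V)).Reachable w x ∧ G.Adj u (x : V) ∧ G.Adj v (x : V)) :
    KDegenDecomp G k := by
  classical
  -- the "distance to a common neighbour" function on the complement of {u,v}
  have hgood : ∀ w : ({u, v}ᶜ : Set V), ∃ n : ℕ, ∃ x : ({u, v}ᶜ : Set V),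
      G.Adj u (x : V) ∧ G.Adj v (x : V) ∧
      ∃ p : (G.induce ({u, v}ᶜ : Set V)).Walk w x, p.length = n := by
    intro w
    obtain ⟨x, hreach, hux, hvx⟩ := hstrong w
    obtain ⟨p⟩ := hreach
    exact ⟨p.length, x, hux, hvx, p, rfl⟩
  set d : ({u, v}ᶜ : Set V) → ℕ := fun w => Nat.find (hgood w) with hd
  set dt : V → ℕ := fun x => if h : x ∈ ({u, v}ᶜ : Set V) then d ⟨x, h⟩ else 0 with hdt
  set C : ℕ := 1 + ∑ x : V, dt x with hC
  have hC1 : 1 ≤ C := by omega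
  -- the maximization
  have hpairmem : ({u, v} : Finset V) ∈ (Finset.univ : Finset (Finset V)).filter
      (fun A : Finset V => u ∈ A ∧ v ∈ A ∧ Indep G ↑A) := by
    refine Finset.mem_filter.mpr ⟨Finset.mem_univ _, by simp, by simp, ?_⟩
    intro a ha b hb hab
    simp only [Finset.coe_insert, Finset.coe_singleton, Set.mem_insert_iff,
      Set.mem_singleton_iff] at ha hb
    rcases ha with rfl | rfl <;> rcases hb with rfl | rfl
    · exact G.irrefl hab
    · exact hnadj hab
    · exact hnadj hab.symm
    · exact G.irrefl hab
  obtain ⟨A, hAmem, hmax⟩ := Finset.exists_max_image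
    ((Finset.univ : Finset (Finset V)).filter
      (fun A : Finset V => u ∈ A ∧ v ∈ A ∧ Indep G ↑A))
    (fun A : Finset V => C * A.card + ∑ a ∈ A, dt a) ⟨_, hpairmem⟩
  rw [Finset.mem_filter] at hAmem
  obtain ⟨-, huA, hvA, hindep⟩ := hAmem
  -- the key claim : no "bad set" avoiding A
  have key : ∀ s : Set V, s ⊆ (↑A : Set V)ᶜ → s.Nonempty →
      (∀ w ∈ s, ((G.neighborSet w) \ s).ncard ≤ 1) → False := by
    intro s hsA hsne hbad
    have huns : u ∉ s := fun h => (hsA h) (Finset.mem_coe.mpr huA)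
    have hvns : v ∉ s := fun h => (hsA h) (Finset.mem_coe.mpr hvA)
    have hsW : s ⊆ ({u, v} : Set V)ᶜ := by
      intro x hx
      simp only [Set.mem_compl_iff, Set.mem_insert_iff, Set.mem_singleton_iff]
      push_neg
      exact ⟨fun h => huns (h ▸ hx), fun h => hvns (h ▸ hx)⟩
    obtain ⟨w, hws, hwmin⟩ := Set.exists_min_image s dt s.toFinite hsne
    have hwW : w ∈ ({u, v} : Set V)ᶜ := hsW hws
    have hbadw := hbad w hws
    obtain ⟨x, hux, hvx, p, hp⟩ := Nat.find_spec (hgood ⟨w, hwW⟩)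
    rcases walk_step p with ⟨hxw, -⟩ | ⟨z, hadj, q, hq⟩
    · -- w is itself a common neighbour of u and v : contradiction
      subst hxw
      have hsub : ({u, v} : Set V) ⊆ G.neighborSet w \ s := by
        intro y hy
        simp only [Set.mem_insert_iff, Set.mem_singleton_iff] at hy
        rcases hy with rfl | rfl
        · exact ⟨hux.symm, huns⟩
        · exact ⟨hvx.symm, hvns⟩
      have h2 := Set.ncard_le_ncard hsub (G.neighborSet w \ s).toFinite
      rw [Set.ncard_pair huv] at h2
      omega
    · -- there is a neighbour z of w outside s, closer to the common neighbours
      have hadj' : G.Adj w (z : V) := hadj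
      have hdz : d z ≤ q.length := Nat.find_min' (hgood z) ⟨x, hux, hvx, q, rfl⟩
      have hdw : d ⟨w, hwW⟩ = q.length + 1 := by
        show Nat.find (hgood ⟨w, hwW⟩) = q.length + 1
        omega
      have hdtw : dt w = q.length + 1 := by
        rw [hdt]; simp only [dif_pos hwW]; exact hdw
      have hdtz : dt (z : V) = d z := by
        rw [hdt]; simp only [dif_pos z.2, Subtype.coe_eta]
      have hzs : (z : V) ∉ s := by
        intro hzsmem
        have := hwmin _ hzsmem
        omega
      have hzuvu : (z : V) ≠ u := by
        have := z.2; simp only [Set.mem_compl_iff, Set.mem_insert_iff,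
          Set.mem_singleton_iff] at this; push_neg at this; exact this.1
      have hzuvv : (z : V) ≠ v := by
        have := z.2; simp only [Set.mem_compl_iff, Set.mem_insert_iff,
          Set.mem_singleton_iff] at this; push_neg at this; exact this.2
      have hzmem : (z : V) ∈ G.neighborSet w \ s := ⟨hadj', hzs⟩
      have huni : ∀ y, G.Adj w y → y ∉ s → y = (z : V) := by
        intro y hy hys
        by_contra hne
        have hsub : ({y, (z : V)} : Set V) ⊆ G.neighborSet w \ s := by
          intro t ht
          rcases ht with rfl | ht
          · exact ⟨hy, hys⟩
          · have : t = (z : V) := ht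
            subst this; exact hzmem
        have h2 := Set.ncard_le_ncard hsub (G.neighborSet w \ s).toFinite
        rw [Set.ncard_pair hne] at h2
        omega
      have hwA : w ∉ A := fun h => (hsA hws) (Finset.mem_coe.mpr h)
      by_cases hzA : (z : V) ∈ A
      · -- swap z with w
        have hwnotin : w ∉ A.erase (z : V) := fun h => hwA (Finset.mem_of_mem_erase h)
        have hmem : insert w (A.erase (z : V)) ∈ (Finset.univ : Finset (Finset V)).filter
            (fun A : Finset V => u ∈ A ∧ v ∈ A ∧ Indep G ↑A) := by
          refine Finset.mem_filter.mpr ⟨Finset.mem_univ _, ?_, ?_, ?_⟩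
          · exact Finset.mem_insert_of_mem (Finset.mem_erase.mpr ⟨Ne.symm hzuvu, huA⟩)
          · exact Finset.mem_insert_of_mem (Finset.mem_erase.mpr ⟨Ne.symm hzuvv, hvA⟩)
          · intro a ha b hb hab
            rw [Finset.mem_coe, Finset.mem_insert] at ha hb
            rcases ha with rfl | ha <;> rcases hb with rfl | hb
            · exact G.irrefl hab
            · have hbA : b ∈ A := Finset.mem_of_mem_erase hb
              have hbs : b ∉ s := fun h => (hsA h) (Finset.mem_coe.mpr hbA)
              exact (Finset.mem_erase.mp hb).1 (huni b hab hbs)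
            · have haA : a ∈ A := Finset.mem_of_mem_erase ha
              have has : a ∉ s := fun h => (hsA h) (Finset.mem_coe.mpr haA)
              exact (Finset.mem_erase.mp ha).1 (huni a hab.symm has)
            · exact hindep a (Finset.mem_coe.mpr (Finset.mem_of_mem_erase ha))
                b (Finset.mem_coe.mpr (Finset.mem_of_mem_erase hb)) hab
        have hle : C * (insert w (A.erase (z : V))).card
            + ∑ a ∈ insert w (A.erase (z : V)), dt a
            ≤ C * A.card + ∑ a ∈ A, dt a := hmax _ hmem
        have hcard : (insert w (A.erase (z : V))).card = A.card := by
          rw [Finset.card_insert_of_notMem hwnotin, Finset.card_erase_of_mem hzA]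
          have : 0 < A.card := Finset.card_pos.mpr ⟨_, hzA⟩
          omega
        have hsum1 : ∑ a ∈ insert w (A.erase (z : V)), dt a
            = dt w + ∑ a ∈ A.erase (z : V), dt a := Finset.sum_insert hwnotin
        have hsum2 : ∑ a ∈ A.erase (z : V), dt a + dt (z : V) = ∑ a ∈ A, dt a :=
          Finset.sum_erase_add A dt hzA
        rw [hcard, hsum1] at hle
        omega
      · -- enlarge A by w
        have hmem : insert w A ∈ (Finset.univ : Finset (Finset V)).filter
            (fun A : Finset V => u ∈ A ∧ v ∈ A ∧ Indep G ↑A) := by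
          refine Finset.mem_filter.mpr ⟨Finset.mem_univ _, Finset.mem_insert_of_mem huA,
            Finset.mem_insert_of_mem hvA, ?_⟩
          intro a ha b hb hab
          rw [Finset.mem_coe, Finset.mem_insert] at ha hb
          rcases ha with rfl | ha <;> rcases hb with rfl | hb
          · exact G.irrefl hab
          · have hbs : b ∉ s := fun h => (hsA h) (Finset.mem_coe.mpr hb)
            exact hzA ((huni b hab hbs) ▸ hb)
          · have has : a ∉ s := fun h => (hsA h) (Finset.mem_coe.mpr ha)
            exact hzA ((huni a hab.symm has) ▸ ha)
          · exact hindep a (Finset.mem_coe.mpr ha) b (Finset.mem_coe.mpr hb) hab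
        have hle : C * (insert w A).card + ∑ a ∈ insert w A, dt a
            ≤ C * A.card + ∑ a ∈ A, dt a := hmax _ hmem
        have hcard : (insert w A).card = A.card + 1 := Finset.card_insert_of_notMem hwA
        have hsum1 : ∑ a ∈ insert w A, dt a = dt w + ∑ a ∈ A, dt a :=
          Finset.sum_insert hwA
        rw [hcard, hsum1, Nat.mul_add, Nat.mul_one] at hle
        omega
  -- assemble the decomposition
  refine ⟨↑A, (↑A : Set V)ᶜ, Set.union_compl_self _, disjoint_compl_right, hindep, ?_⟩
  intro s hs hfin hsne
  by_contra hcon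
  push_neg at hcon
  refine key s hs hsne ?_
  intro w hw
  have h1 := hcon w hw
  have hsplit : (G.neighborSet w ∩ s).ncard + (G.neighborSet w \ s).ncard = k := by
    rw [Set.ncard_inter_add_ncard_diff_eq_ncard _ _ (Set.toFinite _), hreg w]
  rw [Set.inter_comm] at h1
  omega
end

section
/- Let k ≥ 3 and let G be a connected k-regular graph containing a set C of k+1 vertices that induce a complete graph minus one edge uv. Then G has a k-degenerate decomposition. -/
open SimpleGraph Set

section AuxLemmas

variable {V : Type*}

/-- Two-exclusion counting lemma. -/
lemma excl2 [Fintype V] {G : SimpleGraph V} {x a z : V} {k : ℕ} {T : Set V}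
    (hk : (G.neighborSet x).ncard = k)
    (ha : a ∈ G.neighborSet x) (hz : z ∈ G.neighborSet x) (hne : a ≠ z)
    (hT : T ⊆ G.neighborSet x) (haT : a ∉ T) (hzT : z ∉ T) : T.ncard ≤ k - 2 := by
  have hsub : T ⊆ G.neighborSet x \ {a, z} := by
    intro y hy
    refine ⟨hT hy, ?_⟩
    rintro (rfl | rfl)
    · exact haT hy
    · exact hzT hy
  have hpair : ({a, z} : Set V) ⊆ G.neighborSet x := by
    rintro y (rfl | rfl) <;> assumption
  have h1 := Set.ncard_le_ncard hsub (Set.toFinite _)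
  rwa [Set.ncard_diff hpair (Set.toFinite _), Set.ncard_pair hne, hk] at h1

/-- Singleton bound counting lemma. -/
lemma excl1 {w : V} {T : Set V} {k : ℕ} (hk : 3 ≤ k) (hT : T ⊆ {w}) : T.ncard ≤ k - 2 := by
  have h1 := Set.ncard_le_ncard hT (Set.finite_singleton w)
  simp only [Set.ncard_singleton] at h1
  omega

/-- A ranking function with bounded back-neighbourhoods witnesses degeneracy. -/
lemma degenOn_of_rank [Fintype V] (G : SimpleGraph V) (B : Set V) (d : ℕ) (ρ : V → ℕ)
    (h : ∀ x ∈ B, (G.neighborSet x ∩ B ∩ {y | ρ y ≤ ρ x}).ncard ≤ d) :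
    DegenerateOn G B d := by
  intro s hsB hfin hne
  obtain ⟨x, hxs, hmax⟩ := Set.Finite.exists_maximalFor ρ s hfin hne
  refine ⟨x, hxs, ?_⟩
  refine le_trans (Set.ncard_le_ncard ?_ (Set.toFinite _)) (h x (hsB hxs))
  rintro y ⟨hys, hyN⟩
  refine ⟨⟨hyN, hsB hys⟩, ?_⟩
  rcases le_total (ρ y) (ρ x) with h' | h'
  · exact h'
  · exact hmax hys h'

/-- Greedy independent set along an ordering `κ`. -/
noncomputable def gr (G : SimpleGraph V) (P : V → Prop) (κ : V → ℕ) (x : V) : Prop :=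
  P x ∧ ∀ y, G.Adj x y → κ y < κ x → ¬ gr G P κ y
termination_by κ x

lemma gr_iff (G : SimpleGraph V) (P : V → Prop) (κ : V → ℕ) (x : V) :
    gr G P κ x ↔ P x ∧ ∀ y, G.Adj x y → κ y < κ x → ¬ gr G P κ y := by
  rw [gr]

lemma gr_P {G : SimpleGraph V} {P : V → Prop} {κ : V → ℕ} {x : V} (h : gr G P κ x) : P x :=
  ((gr_iff G P κ x).mp h).1

lemma gr_indep {G : SimpleGraph V} {P : V → Prop} {κ : V → ℕ}
    (hinj : ∀ a b, κ a = κ b → a = b) {x y : V}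
    (hx : gr G P κ x) (hy : gr G P κ y) (hadj : G.Adj x y) : False := by
  rcases lt_trichotomy (κ x) (κ y) with h | h | h
  · exact ((gr_iff G P κ y).mp hy).2 x hadj.symm h hx
  · exact G.ne_of_adj hadj (hinj _ _ h)
  · exact ((gr_iff G P κ x).mp hx).2 y hadj h hy

lemma gr_cover {G : SimpleGraph V} {P : V → Prop} {κ : V → ℕ} {x : V}
    (hP : P x) (h : ¬ gr G P κ x) : ∃ y, G.Adj x y ∧ κ y < κ x ∧ gr G P κ y := by
  rw [gr_iff] at h
  push_neg at h
  exact h hP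

end AuxLemmas


/-- If `G` is connected, `k`-regular (`k ≥ 3`) and contains a set `C` of `k+1` vertices
inducing a complete graph minus one edge `uv`, then `G` has a `k`-degenerate
decomposition. -/
theorem stmt4 {V : Type*} [Fintype V] (k : ℕ) (hk : 3 ≤ k) (G : SimpleGraph V)
    (hconn : G.Connected)
    (hreg : ∀ v : V, (G.neighborSet v).ncard = k)
    (C : Set V) (u v : V) (hu : u ∈ C) (hv : v ∈ C) (huv : u ≠ v)
    (hcard : C.ncard = k + 1)
    (hnadj : ¬ G.Adj u v)
    (hclique : ∀ a ∈ C, ∀ b ∈ C, a ≠ b → ¬ (a = u ∧ b = v) → ¬ (a = v ∧ b = u) →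
      G.Adj a b) :
    KDegenDecomp G k := by
  classical
  set n := Fintype.card V with hn
  set D : Set V := C \ {u, v} with hD
  have hDC : D ⊆ C := Set.diff_subset
  have hDmem : ∀ d ∈ D, d ∈ C ∧ d ≠ u ∧ d ≠ v := by
    intro d hd
    refine ⟨hd.1, ?_, ?_⟩ <;> · intro h; exact hd.2 (by simp [h])
  have hCmem : ∀ x ∈ C, x ∈ D ∨ x = u ∨ x = v := by
    intro x hx
    by_cases h : x = u ∨ x = v
    · exact Or.inr h
    · push_neg at h
      exact Or.inl ⟨hx, by simp [h.1, h.2]⟩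
  have hpairC : ({u, v} : Set V) ⊆ C := by rintro y (rfl | rfl) <;> assumption
  have hDcard : D.ncard = k - 1 := by
    rw [hD, Set.ncard_diff hpairC (Set.toFinite _), Set.ncard_pair huv, hcard]
    omega
  -- every vertex of D is adjacent to every other vertex of C
  have hadjDC : ∀ d ∈ D, ∀ c ∈ C, c ≠ d → G.Adj d c := by
    intro d hd c hc hne
    obtain ⟨hdC, hdu, hdv⟩ := hDmem d hd
    exact hclique d hdC c hc (fun h => hne h.symm) (fun h => hdu h.1) (fun h => hdv h.1)
  -- neighborhood of a D-vertex
  have hNd : ∀ d ∈ D, G.neighborSet d = C \ {d} := by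
    intro d hd
    have hsub : C \ {d} ⊆ G.neighborSet d := by
      intro c hc
      exact hadjDC d hd c hc.1 hc.2
    have hle : (G.neighborSet d).ncard ≤ (C \ {d}).ncard := by
      rw [hreg d, Set.ncard_diff (by simp [(hDmem d hd).1]) (Set.toFinite _), hcard,
        Set.ncard_singleton]
      omega
    exact (Set.eq_of_subset_of_ncard_le hsub hle (Set.toFinite _)).symm
  have hadjxD : ∀ x, x ∉ C → ∀ d ∈ D, ¬ G.Adj x d := by
    intro x hx d hd hadj
    have : x ∈ G.neighborSet d := hadj.symm
    rw [hNd d hd] at this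
    exact hx this.1
  -- the private neighbours u' and v'
  have hNuD : D ⊆ G.neighborSet u := by
    intro d hd
    exact (hadjDC d hd u hu (fun h => (hDmem d hd).2.1 h.symm)).symm
  have hNvD : D ⊆ G.neighborSet v := by
    intro d hd
    exact (hadjDC d hd v hv (fun h => (hDmem d hd).2.2 h.symm)).symm
  have hpriv : ∀ w : V, w = u ∨ w = v → ∃ w' : V,
      G.Adj w w' ∧ w' ∉ C ∧ (∀ x, G.Adj w x → x ∉ D → x = w') := by
    intro w hw
    have hwC : w ∈ C := by rcases hw with rfl | rfl <;> assumption
    have hDN : D ⊆ G.neighborSet w := by rcases hw with rfl | rfl <;> assumption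
    have hone : (G.neighborSet w \ D).ncard = 1 := by
      rw [Set.ncard_diff hDN (Set.toFinite _), hreg w, hDcard]
      omega
    obtain ⟨w', hw'⟩ := Set.ncard_eq_one.mp hone
    have hw'mem : w' ∈ G.neighborSet w \ D := by rw [hw']; rfl
    have hadjw : G.Adj w w' := hw'mem.1
    refine ⟨w', hadjw, ?_, ?_⟩
    · intro hw'C
      rcases hCmem w' hw'C with h | h | h
      · exact hw'mem.2 h
      · subst h
        rcases hw with rfl | rfl
        · exact G.ne_of_adj hadjw rfl
        · exact hnadj hadjw.symm
      · subst h
        rcases hw with rfl | rfl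
        · exact hnadj hadjw
        · exact G.ne_of_adj hadjw rfl
    · intro x hx hxD
      have : x ∈ G.neighborSet w \ D := ⟨hx, hxD⟩
      rw [hw'] at this
      exact this
  obtain ⟨u', hadjuu', hu'C, hu'uniq⟩ := hpriv u (Or.inl rfl)
  obtain ⟨v', hadjvv', hv'C, hv'uniq⟩ := hpriv v (Or.inr rfl)
  have hNu : G.neighborSet u = D ∪ {u'} := by
    ext y
    constructor
    · intro hy
      by_cases h : y ∈ D
      · exact Or.inl h
      · exact Or.inr (hu'uniq y hy h)
    · rintro (h | rfl)
      · exact hNuD h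
      · exact hadjuu'
  have hNv : G.neighborSet v = D ∪ {v'} := by
    ext y
    constructor
    · intro hy
      by_cases h : y ∈ D
      · exact Or.inl h
      · exact Or.inr (hv'uniq y hy h)
    · rintro (h | rfl)
      · exact hNvD h
      · exact hadjvv'
  -- distance machinery
  have hreach : ∀ a b : V, G.Reachable a b := fun a b => hconn.preconnected a b
  have hdlt : ∀ a b : V, G.dist a b < n := by
    intro a b
    obtain ⟨p, hp⟩ := (hreach a b).exists_walk_length_eq_dist
    have h1 : G.dist a b ≤ p.bypass.length := SimpleGraph.dist_le _
    have h2 : p.bypass.length < n := p.bypass_isPath.length_lt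
    omega
  have hstep : ∀ a b : V, 1 ≤ G.dist a b → ∃ z, G.Adj a z ∧ G.dist z b + 1 = G.dist a b := by
    intro a b h1
    obtain ⟨p, hp⟩ := (hreach a b).exists_walk_length_eq_dist
    cases p with
    | nil => simp at h1
    | cons h q =>
      rename_i c
      refine ⟨c, h, ?_⟩
      have hq := SimpleGraph.dist_le q
      have hlen : q.length + 1 = G.dist a b := by
        rw [← hp]; simp
      have htri : G.dist a b ≤ G.dist a c + G.dist c b := hconn.dist_triangle
      have hd1 : G.dist a c ≤ 1 := by
        have := SimpleGraph.dist_le h.toWalk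
        simpa using this
      omega
  have hdist0 : ∀ a b : V, G.dist a b = 0 → a = b := by
    intro a b h
    exact (hreach a b).dist_eq_zero_iff.mp h
  set m : V → ℕ := fun x => min (G.dist x u) (G.dist x v) with hm
  have hmlt : ∀ x, m x < n := fun x => lt_of_le_of_lt (min_le_left _ _) (hdlt x u)
  have hm1 : ∀ x, x ∉ C → 1 ≤ m x := by
    intro x hx
    by_contra h
    push_neg at h
    have h0 : m x = 0 := by omega
    have := min_le_left (G.dist x u) (G.dist x v)
    have := min_le_right (G.dist x u) (G.dist x v)
    rw [hm] at h0
    simp only at h0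
    rcases Nat.min_eq_zero_iff.mp h0 with h' | h'
    · exact hx (hdist0 x u h' ▸ hu)
    · exact hx (hdist0 x v h' ▸ hv)
  -- a vertex outside C adjacent to u or v must be u' or v'
  have hadjxu : ∀ x, x ∉ C → G.Adj x u → x = u' := by
    intro x hx hadj
    exact hu'uniq x hadj.symm (fun hd => hx (hDC hd))
  have hadjxv : ∀ x, x ∉ C → G.Adj x v → x = v' := by
    intro x hx hadj
    exact hv'uniq x hadj.symm (fun hd => hx (hDC hd))
  have hm2 : ∀ x, x ∉ C → x ≠ u' → x ≠ v' → 2 ≤ m x := by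
    intro x hx hxu' hxv'
    have h1 := hm1 x hx
    by_contra h
    push_neg at h
    have h0 : m x = 1 := by omega
    have hle1 : min (G.dist x u) (G.dist x v) = 1 := h0
    have hcase : G.dist x u = 1 ∨ G.dist x v = 1 := by
      rcases le_total (G.dist x u) (G.dist x v) with h' | h'
      · exact Or.inl (by rw [min_eq_left h'] at hle1; exact hle1)
      · exact Or.inr (by rw [min_eq_right h'] at hle1; exact hle1)
    rcases hcase with h' | h'
    · obtain ⟨z, hz, hz0⟩ := hstep x u (by omega)
      have : z = u := hdist0 z u (by omega)
      subst this
      exact hxu' (hadjxu x hx hz)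
    · obtain ⟨z, hz, hz0⟩ := hstep x v (by omega)
      have : z = v := hdist0 z v (by omega)
      subst this
      exact hxv' (hadjxv x hx hz)
  -- the descent step for m
  have hmx0 : ∀ x, m x = min (G.dist x u) (G.dist x v) := fun x => rfl
  have hzstep : ∀ x, x ∉ C → 2 ≤ m x → ∃ z, G.Adj x z ∧ z ∉ C ∧ m z + 1 = m x := by
    intro x hx hx2
    have hdxu : m x ≤ G.dist x u := min_le_left _ _
    have hdxv : m x ≤ G.dist x v := min_le_right _ _
    have hcase : m x = G.dist x u ∨ m x = G.dist x v := by
      rw [hmx0 x]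
      rcases le_total (G.dist x u) (G.dist x v) with h' | h'
      · exact Or.inl (min_eq_left h')
      · exact Or.inr (min_eq_right h')
    rcases hcase with hmx | hmx
    · obtain ⟨z, hzadj, hz0⟩ := hstep x u (by omega)
      have hd1 : G.dist x z ≤ 1 := by
        have := SimpleGraph.dist_le hzadj.toWalk
        simpa using this
      have htri : G.dist x v ≤ G.dist x z + G.dist z v := hconn.dist_triangle
      have hzu : G.dist z u + 1 = m x := by omega
      have hzv : m x ≤ G.dist z v + 1 := by omega
      have hzC : z ∉ C := by
        intro hzC
        rcases hCmem z hzC with hd | h' | h'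
        · exact hadjxD x hx z hd hzadj
        · have : G.dist z u = 0 := by rw [h']; simp [SimpleGraph.dist_self]
          omega
        · have : G.dist z v = 0 := by rw [h']; simp [SimpleGraph.dist_self]
          omega
      refine ⟨z, hzadj, hzC, ?_⟩
      have h1 : min (G.dist z u) (G.dist z v) ≤ G.dist z u := min_le_left _ _
      have h2 : m x - 1 ≤ min (G.dist z u) (G.dist z v) := le_min (by omega) (by omega)
      rw [hmx0 z]
      omega
    · obtain ⟨z, hzadj, hz0⟩ := hstep x v (by omega)
      have hd1 : G.dist x z ≤ 1 := by
        have := SimpleGraph.dist_le hzadj.toWalk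
        simpa using this
      have htri : G.dist x u ≤ G.dist x z + G.dist z u := hconn.dist_triangle
      have hzv : G.dist z v + 1 = m x := by omega
      have hzu : m x ≤ G.dist z u + 1 := by omega
      have hzC : z ∉ C := by
        intro hzC
        rcases hCmem z hzC with hd | h' | h'
        · exact hadjxD x hx z hd hzadj
        · have : G.dist z u = 0 := by rw [h']; simp [SimpleGraph.dist_self]
          omega
        · have : G.dist z v = 0 := by rw [h']; simp [SimpleGraph.dist_self]
          omega
      refine ⟨z, hzadj, hzC, ?_⟩
      have h1 : min (G.dist z u) (G.dist z v) ≤ G.dist z v := min_le_right _ _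
      have h2 : m x - 1 ≤ min (G.dist z u) (G.dist z v) := le_min (by omega) (by omega)
      rw [hmx0 z]
      omega
  -- ordering function for the greedy algorithm
  set f : V → ℕ := fun x => (Fintype.equivFin V x : ℕ) with hf
  have hfn : ∀ x, f x < n := fun x => (Fintype.equivFin V x).isLt
  have hfinj : ∀ a b : V, f a = f b → a = b := by
    intro a b h
    exact (Fintype.equivFin V).injective (Fin.val_injective h)
  set κ : V → ℕ := fun x => (n - m x) * n + f x with hκdef
  have hκval : ∀ x, κ x = (n - m x) * n + f x := fun x => rfl
  have hκρ : ∀ a x, κ a < κ x → n - m a ≤ n - m x := by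
    intro a x h
    by_contra hcon
    push_neg at hcon
    have h1 : (n - m x + 1) * n ≤ (n - m a) * n := Nat.mul_le_mul_right n (by omega)
    have h2 : (n - m x + 1) * n = (n - m x) * n + n := by ring
    have h3 := hfn a
    have h4 := hfn x
    rw [hκval a, hκval x] at h
    omega
  have hκinj : ∀ a b : V, κ a = κ b → a = b := by
    intro a b h
    have ha := hfn a
    have hb := hfn b
    have h1 : κ a % n = f a := by
      rw [hκval a, Nat.add_comm, Nat.add_mul_mod_self_right, Nat.mod_eq_of_lt ha]
    have h2 : κ b % n = f b := by
      rw [hκval b, Nat.add_comm, Nat.add_mul_mod_self_right, Nat.mod_eq_of_lt hb]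
    exact hfinj a b (by rw [← h1, ← h2, h])
  set P : V → Prop := fun x => x ∉ C ∧ x ≠ u' ∧ x ≠ v' with hPdef
  have hPiff : ∀ x, P x ↔ (x ∉ C ∧ x ≠ u' ∧ x ≠ v') := fun x => Iff.rfl
  have hgrP0 : ∀ x, gr G P κ x → P x := fun x h => gr_P h
  have hgrP : ∀ x, gr G P κ x → x ∉ C ∧ x ≠ u' ∧ x ≠ v' := fun x h => (hPiff x).mp (hgrP0 x h)
  -- the generic R-vertex bound
  have hgen : ∀ (A : Set V) (ρ : V → ℕ),
      ({x | gr G P κ x} ⊆ A) →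
      (∀ y, y ∉ C → y ≠ u' → y ≠ v' → ρ y = n - m y) →
      (n < ρ u') → (n < ρ v') →
      ∀ x, x ∉ C → x ≠ u' → x ≠ v' → x ∉ A →
        (G.neighborSet x ∩ Aᶜ ∩ {y | ρ y ≤ ρ x}).ncard ≤ k - 2 := by
    intro A ρ hAf hρR hρu' hρv' x hxC hxu' hxv' hxA
    have hPx : P x := ⟨hxC, hxu', hxv'⟩
    have hngr : ¬ gr G P κ x := fun h => hxA (hAf h)
    obtain ⟨a, haAdj, haκ, hagr⟩ := gr_cover hPx hngr
    obtain ⟨z, hzAdj, hzC, hzm⟩ := hzstep x hxC (hm2 x hxC hxu' hxv')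
    obtain ⟨haC, hau', hav'⟩ := hgrP a hagr
    have hρa : ρ a = n - m a := hρR a haC hau' hav'
    have hρx : ρ x = n - m x := hρR x hxC hxu' hxv'
    have hma : n - m a ≤ n - m x := hκρ a x haκ
    have hmx2 : 2 ≤ m x := hm2 x hxC hxu' hxv'
    have hmxn : m x < n := hmlt x
    have hρxz : ρ x < ρ z := by
      by_cases h1 : z = u'
      · rw [h1]; omega
      by_cases h2 : z = v'
      · rw [h2]; omega
      rw [hρR z hzC h1 h2, hρx]
      omega
    have hane : a ≠ z := by
      intro h
      subst h
      have hmzn : m x ≤ n := le_of_lt (hmlt x)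
      omega
    refine excl2 (hreg x) haAdj hzAdj hane (fun y hy => hy.1.1) ?_ ?_
    · intro hmem
      exact hmem.1.2 (hAf hagr)
    · intro hmem
      have h5 : ρ z ≤ ρ x := hmem.2
      omega
  -- final assembly helper
  have hfinish : ∀ (A : Set V) (ρ : V → ℕ), Indep G A →
      (∀ x ∈ Aᶜ, (G.neighborSet x ∩ Aᶜ ∩ {y | ρ y ≤ ρ x}).ncard ≤ k - 2) →
      KDegenDecomp G k := by
    intro A ρ hind hcount
    exact ⟨A, Aᶜ, Set.union_compl_self A, disjoint_compl_right, hind,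
      degenOn_of_rank G Aᶜ (k - 2) ρ hcount⟩
  -- a vertex of D
  have hDne : D.Nonempty := by
    apply Set.nonempty_of_ncard_ne_zero
    rw [hDcard]
    omega
  obtain ⟨d₂, hd₂D⟩ := hDne
  have hd₂C : d₂ ∈ C := hDC hd₂D
  have hd₂adjC : ∀ p, G.Adj d₂ p → p ∈ C := by
    intro p h
    have hp : p ∈ G.neighborSet d₂ := h
    rw [hNd d₂ hd₂D] at hp
    exact hp.1
  -- independence helpers
  have hAfu : ∀ a, gr G P κ a → ¬ G.Adj u a := by
    intro a ha hadj
    obtain ⟨haC, hau', _⟩ := hgrP a ha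
    exact hau' (hu'uniq a hadj (fun hd => haC (hDC hd)))
  have hAfv : ∀ a, gr G P κ a → ¬ G.Adj v a := by
    intro a ha hadj
    obtain ⟨haC, _, hav'⟩ := hgrP a ha
    exact hav' (hv'uniq a hadj (fun hd => haC (hDC hd)))
  have hAfd₂ : ∀ a, gr G P κ a → ¬ G.Adj d₂ a := by
    intro a ha hadj
    exact (hgrP a ha).1 (hd₂adjC a hadj)
  have huu' : u ≠ u' := fun h => hu'C (h ▸ hu)
  have huv' : u ≠ v' := fun h => hv'C (h ▸ hu)
  have hvu' : v ≠ u' := fun h => hu'C (h ▸ hv)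
  have hvv' : v ≠ v' := fun h => hv'C (h ▸ hv)
  have hd₂u : d₂ ≠ u := (hDmem d₂ hd₂D).2.1
  have hd₂v : d₂ ≠ v := (hDmem d₂ hd₂D).2.2
  have hd₂u' : d₂ ≠ u' := fun h => hu'C (h ▸ hd₂C)
  have hd₂v' : d₂ ≠ v' := fun h => hv'C (h ▸ hd₂C)
  by_cases h1 : u' = v'
  · -- CASE I : u' = v'
    set A : Set V := {x | gr G P κ x} ∪ {u, v} with hA
    set ρ : V → ℕ := fun y => if y = u' then n + 1 else if y ∈ C then n + 10 else n - m y
      with hρ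
    have hρu' : ρ u' = n + 1 := by rw [hρ]; simp
    have hρR : ∀ y, y ∉ C → y ≠ u' → y ≠ v' → ρ y = n - m y := by
      intro y hyC hyu' _
      rw [hρ]
      simp only
      rw [if_neg hyu', if_neg hyC]
    refine hfinish A ρ ?_ ?_
    · -- independence
      rintro p hp q hq hadj
      rcases hp with hp | hp
      · rcases hq with hq | hq
        · exact gr_indep hκinj hp hq hadj
        · rcases hq with rfl | rfl
          · exact hAfu p hp hadj.symm
          · exact hAfv p hp hadj.symm
      · rcases hq with hq | hq
        · rcases hp with rfl | rfl
          · exact hAfu q hq hadj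
          · exact hAfv q hq hadj
        · rcases hp with rfl | rfl <;> rcases hq with rfl | rfl
          · exact G.irrefl hadj
          · exact hnadj hadj
          · exact hnadj hadj.symm
          · exact G.irrefl hadj
    · -- counting
      intro x hxA
      by_cases hxC : x ∈ C
      · have hxD : x ∈ D := by
          rcases hCmem x hxC with h | rfl | rfl
          · exact h
          · exact absurd (Or.inr (Or.inl rfl)) hxA
          · exact absurd (Or.inr (Or.inr rfl)) hxA
        refine excl2 (hreg x) ?_ ?_ huv (fun y hy => hy.1.1) ?_ ?_
        · exact hadjDC x hxD u hu (fun h => (hDmem x hxD).2.1 h.symm)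
        · exact hadjDC x hxD v hv (fun h => (hDmem x hxD).2.2 h.symm)
        · rintro ⟨⟨-, hmem⟩, -⟩
          exact hmem (Or.inr (Or.inl rfl))
        · rintro ⟨⟨-, hmem⟩, -⟩
          exact hmem (Or.inr (Or.inr rfl))
      · by_cases hxu' : x = u'
        · rw [hxu']
          refine excl2 (hreg u') ?_ ?_ huv (fun y hy => hy.1.1) ?_ ?_
          · exact hadjuu'.symm
          · have h2 := hadjvv'
            rw [← h1] at h2
            exact h2.symm
          · rintro ⟨⟨-, hmem⟩, -⟩
            exact hmem (Or.inr (Or.inl rfl))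
          · rintro ⟨⟨-, hmem⟩, -⟩
            exact hmem (Or.inr (Or.inr rfl))
        · by_cases hxv' : x = v'
          · exact absurd (hxv'.trans h1.symm) hxu'
          · exact hgen A ρ (fun a ha => Or.inl ha) hρR (by omega) (by rw [← h1]; omega)
              x hxC hxu' hxv' hxA
  have hv'u' : v' ≠ u' := fun h => h1 h.symm
  by_cases hcv : ∃ a, G.Adj v' a ∧ gr G P κ a
  · by_cases hcu : (∃ a, G.Adj u' a ∧ gr G P κ a) ∨ G.Adj u' v'
    · -- CASE II
      set A : Set V := {x | gr G P κ x} ∪ {u, v} with hA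
      set ρ : V → ℕ := fun y => if y = u' then n + 1 else if y = v' then n + 2
        else if y ∈ C then n + 10 else n - m y with hρ
      have hρu' : ρ u' = n + 1 := by rw [hρ]; simp
      have hρv' : ρ v' = n + 2 := by rw [hρ]; simp [hv'u']
      have hρR : ∀ y, y ∉ C → y ≠ u' → y ≠ v' → ρ y = n - m y := by
        intro y hyC hyu' hyv'
        rw [hρ]
        simp only
        rw [if_neg hyu', if_neg hyv', if_neg hyC]
      refine hfinish A ρ ?_ ?_
      · rintro p hp q hq hadj
        rcases hp with hp | hp
        · rcases hq with hq | hq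
          · exact gr_indep hκinj hp hq hadj
          · rcases hq with rfl | rfl
            · exact hAfu p hp hadj.symm
            · exact hAfv p hp hadj.symm
        · rcases hq with hq | hq
          · rcases hp with rfl | rfl
            · exact hAfu q hq hadj
            · exact hAfv q hq hadj
          · rcases hp with rfl | rfl <;> rcases hq with rfl | rfl
            · exact G.irrefl hadj
            · exact hnadj hadj
            · exact hnadj hadj.symm
            · exact G.irrefl hadj
      · intro x hxA
        by_cases hxC : x ∈ C
        · have hxD : x ∈ D := by
            rcases hCmem x hxC with h | rfl | rfl
            · exact h
            · exact absurd (Or.inr (Or.inl rfl)) hxA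
            · exact absurd (Or.inr (Or.inr rfl)) hxA
          refine excl2 (hreg x) ?_ ?_ huv (fun y hy => hy.1.1) ?_ ?_
          · exact hadjDC x hxD u hu (fun h => (hDmem x hxD).2.1 h.symm)
          · exact hadjDC x hxD v hv (fun h => (hDmem x hxD).2.2 h.symm)
          · rintro ⟨⟨-, hmem⟩, -⟩
            exact hmem (Or.inr (Or.inl rfl))
          · rintro ⟨⟨-, hmem⟩, -⟩
            exact hmem (Or.inr (Or.inr rfl))
        · by_cases hxu' : x = u'
          · rw [hxu']
            rcases hcu with ⟨a2, ha2, ha2gr⟩ | hadj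
            · refine excl2 (hreg u') hadjuu'.symm ha2
                (fun h => (hgrP a2 ha2gr).1 (h ▸ hu)) (fun y hy => hy.1.1) ?_ ?_
              · rintro ⟨⟨-, hmem⟩, -⟩
                exact hmem (Or.inr (Or.inl rfl))
              · rintro ⟨⟨-, hmem⟩, -⟩
                exact hmem (Or.inl ha2gr)
            · refine excl2 (hreg u') hadjuu'.symm hadj huv' (fun y hy => hy.1.1) ?_ ?_
              · rintro ⟨⟨-, hmem⟩, -⟩
                exact hmem (Or.inr (Or.inl rfl))
              · rintro ⟨⟨-, -⟩, hyρ⟩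
                have h5 : ρ v' ≤ ρ u' := hyρ
                rw [hρu', hρv'] at h5
                omega
          · by_cases hxv' : x = v'
            · rw [hxv']
              obtain ⟨a3, ha3, ha3gr⟩ := hcv
              refine excl2 (hreg v') hadjvv'.symm ha3
                (fun h => (hgrP a3 ha3gr).1 (h ▸ hv)) (fun y hy => hy.1.1) ?_ ?_
              · rintro ⟨⟨-, hmem⟩, -⟩
                exact hmem (Or.inr (Or.inr rfl))
              · rintro ⟨⟨-, hmem⟩, -⟩
                exact hmem (Or.inl ha3gr)
            · exact hgen A ρ (fun a ha => Or.inl ha) hρR (by omega) (by omega)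
                x hxC hxu' hxv' hxA
    · -- CASE IV
      push_neg at hcu
      obtain ⟨hncu, hnuv'⟩ := hcu
      set A : Set V := {x | gr G P κ x} ∪ {u', d₂} with hA
      set ρ : V → ℕ := fun y => if y = u' then n + 1 else if y = v' then n + 2
        else if y = u then n + 30 else if y = v then n + 10
        else if y ∈ C then n + 20 else n - m y with hρ
      have hρu' : ρ u' = n + 1 := by rw [hρ]; simp
      have hρv' : ρ v' = n + 2 := by rw [hρ]; simp [hv'u']
      have hρu : ρ u = n + 30 := by rw [hρ]; simp [huu', huv']
      have hρv : ρ v = n + 10 := by rw [hρ]; simp [hvu', hvv', huv.symm]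
      have hρD : ∀ y ∈ D, ρ y = n + 20 := by
        intro y hy
        obtain ⟨hyC, hyu, hyv⟩ := hDmem y hy
        have hyu' : y ≠ u' := fun h => hu'C (h ▸ hyC)
        have hyv' : y ≠ v' := fun h => hv'C (h ▸ hyC)
        rw [hρ]
        simp only
        rw [if_neg hyu', if_neg hyv', if_neg hyu, if_neg hyv, if_pos hyC]
      have hρR : ∀ y, y ∉ C → y ≠ u' → y ≠ v' → ρ y = n - m y := by
        intro y hyC hyu' hyv'
        have hyu : y ≠ u := fun h => hyC (h ▸ hu)
        have hyv : y ≠ v := fun h => hyC (h ▸ hv)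
        rw [hρ]
        simp only
        rw [if_neg hyu', if_neg hyv', if_neg hyu, if_neg hyv, if_neg hyC]
      refine hfinish A ρ ?_ ?_
      · rintro p hp q hq hadj
        rcases hp with hp | hp
        · rcases hq with hq | hq
          · exact gr_indep hκinj hp hq hadj
          · rcases hq with hq | hq
            · rw [hq] at hadj
              exact hncu p hadj.symm hp
            · rw [hq] at hadj
              exact hAfd₂ p hp hadj.symm
        · rcases hq with hq | hq
          · rcases hp with hp | hp
            · rw [hp] at hadj
              exact hncu q hadj hq
            · rw [hp] at hadj
              exact hAfd₂ q hq hadj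
          · rcases hp with hp | hp <;> rcases hq with hq | hq <;> rw [hp, hq] at hadj
            · exact G.irrefl hadj
            · exact hu'C (hd₂adjC u' hadj.symm)
            · exact hu'C (hd₂adjC u' hadj)
            · exact G.irrefl hadj
      · intro x hxA
        by_cases hxC : x ∈ C
        · rcases hCmem x hxC with hxD | hxu | hxv
          · by_cases hxd₂ : x = d₂
            · exact absurd (Or.inr (Or.inr hxd₂)) hxA
            · refine excl2 (hreg x) ?_ ?_ hd₂u (fun y hy => hy.1.1) ?_ ?_
              · exact hadjDC x hxD d₂ hd₂C (fun h => hxd₂ h.symm)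
              · exact hadjDC x hxD u hu (fun h => (hDmem x hxD).2.1 h.symm)
              · rintro ⟨⟨-, hmem⟩, -⟩
                exact hmem (Or.inr (Or.inr rfl))
              · rintro ⟨⟨-, -⟩, hyρ⟩
                have h5 : ρ u ≤ ρ x := hyρ
                rw [hρu, hρD x hxD] at h5
                omega
          · rw [hxu]
            refine excl2 (hreg u) hadjuu' (hNuD hd₂D) (Ne.symm hd₂u') (fun y hy => hy.1.1) ?_ ?_
            · rintro ⟨⟨-, hmem⟩, -⟩
              exact hmem (Or.inr (Or.inl rfl))
            · rintro ⟨⟨-, hmem⟩, -⟩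
              exact hmem (Or.inr (Or.inr rfl))
          · rw [hxv]
            refine excl1 (w := v') hk ?_
            rintro y ⟨⟨hyN, hyB⟩, hyρ⟩
            have hyN' : y ∈ D ∪ {v'} := by rw [← hNv]; exact hyN
            rcases hyN' with hyD | hyv'
            · exfalso
              by_cases hyd₂ : y = d₂
              · exact hyB (Or.inr (Or.inr hyd₂))
              · have h5 : ρ y ≤ ρ v := hyρ
                rw [hρv, hρD y hyD] at h5
                omega
            · exact hyv'
        · by_cases hxu' : x = u'
          · exact absurd (Or.inr (Or.inl hxu')) hxA
          · by_cases hxv' : x = v'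
            · rw [hxv']
              obtain ⟨a3, ha3, ha3gr⟩ := hcv
              refine excl2 (hreg v') ha3 hadjvv'.symm
                (fun h => (hgrP a3 ha3gr).1 (h ▸ hv)) (fun y hy => hy.1.1) ?_ ?_
              · rintro ⟨⟨-, hmem⟩, -⟩
                exact hmem (Or.inl ha3gr)
              · rintro ⟨⟨-, -⟩, hyρ⟩
                have h5 : ρ v ≤ ρ v' := hyρ
                rw [hρv, hρv'] at h5
                omega
            · exact hgen A ρ (fun a ha => Or.inl ha) hρR (by omega) (by omega)
                x hxC hxu' hxv' hxA
  · -- CASE III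
    set A0 : Set V := {x | gr G P κ x} ∪ {v', d₂} with hA0
    set ρ : V → ℕ := fun y => if y = u' then n + 1 else if y = v' then n + 2
      else if y = u then n + 10 else if y = v then n + 30
      else if y ∈ C then n + 20 else n - m y with hρ
    have hρu' : ρ u' = n + 1 := by rw [hρ]; simp
    have hρv' : ρ v' = n + 2 := by rw [hρ]; simp [hv'u']
    have hρu : ρ u = n + 10 := by rw [hρ]; simp [huu', huv']
    have hρv : ρ v = n + 30 := by rw [hρ]; simp [hvu', hvv', huv.symm]
    have hρD : ∀ y ∈ D, ρ y = n + 20 := by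
      intro y hy
      obtain ⟨hyC, hyu, hyv⟩ := hDmem y hy
      have hyu' : y ≠ u' := fun h => hu'C (h ▸ hyC)
      have hyv' : y ≠ v' := fun h => hv'C (h ▸ hyC)
      rw [hρ]
      simp only
      rw [if_neg hyu', if_neg hyv', if_neg hyu, if_neg hyv, if_pos hyC]
    have hρR : ∀ y, y ∉ C → y ≠ u' → y ≠ v' → ρ y = n - m y := by
      intro y hyC hyu' hyv'
      have hyu : y ≠ u := fun h => hyC (h ▸ hu)
      have hyv : y ≠ v := fun h => hyC (h ▸ hv)
      rw [hρ]
      simp only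
      rw [if_neg hyu', if_neg hyv', if_neg hyu, if_neg hyv, if_neg hyC]
    -- counting for x = u, x = v, x in D, generic : shared between IIIa and IIIb
    have hcntD : ∀ (A : Set V), A0 ⊆ A → ∀ x ∈ D, x ≠ d₂ → x ∈ Aᶜ →
        (G.neighborSet x ∩ Aᶜ ∩ {y | ρ y ≤ ρ x}).ncard ≤ k - 2 := by
      intro A hsub x hxD hxd₂ hxA
      refine excl2 (hreg x) ?_ ?_ hd₂v (fun y hy => hy.1.1) ?_ ?_
      · exact hadjDC x hxD d₂ hd₂C (fun h => hxd₂ h.symm)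
      · exact hadjDC x hxD v hv (fun h => (hDmem x hxD).2.2 h.symm)
      · rintro ⟨⟨-, hmem⟩, -⟩
        exact hmem (hsub (Or.inr (Or.inr rfl)))
      · rintro ⟨⟨-, -⟩, hyρ⟩
        have h5 : ρ v ≤ ρ x := hyρ
        rw [hρv, hρD x hxD] at h5
        omega
    have hcntu : ∀ (A : Set V), A0 ⊆ A → u ∈ Aᶜ →
        (G.neighborSet u ∩ Aᶜ ∩ {y | ρ y ≤ ρ u}).ncard ≤ k - 2 := by
      intro A hsub huA
      refine excl1 (w := u') hk ?_
      rintro y ⟨⟨hyN, hyB⟩, hyρ⟩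
      have hyN' : y ∈ D ∪ {u'} := by rw [← hNu]; exact hyN
      rcases hyN' with hyD | hyu'
      · exfalso
        by_cases hyd₂ : y = d₂
        · exact hyB (hsub (Or.inr (Or.inr hyd₂)))
        · have h5 : ρ y ≤ ρ u := hyρ
          rw [hρu, hρD y hyD] at h5
          omega
      · exact hyu'
    have hcntv : ∀ (A : Set V), A0 ⊆ A → v ∈ Aᶜ →
        (G.neighborSet v ∩ Aᶜ ∩ {y | ρ y ≤ ρ v}).ncard ≤ k - 2 := by
      intro A hsub hvA
      refine excl2 (hreg v) hadjvv' (hNvD hd₂D) (Ne.symm hd₂v') (fun y hy => hy.1.1) ?_ ?_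
      · rintro ⟨⟨-, hmem⟩, -⟩
        exact hmem (hsub (Or.inr (Or.inl rfl)))
      · rintro ⟨⟨-, hmem⟩, -⟩
        exact hmem (hsub (Or.inr (Or.inr rfl)))
    by_cases hcu2 : (∃ a, G.Adj u' a ∧ gr G P κ a) ∨ G.Adj u' v'
    · -- CASE IIIa
      refine hfinish A0 ρ ?_ ?_
      · rintro p hp q hq hadj
        rcases hp with hp | hp
        · rcases hq with hq | hq
          · exact gr_indep hκinj hp hq hadj
          · rcases hq with hq | hq
            · rw [hq] at hadj
              exact hcv ⟨p, hadj.symm, hp⟩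
            · rw [hq] at hadj
              exact hAfd₂ p hp hadj.symm
        · rcases hq with hq | hq
          · rcases hp with hp | hp
            · rw [hp] at hadj
              exact hcv ⟨q, hadj, hq⟩
            · rw [hp] at hadj
              exact hAfd₂ q hq hadj
          · rcases hp with hp | hp <;> rcases hq with hq | hq <;> rw [hp, hq] at hadj
            · exact G.irrefl hadj
            · exact hv'C (hd₂adjC v' hadj.symm)
            · exact hv'C (hd₂adjC v' hadj)
            · exact G.irrefl hadj
      · intro x hxA
        by_cases hxC : x ∈ C
        · rcases hCmem x hxC with hxD | hxu | hxv
          · by_cases hxd₂ : x = d₂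
            · exact absurd (Or.inr (Or.inr hxd₂)) hxA
            · exact hcntD A0 (fun y hy => hy) x hxD hxd₂ hxA
          · rw [hxu] at hxA ⊢
            exact hcntu A0 (fun y hy => hy) hxA
          · rw [hxv] at hxA ⊢
            exact hcntv A0 (fun y hy => hy) hxA
        · by_cases hxu' : x = u'
          · rw [hxu']
            rcases hcu2 with ⟨a2, ha2, ha2gr⟩ | hadj
            · refine excl2 (hreg u') ha2 hadjuu'.symm
                (fun h => (hgrP a2 ha2gr).1 (h ▸ hu)) (fun y hy => hy.1.1) ?_ ?_
              · rintro ⟨⟨-, hmem⟩, -⟩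
                exact hmem (Or.inl ha2gr)
              · rintro ⟨⟨-, -⟩, hyρ⟩
                have h5 : ρ u ≤ ρ u' := hyρ
                rw [hρu, hρu'] at h5
                omega
            · refine excl2 (hreg u') hadj hadjuu'.symm (Ne.symm huv') (fun y hy => hy.1.1) ?_ ?_
              · rintro ⟨⟨-, hmem⟩, -⟩
                exact hmem (Or.inr (Or.inl rfl))
              · rintro ⟨⟨-, -⟩, hyρ⟩
                have h5 : ρ u ≤ ρ u' := hyρ
                rw [hρu, hρu'] at h5
                omega
          · by_cases hxv' : x = v'
            · exact absurd (Or.inr (Or.inl hxv')) hxA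
            · exact hgen A0 ρ (fun a ha => Or.inl ha) hρR (by omega) (by omega)
                x hxC hxu' hxv' hxA
    · -- CASE IIIb
      push_neg at hcu2
      obtain ⟨hncu, hnuv'⟩ := hcu2
      set A : Set V := A0 ∪ {u'} with hA
      have hsub : A0 ⊆ A := Set.subset_union_left
      refine hfinish A ρ ?_ ?_
      · have husym : ∀ r, r ∈ A0 → ¬ G.Adj u' r := by
          intro r hr hadj'
          rcases hr with hr | hr
          · exact hncu r hadj' hr
          · rcases hr with hr | hr <;> rw [show r = _ from hr] at hadj'
            · exact hnuv' hadj'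
            · exact hu'C (hd₂adjC u' hadj'.symm)
        have hA0ind : ∀ p' ∈ A0, ∀ q' ∈ A0, ¬ G.Adj p' q' := by
          rintro p' hp' q' hq' hadj'
          rcases hp' with hp' | hp'
          · rcases hq' with hq' | hq'
            · exact gr_indep hκinj hp' hq' hadj'
            · rcases hq' with hq' | hq' <;> rw [show q' = _ from hq'] at hadj'
              · exact hcv ⟨p', hadj'.symm, hp'⟩
              · exact hAfd₂ p' hp' hadj'.symm
          · rcases hq' with hq' | hq'
            · rcases hp' with hp' | hp' <;> rw [show p' = _ from hp'] at hadj'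
              · exact hcv ⟨q', hadj', hq'⟩
              · exact hAfd₂ q' hq' hadj'
            · rcases hp' with hp' | hp' <;> rcases hq' with hq' | hq' <;>
                rw [show p' = _ from hp', show q' = _ from hq'] at hadj'
              · exact G.irrefl hadj'
              · exact hv'C (hd₂adjC v' hadj'.symm)
              · exact hv'C (hd₂adjC v' hadj')
              · exact G.irrefl hadj'
        rintro p hp q hq hadj
        rcases hp with hp | hp
        · rcases hq with hq | hq
          · exact hA0ind p hp q hq hadj
          · rw [show q = _ from hq] at hadj
            exact husym p hp hadj.symm
        · rw [show p = _ from hp] at hadj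
          rcases hq with hq | hq
          · exact husym q hq hadj
          · rw [show q = _ from hq] at hadj
            exact G.irrefl hadj
      · intro x hxA
        by_cases hxC : x ∈ C
        · rcases hCmem x hxC with hxD | hxu | hxv
          · by_cases hxd₂ : x = d₂
            · exact absurd (hsub (Or.inr (Or.inr hxd₂))) hxA
            · exact hcntD A hsub x hxD hxd₂ hxA
          · rw [hxu] at hxA ⊢
            exact hcntu A hsub hxA
          · rw [hxv] at hxA ⊢
            exact hcntv A hsub hxA
        · by_cases hxu' : x = u'
          · exact absurd (Or.inr hxu') hxA
          · by_cases hxv' : x = v'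
            · exact absurd (hsub (Or.inr (Or.inl hxv'))) hxA
            · exact hgen A ρ (fun a ha => hsub (Or.inl ha)) hρR (by omega) (by omega)
                x hxC hxu' hxv' hxA
end

section
/- Let k ≥ 3 and let G be a connected k-regular graph containing a clique C on k vertices whose neighbourhood N(C) = ⋃_{u∈C} N(u) \ C has exactly 2 vertices. Then G has a k-degenerate decomposition. -/
open SimpleGraph Set

section Helpers

variable {V : Type*} [Fintype V]

lemma lv (G : SimpleGraph V) (d : ℕ) :
    ∀ n (U : Set V), U.ncard ≤ n →
    (∀ W, W ⊆ U → W.Nonempty → ∃ w ∈ W, (W ∩ G.neighborSet w).ncard ≤ d) →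
    ∃ X, X ⊆ U ∧ Indep G X ∧
      ∀ s, s ⊆ U → (∀ v ∈ s, d ≤ (s ∩ G.neighborSet v).ncard) → s.Nonempty →
        (s ∩ X).Nonempty := by
  intro n
  induction n with
  | zero =>
    intro U hU _
    have hUe : U = ∅ := by
      rw [← Set.ncard_eq_zero (Set.toFinite U)]; omega
    refine ⟨∅, by simp, by intro u hu; simp at hu, ?_⟩
    intro s hs _ hsne
    exfalso
    obtain ⟨v, hv⟩ := hsne
    exact absurd (hs hv) (by simp [hUe])
  | succ n ih =>
    intro U hU hslack
    by_cases hUne : U.Nonempty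
    · obtain ⟨z, hzU, hz⟩ := hslack U Set.Subset.rfl hUne
      set U' : Set V := U \ {z} with hU'def
      have hU'card : U'.ncard ≤ n := by
        have h1 := Set.ncard_diff_singleton_of_mem hzU
        have hpos : 0 < U.ncard := (Set.ncard_pos (Set.toFinite U)).2 ⟨z, hzU⟩
        rw [hU'def, h1]
        omega
      have hslack' : ∀ W, W ⊆ U' → W.Nonempty →
          ∃ w ∈ W, (W ∩ G.neighborSet w).ncard ≤ d :=
        fun W hW hWne => hslack W (hW.trans Set.diff_subset) hWne
      obtain ⟨X', hX'U, hX'ind, hX'hit⟩ := ih U' hU'card hslack'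
      by_cases hcase : (X' ∩ G.neighborSet z).Nonempty
      · refine ⟨X', hX'U.trans Set.diff_subset, hX'ind, ?_⟩
        intro s hs hheavy hsne
        by_cases hzs : z ∈ s
        · obtain ⟨u, huX, huN⟩ := hcase
          have hsub : s ∩ G.neighborSet z ⊆ U ∩ G.neighborSet z :=
            Set.inter_subset_inter_left _ hs
          have heq : s ∩ G.neighborSet z = U ∩ G.neighborSet z := by
            apply Set.eq_of_subset_of_ncard_le hsub _ (Set.toFinite _)
            exact le_trans hz (hheavy z hzs)
          have : u ∈ s ∩ G.neighborSet z := by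
            rw [heq]
            exact ⟨(hX'U huX).1, huN⟩
          exact ⟨u, this.1, huX⟩
        · refine hX'hit s ?_ hheavy hsne
          intro v hv
          exact ⟨hs hv, fun h => hzs (h ▸ hv)⟩
      · refine ⟨insert z X', ?_, ?_, ?_⟩
        · intro v hv
          rcases hv with rfl | hv
          · exact hzU
          · exact (hX'U hv).1
        · intro u hu v hv hadj
          rcases hu with rfl | hu
          · rcases hv with rfl | hv
            · exact G.irrefl hadj
            · exact hcase ⟨v, hv, hadj⟩
          · rcases hv with rfl | hv
            · exact hcase ⟨u, hu, hadj.symm⟩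
            · exact hX'ind u hu v hv hadj
        · intro s hs hheavy hsne
          by_cases hzs : z ∈ s
          · exact ⟨z, hzs, Set.mem_insert _ _⟩
          · obtain ⟨u, hus, huX⟩ := hX'hit s
              (fun v hv => ⟨hs hv, fun h => hzs (h ▸ hv)⟩) hheavy hsne
            exact ⟨u, hus, Set.mem_insert_of_mem _ huX⟩
    · refine ⟨∅, by simp, by intro u hu; simp at hu, ?_⟩
      intro s hs _ hsne
      exact absurd (hsne.mono hs) hUne

lemma exists_max_indep (G : SimpleGraph V) (P X₀ : Set V) (hX₀P : X₀ ⊆ P)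
    (hX₀ : Indep G X₀) :
    ∃ X, X₀ ⊆ X ∧ X ⊆ P ∧ Indep G X ∧
      ∀ v ∈ P, v ∉ X → ∃ u ∈ X, G.Adj v u := by
  classical
  set F : Set (Set V) := {Y | X₀ ⊆ Y ∧ Y ⊆ P ∧ Indep G Y} with hF
  have hFfin : F.Finite := by
    apply Set.Finite.subset (Set.Finite.finite_subsets (Set.toFinite P))
    intro Y hY; exact hY.2.1
  have hFne : F.Nonempty := ⟨X₀, Set.Subset.rfl, hX₀P, hX₀⟩
  obtain ⟨X, hXF, hmax⟩ := Set.Finite.exists_maximalFor Set.ncard F hFfin hFne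
  refine ⟨X, hXF.1, hXF.2.1, hXF.2.2, ?_⟩
  intro v hvP hvX
  by_contra hno
  push_neg at hno
  have hins : insert v X ∈ F := by
    refine ⟨hXF.1.trans (Set.subset_insert _ _), ?_, ?_⟩
    · intro u hu; rcases hu with rfl | hu
      · exact hvP
      · exact hXF.2.1 hu
    · intro a ha b hb hadj
      rcases ha with rfl | ha
      · rcases hb with rfl | hb
        · exact G.irrefl hadj
        · exact hno b hb hadj
      · rcases hb with rfl | hb
        · exact hno a ha hadj.symm
        · exact hXF.2.2 a ha b hb hadj
  have hle : X.ncard ≤ (insert v X).ncard :=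
    Set.ncard_le_ncard (Set.subset_insert _ _) (Set.toFinite _)
  have := hmax hins hle
  have hcard : (insert v X).ncard = X.ncard + 1 :=
    Set.ncard_insert_of_notMem hvX (Set.toFinite _)
  omega

lemma closed_walk (G : SimpleGraph V) {W : Set V}
    (hcl : ∀ w ∈ W, G.neighborSet w ⊆ W) :
    ∀ {a b : V}, G.Walk a b → a ∈ W → b ∈ W := by
  intro a b p
  induction p with
  | nil => exact fun h => h
  | cons hadj q ih =>
    exact fun ha => ih (hcl _ ha ((G.mem_neighborSet _ _).2 hadj))

lemma closed_all (G : SimpleGraph V) (hconn : G.Connected) {W : Set V}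
    (hcl : ∀ w ∈ W, G.neighborSet w ⊆ W) {w₀ : V} (hw₀ : w₀ ∈ W) (v : V) :
    v ∈ W := by
  obtain ⟨p⟩ := hconn.preconnected w₀ v
  exact closed_walk G hcl p hw₀

end Helpers

theorem aux {V : Type*} [Fintype V] (k : ℕ) (hk : 3 ≤ k) (G : SimpleGraph V)
    (hconn : G.Connected)
    (hreg : ∀ v : V, (G.neighborSet v).ncard = k)
    (C : Set V) (hcard : C.ncard = k)
    (hclique : ∀ a ∈ C, ∀ b ∈ C, a ≠ b → G.Adj a b)
    (x y : V) (hxy : x ≠ y)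
    (hS : {w : V | w ∉ C ∧ ∃ c ∈ C, G.Adj c w} = {x, y})
    (hq2 : 2 ≤ ({c | c ∈ C ∧ G.Adj c y}).ncard) :
    KDegenDecomp G k := by
  classical
  -- basic membership facts for x and y
  have hxmem : x ∉ C ∧ ∃ c ∈ C, G.Adj c x := by
    have : x ∈ ({x, y} : Set V) := by simp
    rw [← hS] at this; exact this
  have hymem : y ∉ C ∧ ∃ c ∈ C, G.Adj c y := by
    have : y ∈ ({x, y} : Set V) := by simp
    rw [← hS] at this; exact this
  have hxC : x ∉ C := hxmem.1
  have hyC : y ∉ C := hymem.1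
  -- neighborhood of a clique vertex inside C
  have hNcC : ∀ c ∈ C, G.neighborSet c ∩ C = C \ {c} := by
    intro c hc
    ext v
    constructor
    · rintro ⟨hvN, hvC⟩
      exact ⟨hvC, fun h => G.irrefl (h ▸ ((G.mem_neighborSet _ _).1 hvN))⟩
    · rintro ⟨hvC, hvc⟩
      refine ⟨(G.mem_neighborSet _ _).2 ?_, hvC⟩
      exact (hclique v hvC c hc (fun h => hvc (by simp [h]))).symm
  have houts : ∀ c ∈ C, (G.neighborSet c \ C).ncard = 1 := by
    intro c hc
    have hunion : (G.neighborSet c ∩ C) ∪ (G.neighborSet c \ C) = G.neighborSet c :=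
      Set.inter_union_diff _ _
    have hdisj : Disjoint (G.neighborSet c ∩ C) (G.neighborSet c \ C) :=
      Set.disjoint_left.2 (fun a ha hb => hb.2 ha.2)
    have hadd : (G.neighborSet c ∩ C).ncard + (G.neighborSet c \ C).ncard
        = (G.neighborSet c).ncard := by
      have h := Set.ncard_union_eq hdisj (Set.toFinite _) (Set.toFinite _)
      rw [hunion] at h
      omega
    have h1 : (G.neighborSet c ∩ C).ncard = k - 1 := by
      rw [hNcC c hc, Set.ncard_diff_singleton_of_mem hc, hcard]
    rw [h1, hreg c] at hadd
    omega
  have houtsxy : ∀ c ∈ C, ∀ w ∈ G.neighborSet c \ C, w = x ∨ w = y := by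
    intro c hc w hw
    have : w ∈ ({x, y} : Set V) := by
      rw [← hS]
      exact ⟨hw.2, c, hc, (G.mem_neighborSet _ _).1 hw.1⟩
    simpa using this
  -- the two sides of the clique
  set Cx : Set V := {c | c ∈ C ∧ G.Adj c x} with hCxdef
  set Cy : Set V := {c | c ∈ C ∧ G.Adj c y} with hCydef
  have hCxC : Cx ⊆ C := fun c hc => hc.1
  have hCyC : Cy ⊆ C := fun c hc => hc.1
  have hnotboth : ∀ c ∈ C, ¬ (G.Adj c x ∧ G.Adj c y) := by
    intro c hc ⟨hax, hay⟩
    have hxm : x ∈ G.neighborSet c \ C := ⟨(G.mem_neighborSet _ _).2 hax, hxC⟩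
    have hym : y ∈ G.neighborSet c \ C := ⟨(G.mem_neighborSet _ _).2 hay, hyC⟩
    have hsub : ({x, y} : Set V) ⊆ G.neighborSet c \ C := by
      intro w hw; rcases hw with rfl | hw
      · exact hxm
      · simp at hw; exact hw ▸ hym
    have := Set.ncard_le_ncard hsub (Set.toFinite _)
    rw [Set.ncard_pair hxy, houts c hc] at this
    omega
  have hcover : C = Cx ∪ Cy := by
    ext c
    constructor
    · intro hc
      have hne : (G.neighborSet c \ C).Nonempty := by
        rw [← Set.ncard_pos (Set.toFinite _), houts c hc]; omega
      obtain ⟨w, hw⟩ := hne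
      rcases houtsxy c hc w hw with rfl | rfl
      · exact Or.inl ⟨hc, (G.mem_neighborSet _ _).1 hw.1⟩
      · exact Or.inr ⟨hc, (G.mem_neighborSet _ _).1 hw.1⟩
    · intro hc
      rcases hc with hc | hc
      · exact hc.1
      · exact hc.1
  have hdisjxy : Disjoint Cx Cy :=
    Set.disjoint_left.2 (fun c hcx hcy => hnotboth c hcx.1 ⟨hcx.2, hcy.2⟩)
  have hpq : Cx.ncard + Cy.ncard = k := by
    rw [← Set.ncard_union_eq hdisjxy (Set.toFinite _) (Set.toFinite _), ← hcover, hcard]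
  have hp1 : Cx.Nonempty := by
    obtain ⟨c, hc, hadj⟩ := hxmem.2
    exact ⟨c, hc, hadj⟩
  -- neighborhood of y
  have hNyC : G.neighborSet y ∩ C = Cy := by
    ext c
    constructor
    · rintro ⟨hcN, hcC⟩
      exact ⟨hcC, ((G.mem_neighborSet _ _).1 hcN).symm⟩
    · rintro ⟨hcC, hadj⟩
      exact ⟨(G.mem_neighborSet _ _).2 hadj.symm, hcC⟩
  have hNyout : (G.neighborSet y \ C).ncard = k - Cy.ncard := by
    have hunion : (G.neighborSet y ∩ C) ∪ (G.neighborSet y \ C) = G.neighborSet y :=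
      Set.inter_union_diff _ _
    have hdisj : Disjoint (G.neighborSet y ∩ C) (G.neighborSet y \ C) :=
      Set.disjoint_left.2 (fun a ha hb => hb.2 ha.2)
    have hadd : (G.neighborSet y ∩ C).ncard + (G.neighborSet y \ C).ncard
        = (G.neighborSet y).ncard := by
      have h := Set.ncard_union_eq hdisj (Set.toFinite _) (Set.toFinite _)
      rw [hunion] at h
      omega
    rw [hNyC, hreg y] at hadd
    omega
  have hqk : Cy.ncard ≤ k := by omega
  -- full neighborhoods of clique vertices on each side
  have hNa : ∀ a ∈ Cy, G.neighborSet a = (C \ {a}) ∪ {y} := by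
    intro a ha
    have h1 : G.neighborSet a \ C = {y} := by
      obtain ⟨w, hw⟩ := Set.ncard_eq_one.1 (houts a (hCyC ha))
      have : y ∈ G.neighborSet a \ C := ⟨(G.mem_neighborSet _ _).2 ha.2, hyC⟩
      rw [hw] at this
      simp at this
      rw [hw, this]
    calc G.neighborSet a = (G.neighborSet a ∩ C) ∪ (G.neighborSet a \ C) :=
          (Set.inter_union_diff _ _).symm
      _ = (C \ {a}) ∪ {y} := by rw [hNcC a (hCyC ha), h1]
  have hNax : ∀ a ∈ Cx, G.neighborSet a = (C \ {a}) ∪ {x} := by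
    intro a ha
    have h1 : G.neighborSet a \ C = {x} := by
      obtain ⟨w, hw⟩ := Set.ncard_eq_one.1 (houts a (hCxC ha))
      have : x ∈ G.neighborSet a \ C := ⟨(G.mem_neighborSet _ _).2 ha.2, hxC⟩
      rw [hw] at this
      simp at this
      rw [hw, this]
    calc G.neighborSet a = (G.neighborSet a ∩ C) ∪ (G.neighborSet a \ C) :=
          (Set.inter_union_diff _ _).symm
      _ = (C \ {a}) ∪ {x} := by rw [hNcC a (hCxC ha), h1]
  -- apply the LV lemma on the complement of C
  have hslack : ∀ W, W ⊆ Cᶜ → W.Nonempty →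
      ∃ w ∈ W, (W ∩ G.neighborSet w).ncard ≤ k - 1 := by
    intro W hW hWne
    by_contra hno
    push_neg at hno
    have hcl : ∀ w ∈ W, G.neighborSet w ⊆ W := by
      intro w hw
      have h1 : (G.neighborSet w).ncard ≤ (W ∩ G.neighborSet w).ncard := by
        have := hno w hw; rw [hreg w]; omega
      have heq : W ∩ G.neighborSet w = G.neighborSet w :=
        Set.eq_of_subset_of_ncard_le Set.inter_subset_right h1 (Set.toFinite _)
      intro u hu
      rw [← heq] at hu
      exact hu.1
    obtain ⟨w₀, hw₀⟩ := hWne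
    have hCne : C.Nonempty := by
      rw [← Set.ncard_pos (Set.toFinite C), hcard]; omega
    obtain ⟨c₀, hc₀⟩ := hCne
    exact (hW (closed_all G hconn hcl hw₀ c₀)) hc₀
  obtain ⟨X₀, hX₀U, hX₀ind, hX₀hit⟩ :=
    lv G (k - 1) ((Cᶜ : Set V).ncard) Cᶜ le_rfl hslack
  obtain ⟨Xp, hX₀Xp, hXpU, hXpind, hXpmax⟩ := exists_max_indep G Cᶜ X₀ hX₀U hX₀ind
  -- the forcing step
  have step : ∀ a ∈ C, ∀ s : Set V, a ∉ s →
      (∀ v ∈ s, k - 1 ≤ (s ∩ G.neighborSet v).ncard) →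
      ∀ c ∈ C, c ∈ s → ((C \ {a}) \ {c} ⊆ s ∧ G.neighborSet c \ C ⊆ s) := by
    intro a ha s has hheavy c hc hcs
    have hca : c ≠ a := fun h => has (h ▸ hcs)
    set T : Set V := ((C \ {a}) \ {c}) ∪ (G.neighborSet c \ C) with hTdef
    have hsub : s ∩ G.neighborSet c ⊆ T := by
      rintro v ⟨hvs, hvN⟩
      by_cases hvC : v ∈ C
      · left
        refine ⟨⟨hvC, ?_⟩, ?_⟩
        · intro h; simp only [Set.mem_singleton_iff] at h
          exact has (h ▸ hvs)
        · intro h; simp only [Set.mem_singleton_iff] at h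
          exact G.irrefl (h ▸ (G.mem_neighborSet _ _).1 hvN)
      · right; exact ⟨hvN, hvC⟩
    have hT1 : ((C \ {a}) \ {c}).ncard = k - 2 := by
      have h1 : (C \ {a}).ncard = k - 1 := by
        rw [Set.ncard_diff_singleton_of_mem ha, hcard]
      have h2 : c ∈ C \ {a} := ⟨hc, by simp [hca]⟩
      rw [Set.ncard_diff_singleton_of_mem h2, h1]
      omega
    have hTcard : T.ncard ≤ k - 1 := by
      have := Set.ncard_union_le ((C \ {a}) \ {c}) (G.neighborSet c \ C)
      rw [hT1, houts c hc] at this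
      have : T.ncard ≤ (k - 2) + 1 := this
      omega
    have heq : s ∩ G.neighborSet c = T :=
      Set.eq_of_subset_of_ncard_le hsub
        (le_trans hTcard (hheavy c hcs)) (Set.toFinite _)
    constructor
    · intro v hv
      have : v ∈ s ∩ G.neighborSet c := by rw [heq]; exact Or.inl hv
      exact this.1
    · intro v hv
      have : v ∈ s ∩ G.neighborSet c := by rw [heq]; exact Or.inr hv
      exact this.1
  have F1 : ∀ a ∈ C, ∀ s : Set V, a ∉ s →
      (∀ v ∈ s, k - 1 ≤ (s ∩ G.neighborSet v).ncard) →
      (s ∩ C).Nonempty →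
      (C \ {a} ⊆ s ∧ ∀ c ∈ C, c ≠ a → G.neighborSet c \ C ⊆ s) := by
    intro a ha s has hheavy hsC
    obtain ⟨c₀, hc₀s, hc₀C⟩ := hsC
    obtain ⟨hstep1, _⟩ := step a ha s has hheavy c₀ hc₀C hc₀s
    have hCs : C \ {a} ⊆ s := by
      intro c hc
      by_cases hcc : c = c₀
      · exact hcc ▸ hc₀s
      · exact hstep1 ⟨hc, by simp [hcc]⟩
    refine ⟨hCs, ?_⟩
    intro c hc hca
    exact (step a ha s has hheavy c hc (hCs ⟨hc, by simp [hca]⟩)).2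
  -- generic builder
  have hCyne : Cy.Nonempty := by
    rw [← Set.ncard_pos (Set.toFinite _)]; omega
  have indep_insert : ∀ a ∈ C, ∀ w : V, (G.neighborSet a = (C \ {a}) ∪ {w}) →
      ∀ Y : Set V, Y ⊆ Cᶜ → Indep G Y → w ∉ Y → Indep G (insert a Y) := by
    intro a ha w hNeq Y hYU hYind hwY u hu v hv hadj
    rcases Set.mem_insert_iff.1 hu with hua | hu'
    · rcases Set.mem_insert_iff.1 hv with hva | hv'
      · rw [hua, hva] at hadj; exact G.irrefl hadj
      · have hvN : v ∈ G.neighborSet a := (G.mem_neighborSet _ _).2 (hua ▸ hadj)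
        rw [hNeq] at hvN
        rcases hvN with hvC | hvw
        · exact (hYU hv') hvC.1
        · exact hwY ((Set.mem_singleton_iff.1 hvw) ▸ hv')
    · rcases Set.mem_insert_iff.1 hv with hva | hv'
      · have huN : u ∈ G.neighborSet a := (G.mem_neighborSet _ _).2 (hva ▸ hadj.symm)
        rw [hNeq] at huN
        rcases huN with huC | huw
        · exact (hYU hu') huC.1
        · exact hwY ((Set.mem_singleton_iff.1 huw) ▸ hu')
      · exact hYind u hu' v hv' hadj
  have build : ∀ A : Set V, Indep G A →
      (∀ s : Set V, (∀ v ∈ s, v ∉ A) →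
        (∀ v ∈ s, k - 1 ≤ (s ∩ G.neighborSet v).ncard) → s.Nonempty → False) →
      KDegenDecomp G k := by
    intro A hAind hA
    refine ⟨A, Aᶜ, Set.union_compl_self A, disjoint_compl_right, hAind, ?_⟩
    intro s hs hsfin hsne
    by_contra hcon
    push_neg at hcon
    refine hA s (fun v hv => hs hv) ?_ hsne
    intro v hv
    have := hcon v hv
    omega
  by_cases hyX : y ∈ Xp
  · by_cases hxX : x ∈ Xp
    · -- CASE C : both x and y in Xp
      obtain ⟨a, haCy⟩ := hCyne
      refine build (insert a (Xp \ {y})) ?_ ?_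
      · exact indep_insert a (hCyC haCy) y (hNa a haCy) (Xp \ {y})
          (fun v hv => hXpU hv.1) (fun u hu v hv => hXpind u hu.1 v hv.1)
          (fun h => h.2 rfl)
      · intro s hsA hheavy hsne
        have has : a ∉ s := fun h => hsA a h (Set.mem_insert _ _)
        by_cases hsC : (s ∩ C).Nonempty
        · obtain ⟨hCs, hFout⟩ := F1 a (hCyC haCy) s has hheavy hsC
          obtain ⟨c', hc'⟩ := hp1
          have hc'a : c' ≠ a := fun h => (Set.disjoint_left.1 hdisjxy hc') (h ▸ haCy)
          have hxs : x ∈ s := by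
            apply hFout c' (hCxC hc') hc'a
            exact ⟨(G.mem_neighborSet _ _).2 hc'.2, hxC⟩
          exact hsA x hxs (Set.mem_insert_of_mem _
            ⟨hxX, fun h => hxy (Set.mem_singleton_iff.1 h)⟩)
        · have hsU : s ⊆ Cᶜ := fun v hv hvC => hsC ⟨v, hv, hvC⟩
          by_cases hys : y ∈ s
          · have h1 : s ∩ G.neighborSet y ⊆ G.neighborSet y \ C := by
              rintro v ⟨hvs, hvN⟩
              exact ⟨hvN, fun hvC => hsC ⟨v, hvs, hvC⟩⟩
            have h2 := Set.ncard_le_ncard h1 (Set.toFinite _)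
            rw [hNyout] at h2
            have h3 := hheavy y hys
            omega
          · obtain ⟨u, hus, huX₀⟩ := hX₀hit s hsU hheavy hsne
            have huy : u ≠ y := fun h => hys (h ▸ hus)
            exact hsA u hus (Set.mem_insert_of_mem _
              ⟨hX₀Xp huX₀, fun h => huy (Set.mem_singleton_iff.1 h)⟩)
    · -- CASE B : y ∈ Xp, x ∉ Xp
      obtain ⟨a, haCx⟩ := hp1
      refine build (insert a Xp) ?_ ?_
      · exact indep_insert a (hCxC haCx) x (hNax a haCx) Xp hXpU hXpind hxX
      · intro s hsA hheavy hsne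
        have has : a ∉ s := fun h => hsA a h (Set.mem_insert _ _)
        by_cases hsC : (s ∩ C).Nonempty
        · obtain ⟨hCs, hFout⟩ := F1 a (hCxC haCx) s has hheavy hsC
          obtain ⟨c', hc'⟩ := hCyne
          have hc'a : c' ≠ a := fun h => (Set.disjoint_left.1 hdisjxy haCx) (h ▸ hc')
          have hys : y ∈ s := by
            apply hFout c' (hCyC hc') hc'a
            exact ⟨(G.mem_neighborSet _ _).2 hc'.2, hyC⟩
          exact hsA y hys (Set.mem_insert_of_mem _ hyX)
        · have hsU : s ⊆ Cᶜ := fun v hv hvC => hsC ⟨v, hv, hvC⟩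
          obtain ⟨u, hus, huX₀⟩ := hX₀hit s hsU hheavy hsne
          exact hsA u hus (Set.mem_insert_of_mem _ (hX₀Xp huX₀))
  · -- CASE A : y ∉ Xp
    obtain ⟨a, haCy⟩ := hCyne
    refine build (insert a Xp) ?_ ?_
    · exact indep_insert a (hCyC haCy) y (hNa a haCy) Xp hXpU hXpind hyX
    · intro s hsA hheavy hsne
      have has : a ∉ s := fun h => hsA a h (Set.mem_insert _ _)
      by_cases hsC : (s ∩ C).Nonempty
      · obtain ⟨hCs, hFout⟩ := F1 a (hCyC haCy) s has hheavy hsC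
        have hCy' : (Cy \ {a}).Nonempty := by
          rw [← Set.ncard_pos (Set.toFinite _),
            Set.ncard_diff_singleton_of_mem haCy]
          omega
        obtain ⟨c', hc'Cy, hc'a⟩ := hCy'
        have hc'ne : c' ≠ a := fun h => hc'a (Set.mem_singleton_iff.2 h)
        have hys : y ∈ s := by
          apply hFout c' (hCyC hc'Cy) hc'ne
          exact ⟨(G.mem_neighborSet _ _).2 hc'Cy.2, hyC⟩
        have hsubNy : s ∩ G.neighborSet y ⊆ (Cy \ {a}) ∪ (G.neighborSet y \ C) := by
          rintro v ⟨hvs, hvN⟩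
          by_cases hvC : v ∈ C
          · left
            have hvCy : v ∈ Cy := by
              have : v ∈ G.neighborSet y ∩ C := ⟨hvN, hvC⟩
              rw [hNyC] at this
              exact this
            exact ⟨hvCy, fun h => has ((Set.mem_singleton_iff.1 h) ▸ hvs)⟩
          · right; exact ⟨hvN, hvC⟩
        have hcard1 : ((Cy \ {a}) ∪ (G.neighborSet y \ C)).ncard ≤ k - 1 := by
          have h := Set.ncard_union_le (Cy \ {a}) (G.neighborSet y \ C)
          rw [Set.ncard_diff_singleton_of_mem haCy, hNyout] at h
          omega
        have heqy : s ∩ G.neighborSet y = (Cy \ {a}) ∪ (G.neighborSet y \ C) :=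
          Set.eq_of_subset_of_ncard_le hsubNy
            (le_trans hcard1 (hheavy y hys)) (Set.toFinite _)
        obtain ⟨u, huXp, hadj⟩ := hXpmax y hyC hyX
        have hu_s : u ∈ s := by
          have : u ∈ s ∩ G.neighborSet y := by
            rw [heqy]
            exact Or.inr ⟨(G.mem_neighborSet _ _).2 hadj, fun h => (hXpU huXp) h⟩
          exact this.1
        exact hsA u hu_s (Set.mem_insert_of_mem _ huXp)
      · have hsU : s ⊆ Cᶜ := fun v hv hvC => hsC ⟨v, hv, hvC⟩
        obtain ⟨u, hus, huX₀⟩ := hX₀hit s hsU hheavy hsne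
        exact hsA u hus (Set.mem_insert_of_mem _ (hX₀Xp huX₀))

lemma clique_adj_out {V : Type*} [Fintype V] (k : ℕ) (hk : 3 ≤ k) (G : SimpleGraph V)
    (hreg : ∀ v : V, (G.neighborSet v).ncard = k)
    (C : Set V) (hcard : C.ncard = k)
    (hclique : ∀ a ∈ C, ∀ b ∈ C, a ≠ b → G.Adj a b)
    (x y : V)
    (hS : {w : V | w ∉ C ∧ ∃ c ∈ C, G.Adj c w} = {x, y}) :
    ∀ c ∈ C, G.Adj c x ∨ G.Adj c y := by
  intro c hc
  have hNcC : G.neighborSet c ∩ C = C \ {c} := by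
    ext v
    constructor
    · rintro ⟨hvN, hvC⟩
      exact ⟨hvC, fun h => G.irrefl (h ▸ ((G.mem_neighborSet _ _).1 hvN))⟩
    · rintro ⟨hvC, hvc⟩
      refine ⟨(G.mem_neighborSet _ _).2 ?_, hvC⟩
      exact (hclique v hvC c hc (fun h => hvc (by simp [h]))).symm
  have houts : (G.neighborSet c \ C).ncard = 1 := by
    have hunion : (G.neighborSet c ∩ C) ∪ (G.neighborSet c \ C) = G.neighborSet c :=
      Set.inter_union_diff _ _
    have hdisj : Disjoint (G.neighborSet c ∩ C) (G.neighborSet c \ C) :=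
      Set.disjoint_left.2 (fun a ha hb => hb.2 ha.2)
    have hadd : (G.neighborSet c ∩ C).ncard + (G.neighborSet c \ C).ncard
        = (G.neighborSet c).ncard := by
      have h := Set.ncard_union_eq hdisj (Set.toFinite _) (Set.toFinite _)
      rw [hunion] at h
      omega
    have h1 : (G.neighborSet c ∩ C).ncard = k - 1 := by
      rw [hNcC, Set.ncard_diff_singleton_of_mem hc, hcard]
    rw [h1, hreg c] at hadd
    omega
  have hne : (G.neighborSet c \ C).Nonempty := by
    rw [← Set.ncard_pos (Set.toFinite _), houts]; omega
  obtain ⟨w, hw⟩ := hne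
  have hwS : w ∈ ({x, y} : Set V) := by
    rw [← hS]
    exact ⟨hw.2, c, hc, (G.mem_neighborSet _ _).1 hw.1⟩
  rcases hwS with rfl | hwy
  · exact Or.inl ((G.mem_neighborSet _ _).1 hw.1)
  · rw [Set.mem_singleton_iff] at hwy
    exact Or.inr (hwy ▸ (G.mem_neighborSet _ _).1 hw.1)

/-- If `G` is connected, `k`-regular (`k ≥ 3`) and contains a clique `C` on `k` vertices
whose neighbourhood has exactly two vertices, then `G` has a `k`-degenerate
decomposition. -/
theorem stmt5 {V : Type*} [Fintype V] (k : ℕ) (hk : 3 ≤ k) (G : SimpleGraph V)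
    (hconn : G.Connected)
    (hreg : ∀ v : V, (G.neighborSet v).ncard = k)
    (C : Set V) (hcard : C.ncard = k)
    (hclique : ∀ a ∈ C, ∀ b ∈ C, a ≠ b → G.Adj a b)
    (hnbhd : ({w : V | w ∉ C ∧ ∃ c ∈ C, G.Adj c w}).ncard = 2) :
    KDegenDecomp G k := by
    classical
  obtain ⟨x, y, hxy, hS⟩ := Set.ncard_eq_two.1 hnbhd
  have hcover := clique_adj_out k hk G hreg C hcard hclique x y hS
  by_cases hq2 : 2 ≤ ({c | c ∈ C ∧ G.Adj c y}).ncard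
  · exact aux k hk G hconn hreg C hcard hclique x y hxy hS hq2
  · have hS' : {w : V | w ∉ C ∧ ∃ c ∈ C, G.Adj c w} = {y, x} := by
      rw [hS]; exact Set.pair_comm x y
    have hp2 : 2 ≤ ({c | c ∈ C ∧ G.Adj c x}).ncard := by
      by_contra hp2
      push_neg at hp2 hq2
      have hsub : C ⊆ ({c | c ∈ C ∧ G.Adj c x} ∪ {c | c ∈ C ∧ G.Adj c y}) := by
        intro c hc
        rcases hcover c hc with h | h
        · exact Or.inl ⟨hc, h⟩
        · exact Or.inr ⟨hc, h⟩
      have h1 := Set.ncard_le_ncard hsub (Set.toFinite _)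
      have h2 := Set.ncard_union_le ({c | c ∈ C ∧ G.Adj c x}) ({c | c ∈ C ∧ G.Adj c y})
      rw [hcard] at h1
      omega
    exact aux k hk G hconn hreg C hcard hclique y x hxy.symm hS' hp2
end

section
/- Let k ≥ 3 and let G be a connected k-regular graph with no subgraph isomorphic to K_{k+1}. If u and v are non-adjacent vertices with a common neighbour such that G \ {u,v} is connected, then {u,v} is a strong pair; moreover, the graph G' obtained by identifying u and v into a single vertex z with N(z) = N(u) ∪ N(v) is (k-1)-degenerate. -/
open SimpleGraph Set

private def idG {V : Type*} (G : SimpleGraph V) (u v : V) : SimpleGraph {x : V // x ≠ v} :=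
  SimpleGraph.fromRel (fun a b : {x : V // x ≠ v} =>
    G.Adj (a : V) (b : V) ∨ ((a : V) = u ∧ G.Adj v (b : V)) ∨
      ((b : V) = u ∧ G.Adj (a : V) v))

private lemma idG_adj {V : Type*} (G : SimpleGraph V) {u v : V}
    {a b : {x : V // x ≠ v}} (ha : (a : V) ≠ u) :
    (idG G u v).Adj a b ↔ (G.Adj (a : V) (b : V) ∨ ((b : V) = u ∧ G.Adj (a : V) v)) := by
  unfold idG
  rw [SimpleGraph.fromRel_adj]
  constructor
  · rintro ⟨hne, (h | ⟨h, _⟩ | h) | (h | ⟨h, hv⟩ | ⟨h, _⟩)⟩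
    · exact Or.inl h
    · exact absurd h ha
    · exact Or.inr h
    · exact Or.inl h.symm
    · exact Or.inr ⟨h, hv.symm⟩
    · exact absurd h ha
  · rintro (h | ⟨h, hv⟩)
    · exact ⟨fun he => G.loopless.irrefl _ (by rw [he] at h; exact h), Or.inl (Or.inl h)⟩
    · exact ⟨fun he => ha (by rw [he, h]), Or.inl (Or.inr (Or.inr ⟨h, hv⟩))⟩

open Classical in
private noncomputable def toSub {V : Type*} {u v : V} (huv : u ≠ v) : V → {x : V // x ≠ v} :=
  fun y => if h : y = v then ⟨u, huv⟩ else ⟨y, h⟩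

private lemma idG_nbhd_subset {V : Type*} {G : SimpleGraph V} {u v : V} (huv : u ≠ v)
    {a : {x : V // x ≠ v}} (ha : (a : V) ≠ u) :
    (idG G u v).neighborSet a ⊆ toSub huv '' (G.neighborSet (a : V)) := by
  intro b hb
  rw [SimpleGraph.mem_neighborSet, idG_adj G ha] at hb
  rcases hb with h | ⟨h, hv⟩
  · exact ⟨(b : V), h, by simp [toSub, b.2]⟩
  · refine ⟨v, hv, ?_⟩
    simp only [toSub, dif_pos]
    exact Subtype.ext h.symm

private lemma idG_nbhd_subset' {V : Type*} {G : SimpleGraph V} {u v : V} (huv : u ≠ v)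
    {a : {x : V // x ≠ v}} (ha : (a : V) ≠ u)
    (h1 : G.Adj (a : V) u) (h2 : G.Adj (a : V) v) :
    (idG G u v).neighborSet a ⊆ toSub huv '' (G.neighborSet (a : V) \ {v}) := by
  intro b hb
  rw [SimpleGraph.mem_neighborSet, idG_adj G ha] at hb
  rcases hb with h | ⟨h, _⟩
  · exact ⟨(b : V), ⟨h, b.2⟩, by simp [toSub, b.2]⟩
  · refine ⟨u, ⟨h1, huv⟩, ?_⟩
    simp only [toSub, dif_neg huv]
    exact Subtype.ext h.symm

private lemma idG_deg_le {V : Type*} [Fintype V] {G : SimpleGraph V} {u v : V} (huv : u ≠ v)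
    {a : {x : V // x ≠ v}} (ha : (a : V) ≠ u) :
    ((idG G u v).neighborSet a).ncard ≤ (G.neighborSet (a : V)).ncard :=
  le_trans (Set.ncard_le_ncard (idG_nbhd_subset huv ha) (Set.toFinite _))
    (Set.ncard_image_le (Set.toFinite _))

private lemma idG_deg_le' {V : Type*} [Fintype V] {G : SimpleGraph V} {u v : V} (huv : u ≠ v)
    {a : {x : V // x ≠ v}} (ha : (a : V) ≠ u)
    (h1 : G.Adj (a : V) u) (h2 : G.Adj (a : V) v) :
    ((idG G u v).neighborSet a).ncard ≤ (G.neighborSet (a : V)).ncard - 1 := by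
  refine le_trans (Set.ncard_le_ncard (idG_nbhd_subset' huv ha h1 h2) (Set.toFinite _)) ?_
  refine le_trans (Set.ncard_image_le (Set.toFinite _)) ?_
  exact (Set.ncard_diff_singleton_of_mem h2).le

/-- In a connected `k`-regular graph (`k ≥ 3`) with no `K_{k+1}` subgraph: if `u, v` are
non-adjacent vertices with a common neighbour such that `G \ {u,v}` is connected, then
`{u,v}` is a strong pair, and the graph obtained by identifying `u` and `v` into one
vertex (here modelled on the subtype `{x // x ≠ v}`, with `u` playing the role of the
identified vertex `z`, adjacent to `N(u) ∪ N(v)`) is `(k-1)`-degenerate. -/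
theorem stmt6 {V : Type*} [Fintype V] (k : ℕ) (hk : 3 ≤ k) (G : SimpleGraph V)
    (hconn : G.Connected)
    (hreg : ∀ v : V, (G.neighborSet v).ncard = k)
    (hfree : G.CliqueFree (k + 1))
    (u v w : V) (huv : u ≠ v) (hnadj : ¬ G.Adj u v)
    (hw : G.Adj u w ∧ G.Adj v w)
    (hdel : (G.induce ({u, v}ᶜ : Set V)).Connected) :
    (∀ x : ({u, v}ᶜ : Set V), ∃ y : ({u, v}ᶜ : Set V),
      (G.induce ({u, v}ᶜ : Set V)).Reachable x y ∧ G.Adj u (y : V) ∧ G.Adj v (y : V)) ∧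
    Degenerate
      (SimpleGraph.fromRel (fun a b : {x : V // x ≠ v} =>
        G.Adj (a : V) (b : V) ∨ ((a : V) = u ∧ G.Adj v (b : V)) ∨
          ((b : V) = u ∧ G.Adj (a : V) v)))
      (k - 1) := by
  obtain ⟨hwu, hwv⟩ := hw
  have hwu' : w ≠ u := fun h => G.loopless.irrefl u (h ▸ hwu)
  have hwv' : w ≠ v := fun h => G.loopless.irrefl v (h ▸ hwv)
  have hwC : w ∈ ({u, v}ᶜ : Set V) := by simp [hwu', hwv']
  refine ⟨fun x => ⟨⟨w, hwC⟩, hdel.preconnected x _, hwu, hwv⟩, ?_⟩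
  show Degenerate (idG G u v) (k - 1)
  intro s _ hsfin hsne
  by_contra hcon
  push_neg at hcon
  have hks : ∀ x ∈ s, k ≤ (s ∩ (idG G u v).neighborSet x).ncard := by
    intro x hx
    have := hcon x hx
    omega
  -- no vertex of s (other than the merged vertex) is adjacent to both u and v
  have hnotboth : ∀ x ∈ s, (x : V) ≠ u → ¬ (G.Adj (x : V) u ∧ G.Adj (x : V) v) := by
    rintro x hx hxu ⟨h1, h2⟩
    have hb := idG_deg_le' (G := G) huv hxu h1 h2
    rw [hreg] at hb
    have hle : (s ∩ (idG G u v).neighborSet x).ncard ≤ ((idG G u v).neighborSet x).ncard :=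
      Set.ncard_le_ncard Set.inter_subset_right (Set.toFinite _)
    have := hks x hx
    omega
  -- every vertex of s other than the merged vertex has all its neighbours in s
  have hsubs : ∀ x ∈ s, (x : V) ≠ u → (idG G u v).neighborSet x ⊆ s := by
    intro x hx hxu
    have h1 : s ∩ (idG G u v).neighborSet x ⊆ (idG G u v).neighborSet x :=
      Set.inter_subset_right
    have hb := idG_deg_le (G := G) huv hxu
    rw [hreg] at hb
    have h2 : ((idG G u v).neighborSet x).ncard ≤ (s ∩ (idG G u v).neighborSet x).ncard :=
      le_trans hb (hks x hx)
    have heq := Set.eq_of_subset_of_ncard_le h1 h2 (Set.toFinite _)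
    intro y hy
    rw [← heq] at hy
    exact hy.1
  have hws : (⟨w, hwv'⟩ : {x : V // x ≠ v}) ∉ s :=
    fun h => hnotboth _ h hwu' ⟨hwu.symm, hwv.symm⟩
  -- membership in s propagates along walks in G \ {u, v}
  have key : ∀ a b : ({u, v}ᶜ : Set V), (G.induce ({u, v}ᶜ : Set V)).Walk a b →
      (∃ h : (a : V) ≠ v, (⟨(a : V), h⟩ : {x : V // x ≠ v}) ∈ s) →
      (∃ h : (b : V) ≠ v, (⟨(b : V), h⟩ : {x : V // x ≠ v}) ∈ s) := by
    intro a b p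
    induction p with
    | nil => exact id
    | @cons a c b hadj q ih =>
      rintro ⟨hav, has⟩
      apply ih
      have hGadj : G.Adj (a : V) (c : V) := hadj
      have hau : (a : V) ≠ u := by
        have h := a.2
        simp only [Set.mem_compl_iff, Set.mem_insert_iff, Set.mem_singleton_iff, not_or] at h
        exact h.1
      have hcv : (c : V) ≠ v := by
        have h := c.2
        simp only [Set.mem_compl_iff, Set.mem_insert_iff, Set.mem_singleton_iff, not_or] at h
        exact h.2
      refine ⟨hcv, hsubs _ has hau ?_⟩
      rw [SimpleGraph.mem_neighborSet, idG_adj G hau]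
      exact Or.inl hGadj
  by_cases hall : ∀ x ∈ s, x = (⟨u, huv⟩ : {x : V // x ≠ v})
  · obtain ⟨x₀, hx₀⟩ := hsne
    have hz : (⟨u, huv⟩ : {x : V // x ≠ v}) ∈ s := hall x₀ hx₀ ▸ hx₀
    have hempty : s ∩ (idG G u v).neighborSet (⟨u, huv⟩ : {x : V // x ≠ v}) = ∅ := by
      ext y
      simp only [Set.mem_inter_iff, Set.mem_empty_iff_false, iff_false, not_and]
      intro hy hyn
      rw [hall y hy] at hyn
      exact (idG G u v).irrefl hyn
    have := hks _ hz
    rw [hempty, Set.ncard_empty] at this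
    omega
  · push_neg at hall
    obtain ⟨x₀, hx₀s, hx₀z⟩ := hall
    have hx₀u : (x₀ : V) ≠ u := fun h => hx₀z (Subtype.ext h)
    have hx₀C : (x₀ : V) ∈ ({u, v}ᶜ : Set V) := by simp [hx₀u, x₀.2]
    obtain ⟨p⟩ := hdel.preconnected ⟨(x₀ : V), hx₀C⟩ ⟨w, hwC⟩
    obtain ⟨hwv2, hwin⟩ := key _ _ p ⟨x₀.2, by simpa using hx₀s⟩
    exact hws hwin
end

section
/- In a subcubic graph with a proper assignment of vertices to classes A (independent) and B (inducing a forest), if u and v are false twins (non-adjacent vertices with the same neighbourhood, each of degree at most 3), then placing u and v in A and all their common neighbours in B, keeping the assignment of all other vertices, again yields a valid near-bipartite decomposition. -/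
open SimpleGraph Set

private lemma path_getVert_inj' {V : Type*} {G : SimpleGraph V} {x y : V} (p : G.Walk x y)
    (hp : p.IsPath) : ∀ {i j : ℕ}, i ≤ p.length → j ≤ p.length →
      p.getVert i = p.getVert j → i = j := by
  induction p with
  | nil => intro i j hi hj _; simp at hi hj; omega
  | @cons x w y h q ih =>
    intro i j hi hj hij
    rw [Walk.cons_isPath_iff] at hp
    match i, j with
    | 0, 0 => rfl
    | 0, j+1 =>
      exfalso
      apply hp.2
      rw [Walk.getVert_zero, Walk.getVert_cons_succ] at hij
      rw [Walk.mem_support_iff_exists_getVert]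
      exact ⟨j, hij.symm, by simpa using hj⟩
    | i+1, 0 =>
      exfalso
      apply hp.2
      rw [Walk.getVert_zero, Walk.getVert_cons_succ] at hij
      rw [Walk.mem_support_iff_exists_getVert]
      exact ⟨i, hij, by simpa using hi⟩
    | i+1, j+1 =>
      rw [Walk.getVert_cons_succ, Walk.getVert_cons_succ] at hij
      have := ih hp.1 (by simpa using hi) (by simpa using hj) hij
      omega

private lemma walk_to_induce' {V : Type*} {G : SimpleGraph V} {s : Set V} :
    ∀ {x y : V} (p : G.Walk x y) (hs : ∀ z ∈ p.support, z ∈ s),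
      ∃ q : (G.induce s).Walk ⟨x, hs x p.start_mem_support⟩ ⟨y, hs y p.end_mem_support⟩,
        q.map (SimpleGraph.Embedding.induce s).toHom = p := by
  intro x y p
  induction p with
  | nil => intro hs; exact ⟨.nil, rfl⟩
  | @cons x w y h q ih =>
    intro hs
    have hs' : ∀ z ∈ q.support, z ∈ s := fun z hz => hs z (by simp [hz])
    obtain ⟨q', hq'⟩ := ih hs'
    refine ⟨.cons (by exact h) q', ?_⟩
    exact congrArg (Walk.cons h) hq'

private lemma cycle_two_nbrs' {V : Type*} [DecidableEq V] {G : SimpleGraph V} {y w : V} {c : G.Walk y y}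
    (hc : c.IsCycle) (hw : w ∈ c.support) :
    ∃ a b : V, a ≠ b ∧ G.Adj w a ∧ G.Adj w b ∧ a ∈ c.support ∧ b ∈ c.support := by
  set d := c.rotate w hw with hd_def
  have hd : d.IsCycle := hc.rotate hw
  have hn : 3 ≤ d.length := hd.three_le_length
  have hmem : ∀ z, z ∈ d.support → z ∈ c.support := by
    intro z hz
    by_cases hzw : z = w
    · exact hzw ▸ hw
    · have : z ∈ d.support.tail := by
        have := Walk.support_eq_cons d
        rw [this] at hz
        exact (List.mem_cons.mp hz).resolve_left hzw
      have := (Walk.support_rotate c w hw).mem_iff.mp this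
      exact List.mem_of_mem_tail this
  have hnotnil : ¬ d.Nil := hd.not_nil
  -- the two neighbours
  refine ⟨d.getVert 1, d.getVert (d.length - 1), ?_, ?_, ?_, ?_, ?_⟩
  · -- distinct, via the tail path
    have htail : d.tail.IsPath := by
      rw [Walk.isPath_def, Walk.support_tail_of_not_nil d hnotnil]
      exact hd.2
    intro heq
    have h1 : d.tail.getVert 0 = d.getVert 1 := by
      rw [Walk.getVert_tail d]
    have hlen : d.tail.length + 1 = d.length := Walk.length_tail_add_one hnotnil
    have h2 : d.tail.getVert (d.length - 2) = d.getVert (d.length - 1) := by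
      rw [Walk.getVert_tail d]
      congr 1
      omega
    have := path_getVert_inj' d.tail htail (i := 0) (j := d.length - 2)
      (by omega) (by omega) (by rw [h1, h2, heq])
    omega
  · have := d.adj_getVert_succ (i := 0) (by omega)
    simpa using this
  · have := d.adj_getVert_succ (i := d.length - 1) (by omega)
    have h2 : d.length - 1 + 1 = d.length := by omega
    rw [h2, Walk.getVert_length] at this
    exact this.symm
  · exact hmem _ (Walk.mem_support_iff_exists_getVert.mpr ⟨1, rfl, by omega⟩)
  · exact hmem _ (Walk.mem_support_iff_exists_getVert.mpr ⟨d.length - 1, rfl, by omega⟩)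

/-- In a subcubic graph with a near-bipartite decomposition `(A, B)`, if `u` and `v` are
false twins, then moving `u` and `v` into the independent side and all their common
neighbours into the forest side again yields a near-bipartite decomposition. -/
theorem stmt9 {V : Type*} [Fintype V] (G : SimpleGraph V)
    (hdeg : ∀ v : V, (G.neighborSet v).ncard ≤ 3)
    (A B : Set V)
    (hpart : A ∪ B = Set.univ) (hdisj : Disjoint A B)
    (hA : Indep G A) (hB : (G.induce B).IsAcyclic)
    (u v : V) (huv : u ≠ v)
    (htwin : G.neighborSet u = G.neighborSet v) :
    ((A \ G.neighborSet u) ∪ {u, v}) ∪ ((B ∪ G.neighborSet u) \ {u, v}) = Set.univ ∧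
    Disjoint ((A \ G.neighborSet u) ∪ {u, v}) ((B ∪ G.neighborSet u) \ {u, v}) ∧
    Indep G ((A \ G.neighborSet u) ∪ {u, v}) ∧
    (G.induce ((B ∪ G.neighborSet u) \ {u, v})).IsAcyclic := by
  have hnadj : ¬ G.Adj u v := by
    intro h
    have : v ∈ G.neighborSet u := h
    rw [htwin] at this
    exact G.irrefl this
  have hadjv : ∀ w, w ∈ G.neighborSet u → G.Adj w v := by
    intro w hw
    have : w ∈ G.neighborSet v := htwin ▸ hw
    exact this.symm
  have hadju : ∀ w, w ∈ G.neighborSet u → G.Adj w u := fun w hw => hw.symm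
  -- degree contradiction helper
  have hdegcon : ∀ w ∈ G.neighborSet u, ∀ a b : V, G.Adj w a → G.Adj w b → a ≠ b →
      a ∉ ({u, v} : Set V) → b ∉ ({u, v} : Set V) → False := by
    intro w hw a b ha hb hab hau hbu
    have hsub : ({u, v, a, b} : Set V) ⊆ G.neighborSet w := by
      intro z hz
      simp only [Set.mem_insert_iff, Set.mem_singleton_iff] at hz
      rcases hz with rfl | rfl | rfl | rfl
      · exact hadju w hw
      · exact hadjv w hw
      · exact ha
      · exact hb
    have hcard : ({u, v, a, b} : Set V).ncard = 4 := by
      simp only [Set.mem_insert_iff, Set.mem_singleton_iff] at hau hbu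
      push_neg at hau hbu
      have h1 : u ∉ ({v, a, b} : Set V) := by
        simp only [Set.mem_insert_iff, Set.mem_singleton_iff]
        push_neg
        exact ⟨huv, fun h => hau.1 h.symm, fun h => hbu.1 h.symm⟩
      have h2 : v ∉ ({a, b} : Set V) := by
        simp only [Set.mem_insert_iff, Set.mem_singleton_iff]
        push_neg
        exact ⟨fun h => hau.2 h.symm, fun h => hbu.2 h.symm⟩
      have h3 : a ∉ ({b} : Set V) := by simpa using hab
      rw [Set.ncard_insert_of_notMem h1 (Set.toFinite _),
        Set.ncard_insert_of_notMem h2 (Set.toFinite _),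
        Set.ncard_insert_of_notMem h3 (Set.toFinite _), Set.ncard_singleton]
    have := Set.ncard_le_ncard hsub (Set.toFinite _)
    rw [hcard] at this
    have := hdeg w
    omega
  refine ⟨?_, ?_, ?_, ?_⟩
  · -- union
    ext x
    simp only [Set.mem_union, Set.mem_diff, Set.mem_insert_iff, Set.mem_singleton_iff,
      Set.mem_univ, iff_true]
    by_cases hx : x = u ∨ x = v
    · tauto
    · have : x ∈ A ∪ B := hpart ▸ Set.mem_univ x
      by_cases hxn : x ∈ G.neighborSet u
      · right; exact ⟨Or.inr hxn, by tauto⟩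
      · rcases this with h | h
        · left; left; exact ⟨h, hxn⟩
        · right; exact ⟨Or.inl h, by tauto⟩
  · -- disjoint
    rw [Set.disjoint_left]
    rintro x (⟨hxA, hxN⟩ | hx)
    · rintro ⟨hxBN, -⟩
      rcases hxBN with h | h
      · exact (hdisj.ne_of_mem hxA h) rfl
      · exact hxN h
    · rintro ⟨-, hx'⟩
      exact hx' hx
  · -- independent
    rintro x hx y hy hadj
    rcases hx with ⟨hxA, hxN⟩ | hx <;> rcases hy with ⟨hyA, hyN⟩ | hy
    · exact hA x hxA y hyA hadj
    · rcases hy with rfl | rfl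
      · exact hxN hadj.symm
      · have h' : x ∈ G.neighborSet y := hadj.symm
        rw [← htwin] at h'
        exact hxN h'
    · rcases hx with rfl | rfl
      · exact hyN hadj
      · have h' : y ∈ G.neighborSet x := hadj
        rw [← htwin] at h'
        exact hyN h'
    · rcases hx with rfl | rfl <;> rcases hy with rfl | rfl
      · exact G.irrefl hadj
      · exact hnadj hadj
      · exact hnadj hadj.symm
      · exact G.irrefl hadj
  · -- acyclic
    set B' : Set V := (B ∪ G.neighborSet u) \ {u, v} with hB'
    intro x c hc
    classical
    -- map the cycle to G
    have hinj : Function.Injective (SimpleGraph.Embedding.induce (G := G) B').toHom := by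
      intro a b h
      exact Subtype.ext h
    set q : G.Walk (x : V) (x : V) := c.map (SimpleGraph.Embedding.induce (G := G) B').toHom with hq
    have hqc : q.IsCycle := hc.map hinj
    have hqsupp : ∀ z ∈ q.support, z ∈ B' := by
      intro z hz
      have hz' : z ∈ (c.map (SimpleGraph.Embedding.induce (G := G) B').toHom).support := hz
      rw [Walk.support_map] at hz'
      simp only [List.mem_map] at hz'
      obtain ⟨z', -, rfl⟩ := hz'
      exact z'.2
    -- support avoids N(u)
    have hqB : ∀ z ∈ q.support, z ∈ B := by
      intro z hz
      have hzB' := hqsupp z hz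
      by_cases hzN : z ∈ G.neighborSet u
      · exfalso
        obtain ⟨a, b, hab, ha, hb, haS, hbS⟩ := cycle_two_nbrs' hqc hz
        exact hdegcon z hzN a b ha hb hab
          (fun h => (hqsupp a haS).2 h) (fun h => (hqsupp b hbS).2 h)
      · rcases hzB'.1 with h | h
        · exact h
        · exact absurd h hzN
    obtain ⟨q', hq'⟩ := walk_to_induce' q hqB
    refine hB q' ?_
    have hmc : (q'.map (SimpleGraph.Embedding.induce (G := G) B).toHom).IsCycle := by
      rw [hq']; exact hqc
    exact (Walk.map_isCycle_iff_of_injective (fun a b h => Subtype.ext h)).mp hmc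
end

section
/- Every graph admitting an acyclic 3-colouring is near-bipartite, but there exist near-bipartite graphs with no acyclic 3-colouring. -/
open SimpleGraph Set

/-- A proper 3-colouring is acyclic if every two colour classes together induce a
forest. -/
def IsAcyclic3Colouring {V : Type*} (G : SimpleGraph V) (c : V → Fin 3) : Prop :=
  (∀ u v : V, G.Adj u v → c u ≠ c v) ∧
    ∀ i j : Fin 3, (G.induce {v : V | c v = i ∨ c v = j}).IsAcyclic

/-- Every graph admitting an acyclic 3-colouring is near-bipartite, but there exists a
near-bipartite (finite) graph with no acyclic 3-colouring. -/
theorem stmt11 :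
    (∀ (V : Type) [Fintype V] (G : SimpleGraph V) (c : V → Fin 3),
        IsAcyclic3Colouring G c → NearBipartite G) ∧
    ∃ (V : Type) (_ : Fintype V) (G : SimpleGraph V), NearBipartite G ∧
      ¬ ∃ c : V → Fin 3, IsAcyclic3Colouring G c := by
  constructor
  · intro V _ G c hc
    refine ⟨{v | c v = 0}, {v | c v = 1 ∨ c v = 2}, ?_, ?_, ?_, hc.2 1 2⟩
    · ext v
      have : c v = 0 ∨ c v = 1 ∨ c v = 2 := by omega
      simp only [Set.mem_union, Set.mem_setOf_eq, Set.mem_univ, iff_true]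
      tauto
    · rw [Set.disjoint_left]
      rintro v hv (h1 | h2) <;> simp_all
    · intro u hu v hv hadj
      exact hc.1 u v hadj (by simp_all)
  · refine ⟨Fin 3 ⊕ Fin 3, inferInstance, completeBipartiteGraph (Fin 3) (Fin 3), ?_, ?_⟩
    · refine ⟨Set.range Sum.inl, Set.range Sum.inr, ?_, ?_, ?_, ?_⟩
      · ext v; rcases v with a | b <;> simp
      · rw [Set.disjoint_left]; rintro v ⟨a, rfl⟩ ⟨b, hb⟩; exact Sum.inl_ne_inr hb.symm
      · rintro u ⟨a, rfl⟩ v ⟨b, rfl⟩ hadj; simp at hadj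
      · intro v p hp
        cases p with
        | nil => exact hp.ne_nil rfl
        | cons h q =>
          rename_i w
          obtain ⟨a, ha⟩ := v.2
          obtain ⟨b, hb⟩ := w.2
          have : (completeBipartiteGraph (Fin 3) (Fin 3)).Adj (v : Fin 3 ⊕ Fin 3) w := h
          rw [← ha, ← hb] at this
          simp at this
    · rintro ⟨c, hprop, hforest⟩
      -- left side misses colour c (inr 0), right side misses c (inl 0)
      have hL : ¬ Function.Injective (fun a : Fin 3 => c (Sum.inl a)) := by
        rw [Finite.injective_iff_surjective]
        intro hsurj
        obtain ⟨a, ha⟩ := hsurj (c (Sum.inr 0))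
        exact hprop (Sum.inl a) (Sum.inr 0) (by simp) ha
      have hR : ¬ Function.Injective (fun b : Fin 3 => c (Sum.inr b)) := by
        rw [Finite.injective_iff_surjective]
        intro hsurj
        obtain ⟨b, hb⟩ := hsurj (c (Sum.inl 0))
        exact hprop (Sum.inr b) (Sum.inl 0) (by simp) hb
      obtain ⟨a₁, a₂, hae, hane⟩ := Function.not_injective_iff.mp hL
      obtain ⟨b₁, b₂, hbe, hbne⟩ := Function.not_injective_iff.mp hR
      set i := c (Sum.inl a₁) with hi
      set j := c (Sum.inr b₁) with hj
      set S : Set (Fin 3 ⊕ Fin 3) := {v | c v = i ∨ c v = j} with hS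
      have hac := hforest i j
      -- vertices of the induced subgraph
      have mA1 : (Sum.inl a₁ : Fin 3 ⊕ Fin 3) ∈ S := Or.inl rfl
      have mA2 : (Sum.inl a₂ : Fin 3 ⊕ Fin 3) ∈ S := Or.inl hae.symm
      have mB1 : (Sum.inr b₁ : Fin 3 ⊕ Fin 3) ∈ S := Or.inr rfl
      have mB2 : (Sum.inr b₂ : Fin 3 ⊕ Fin 3) ∈ S := Or.inr hbe.symm
      set G' := (completeBipartiteGraph (Fin 3) (Fin 3)).induce S with hG'
      have adj1 : G'.Adj ⟨Sum.inl a₁, mA1⟩ ⟨Sum.inr b₁, mB1⟩ := by simp [hG']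
      have adj2 : G'.Adj ⟨Sum.inr b₁, mB1⟩ ⟨Sum.inl a₂, mA2⟩ := by simp [hG']
      have adj3 : G'.Adj ⟨Sum.inl a₁, mA1⟩ ⟨Sum.inr b₂, mB2⟩ := by simp [hG']
      have adj4 : G'.Adj ⟨Sum.inr b₂, mB2⟩ ⟨Sum.inl a₂, mA2⟩ := by simp [hG']
      have hne1 : (⟨Sum.inl a₁, mA1⟩ : ↥S) ≠ ⟨Sum.inl a₂, mA2⟩ := by
        simp [Subtype.ext_iff, hane]
      have hne2 : (⟨Sum.inr b₁, mB1⟩ : ↥S) ≠ ⟨Sum.inr b₂, mB2⟩ := by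
        simp [Subtype.ext_iff, hbne]
      have hp1 : (Walk.cons adj1 (Walk.cons adj2 Walk.nil)).IsPath := by
        rw [Walk.isPath_def]
        simp [Walk.support, Subtype.ext_iff, hane]
      have hp2 : (Walk.cons adj3 (Walk.cons adj4 Walk.nil)).IsPath := by
        rw [Walk.isPath_def]
        simp [Walk.support, Subtype.ext_iff, hane]
      have heq := hac.path_unique ⟨_, hp1⟩ ⟨_, hp2⟩
      have heq' : (Walk.cons adj1 (Walk.cons adj2 Walk.nil)) = (Walk.cons adj3 (Walk.cons adj4 Walk.nil)) :=
        congrArg Subtype.val heq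
      have hsupp := congrArg Walk.support heq'
      simp [Walk.support, Subtype.ext_iff] at hsupp
      exact hbne hsupp
end

section
/- Let G be a connected k-regular graph (k ≥ 3) containing no K_{k+1}. If C is a connected induced subgraph with N(C) = {u,v} for non-adjacent vertices u,v, and C is a clique, then C has either k-1 or k vertices; if |C| = k-1 then every vertex of C is adjacent to both u and v, and if |C| = k then every vertex of C is adjacent to exactly one of u and v, and neither u nor v is adjacent to all vertices of C. -/
open SimpleGraph Set

/-- In a connected `k`-regular graph (`k ≥ 3`) with no `K_{k+1}`: if a clique `C` has
neighbourhood exactly `{u, v}` for non-adjacent `u ≠ v`, then `|C| ∈ {k-1, k}`;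
if `|C| = k-1` then every vertex of `C` is adjacent to both `u` and `v`; and if
`|C| = k` then every vertex of `C` is adjacent to exactly one of `u` and `v`, and
neither `u` nor `v` is adjacent to all vertices of `C`. -/
theorem stmt19 {V : Type*} [Fintype V] (k : ℕ) (hk : 3 ≤ k) (G : SimpleGraph V)
    (hconn : G.Connected)
    (hreg : ∀ v : V, (G.neighborSet v).ncard = k)
    (hfree : G.CliqueFree (k + 1))
    (C : Set V) (u v : V) (huv : u ≠ v) (hnadj : ¬ G.Adj u v)
    (hclique : ∀ a ∈ C, ∀ b ∈ C, a ≠ b → G.Adj a b)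
    (hnbhd : {w : V | w ∉ C ∧ ∃ c ∈ C, G.Adj c w} = {u, v}) :
    (C.ncard = k - 1 ∨ C.ncard = k) ∧
    (C.ncard = k - 1 → ∀ c ∈ C, G.Adj u c ∧ G.Adj v c) ∧
    (C.ncard = k →
      (∀ c ∈ C, (G.Adj u c ↔ ¬ G.Adj v c)) ∧
      ¬ (∀ c ∈ C, G.Adj u c) ∧ ¬ (∀ c ∈ C, G.Adj v c)) := by
  classical
  have hCfin : C.Finite := Set.toFinite C
  have hu' : u ∉ C ∧ ∃ c ∈ C, G.Adj c u := by
    have h : u ∈ ({u, v} : Set V) := by simp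
    rw [← hnbhd] at h; exact h
  have hv' : v ∉ C ∧ ∃ c ∈ C, G.Adj c v := by
    have h : v ∈ ({u, v} : Set V) := by simp
    rw [← hnbhd] at h; exact h
  have hn1 : 1 ≤ C.ncard := by
    obtain ⟨c, hc, -⟩ := hu'.2
    exact Set.ncard_pos hCfin |>.mpr ⟨c, hc⟩
  have key : ∀ c ∈ C, C.ncard - 1 + ({u, v} ∩ G.neighborSet c).ncard = k := by
    intro c hc
    have hset : G.neighborSet c = (C \ {c}) ∪ ({u, v} ∩ G.neighborSet c) := by
      ext w
      simp only [Set.mem_union, Set.mem_diff, Set.mem_singleton_iff,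
        Set.mem_inter_iff, SimpleGraph.mem_neighborSet, Set.mem_insert_iff]
      constructor
      · intro hw
        by_cases hwC : w ∈ C
        · exact Or.inl ⟨hwC, fun h => G.loopless.irrefl c (h ▸ hw)⟩
        · have hmem : w ∈ ({u, v} : Set V) := by
            rw [← hnbhd]; exact ⟨hwC, c, hc, hw⟩
          simp only [Set.mem_insert_iff, Set.mem_singleton_iff] at hmem
          exact Or.inr ⟨hmem, hw⟩
      · rintro (⟨hwC, hne⟩ | ⟨-, hw⟩)
        · exact hclique c hc w hwC (fun h => hne h.symm)
        · exact hw
    have hdisj : Disjoint (C \ {c}) ({u, v} ∩ G.neighborSet c) := by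
      rw [Set.disjoint_left]
      rintro x ⟨hxC, -⟩ ⟨hx, -⟩
      simp only [Set.mem_insert_iff, Set.mem_singleton_iff] at hx
      rcases hx with rfl | rfl
      exacts [hu'.1 hxC, hv'.1 hxC]
    have h1 : (C \ {c}).ncard = C.ncard - 1 :=
      Set.ncard_diff_singleton_of_mem hc
    have h2 := hreg c
    rw [hset, Set.ncard_union_eq hdisj (hCfin.diff) (Set.toFinite _), h1] at h2
    exact h2
  have hle2 : ∀ c : V, ({u, v} ∩ G.neighborSet c).ncard ≤ 2 := by
    intro c
    calc ({u, v} ∩ G.neighborSet c).ncard ≤ ({u, v} : Set V).ncard :=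
          Set.ncard_le_ncard Set.inter_subset_left (Set.toFinite _)
      _ = 2 := Set.ncard_pair huv
  -- main disjunction
  have hmain : C.ncard = k - 1 ∨ C.ncard = k := by
    obtain ⟨c, hc, hcu⟩ := hu'.2
    have hk1 := key c hc
    have hge1 : 1 ≤ ({u, v} ∩ G.neighborSet c).ncard := by
      refine Set.ncard_pos (Set.toFinite _) |>.mpr ⟨u, ?_, hcu⟩
      simp
    have := hle2 c
    omega
  refine ⟨hmain, ?_, ?_⟩
  · -- |C| = k-1
    intro hcard c hc
    have hk1 := key c hc
    have := hle2 c
    have he2 : ({u, v} ∩ G.neighborSet c).ncard = 2 := by omega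
    have heq : ({u, v} : Set V) = {u, v} ∩ G.neighborSet c := by
      refine Set.eq_of_subset_of_ncard_le ?_ ?_ (Set.toFinite _) |>.symm
      · exact Set.inter_subset_left
      · rw [he2, Set.ncard_pair huv]
    have hu2 : u ∈ ({u, v} ∩ G.neighborSet c) := by rw [← heq]; simp
    have hv2 : v ∈ ({u, v} ∩ G.neighborSet c) := by rw [← heq]; simp
    exact ⟨hu2.2.symm, hv2.2.symm⟩
  · -- |C| = k
    intro hcard
    have he1 : ∀ c ∈ C, ({u, v} ∩ G.neighborSet c).ncard = 1 := by
      intro c hc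
      have hk1 := key c hc
      have := hle2 c
      omega
    have hiff : ∀ c ∈ C, (G.Adj u c ↔ ¬ G.Adj v c) := by
      intro c hc
      constructor
      · intro hu1 hv1
        have hsub : ({u, v} : Set V) ⊆ {u, v} ∩ G.neighborSet c := by
          intro x hx
          simp only [Set.mem_insert_iff, Set.mem_singleton_iff] at hx
          rcases hx with rfl | rfl
          · exact ⟨by simp, hu1.symm⟩
          · exact ⟨by simp, hv1.symm⟩
        have := Set.ncard_le_ncard hsub (Set.toFinite _)
        rw [Set.ncard_pair huv, he1 c hc] at this
        omega
      · intro hv1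
        have hne : ({u, v} ∩ G.neighborSet c).Nonempty := by
          rw [Set.nonempty_iff_ne_empty]
          intro h
          have := he1 c hc
          rw [h, Set.ncard_empty] at this
          omega
        obtain ⟨x, hx1, hx2⟩ := hne
        simp only [Set.mem_insert_iff, Set.mem_singleton_iff] at hx1
        rcases hx1 with rfl | rfl
        · exact hx2.symm
        · exact absurd hx2.symm hv1
    refine ⟨hiff, ?_, ?_⟩
    · intro hall
      obtain ⟨c, hc, hcv⟩ := hv'.2
      exact (hiff c hc).mp (hall c hc) hcv.symm
    · intro hall
      obtain ⟨c, hc, hcu⟩ := hu'.2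
      exact ((hiff c hc).mp hcu.symm) (hall c hc)
end
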